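/- arXiv:math/9511209 — 8 statements merged into one kernel-verified Lean document; each statement's English description precedes it below -/
import Mathlib

section
/- Let G = ⟨z⟩ be a multiplicative cyclic group of order m = p_1^{a_1}···p_r^{a_r}, where p_1, ..., p_r are distinct primes and each a_i > 0, and for 1 ≤ i ≤ r let P_i be the unique subgroup of G of order p_i. Then ker φ = Σ_{i=1}^r ℤG·σ(P_i), i.e. the kernel of φ is the ideal of ℤG generated by σ(P_1), ..., σ(P_r). -/
noncomputable section

/-- `σ(H) = ∑_{h ∈ H} h` in the integral group ring, for a finite subset `H ⊆ G`. -/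
def grpSum {G : Type*} [CommGroup G] (s : Set G) (hs : s.Finite) : MonoidAlgebra ℤ G :=
  ∑ h ∈ hs.toFinset, MonoidAlgebra.of ℤ G h

namespace KerSpanAux

/-- The `(a-1)`-th digit of `k` in base `p`. -/
def dgt (p a k : ℕ) : ℕ := k / p ^ (a - 1) % p

lemma dgt_lt {p : ℕ} (hp : 0 < p) (a k : ℕ) : dgt p a k < p := Nat.mod_lt _ hp

lemma dgt_add_mul {p : ℕ} (hp : 0 < p) (a k c : ℕ) :
    dgt p a (k + c * p ^ (a - 1)) = (dgt p a k + c) % p := by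
  unfold dgt
  rw [Nat.add_mul_div_right _ _ (pow_pos hp _), Nat.mod_add_mod]

lemma dgt_eq_mod_div {p a k : ℕ} (ha : 0 < a) :
    dgt p a k = k % p ^ a / p ^ (a - 1) := by
  unfold dgt
  rw [← Nat.mod_mul_right_div_self, ← pow_succ, Nat.sub_add_cancel ha]

lemma dgt_mod {p a k m : ℕ} (ha : 0 < a) (h : p ^ a ∣ m) :
    dgt p a (k % m) = dgt p a k := by
  rw [dgt_eq_mod_div ha, dgt_eq_mod_div ha, Nat.mod_mod_of_dvd _ h]

end KerSpanAux

/-- Theorem 2.2 (Rédei, de Bruijn, Schoenberg): with `G = ⟨z⟩` cyclic of order `m`,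
`ζ` a primitive `m`-th root of unity, and `φ : ℤG → ℂ` the ring homomorphism with
`φ(z) = ζ`, the kernel of `φ` is the ideal of `ℤG` generated by the elements
`σ(P)` for `P` ranging over the subgroups of `G` of prime order (these are
exactly the unique subgroups `P_i` of order `p_i`, for the distinct primes
`p_1, …, p_r` dividing `m`). -/
theorem ker_eq_span_of_prime_order_subgroup_sums
    (m : ℕ) (hm : 0 < m)
    (G : Type) [CommGroup G] [Fintype G] (hcard : Fintype.card G = m)
    (z : G) (hz : ∀ g : G, g ∈ Subgroup.zpowers z)
    (ζ : ℂ) (hζ : IsPrimitiveRoot ζ m)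
    (φ : MonoidAlgebra ℤ G →+* ℂ) (hφ : φ (MonoidAlgebra.of ℤ G z) = ζ) :
    RingHom.ker φ =
      Ideal.span {x : MonoidAlgebra ℤ G |
        ∃ P : Subgroup G, (Nat.card P).Prime ∧
          x = grpSum (P : Set G) (Set.toFinite _)} := by
  classical
  set R := MonoidAlgebra ℤ G with hR
  set genSet : Set R := {x : MonoidAlgebra ℤ G |
        ∃ P : Subgroup G, (Nat.card P).Prime ∧
          x = grpSum (P : Set G) (Set.toFinite _)} with hgenSet
  have hord : orderOf z = m := by
    rw [orderOf_eq_card_of_forall_mem_zpowers hz, Nat.card_eq_fintype_card, hcard]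
  -- the character χ : G →* ℂ
  set χ : G →* ℂ := φ.toMonoidHom.comp (MonoidAlgebra.of ℤ G) with hχ
  have hχz : ∀ j : ℕ, χ (z ^ j) = ζ ^ j := by
    intro j
    rw [map_pow, show χ z = ζ from hφ]
  -- χ is nontrivial on nontrivial elements
  have hχne : ∀ g : G, g ≠ 1 → χ g ≠ 1 := by
    intro g hg
    obtain ⟨j, rfl⟩ := mem_powers_iff_mem_zpowers.mpr (hz g)
    rw [hχz]
    intro h1
    exact hg (orderOf_dvd_iff_pow_eq_one.mp (hord ▸ hζ.dvd_of_pow_eq_one j h1))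
  -- easy direction
  have hgen0 : ∀ x ∈ genSet, φ x = 0 := by
    rintro x ⟨P, hP, rfl⟩
    have hsum : φ (grpSum (P : Set G) (Set.toFinite _)) = ∑ g : P, (χ.comp P.subtype) g := by
      rw [grpSum, map_sum]
      rw [← Finset.sum_coe_sort]
      exact Fintype.sum_equiv (Equiv.subtypeEquivRight (fun x => by rw [Set.Finite.mem_toFinset]; exact Iff.rfl)) _ _ (fun x => rfl)
    rw [hsum]
    apply sum_hom_units_eq_zero
    obtain ⟨g, hgP, hg1⟩ : ∃ g ∈ P, g ≠ 1 := by
      by_contra hcon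
      push_neg at hcon
      have : P = ⊥ := (Subgroup.eq_bot_iff_forall P).mpr hcon
      rw [this] at hP
      simpa using hP.one_lt
    intro heq
    exact hχne g hg1 (by simpa using DFunLike.congr_fun heq (⟨g, hgP⟩ : P))
  have hJle : Ideal.span genSet ≤ RingHom.ker φ := by
    rw [Ideal.span_le]
    intro x hx
    exact RingHom.mem_ker.mpr (hgen0 x hx)
  -- ===================== hard direction =====================
  set n := m.totient with hn
  set A : Subalgebra ℤ ℂ := Algebra.adjoin ℤ {ζ} with hA
  have hAz : ∀ x : R, φ x ∈ A := by
    intro x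
    induction x using MonoidAlgebra.induction_on with
    | of g =>
      obtain ⟨j, rfl⟩ := mem_powers_iff_mem_zpowers.mpr (hz g)
      rw [map_pow, map_pow, hφ]
      exact pow_mem (Algebra.self_mem_adjoin_singleton ℤ ζ) j
    | add f g hf hg => rw [map_add]; exact add_mem hf hg
    | smul r f hf =>
      rw [map_zsmul]
      exact zsmul_mem hf r
  have hζint : IsIntegral ℤ ζ := hζ.isIntegral hm
  have hAle : ∀ y ∈ A, ∃ x : R, φ x = y := by
    intro y hy
    have hle : A ≤ φ.toIntAlgHom.range := by
      rw [hA]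
      apply Algebra.adjoin_le
      intro x hx
      rw [Set.mem_singleton_iff] at hx
      exact ⟨MonoidAlgebra.of ℤ G z, by rw [hx]; exact hφ⟩
    obtain ⟨x, hx⟩ := hle hy
    exact ⟨x, hx⟩
  -- power basis for ℤ[ζ]
  let pb : PowerBasis ℤ A := Algebra.adjoin.powerBasis' hζint
  have hdim : pb.dim = n := by
    show (minpoly ℤ ζ).natDegree = n
    rw [← Polynomial.cyclotomic_eq_minpoly hζ hm, Polynomial.natDegree_cyclotomic]
  let b : Module.Basis (Fin n) ℤ A := pb.basis.reindex (finCongr hdim)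
  -- quotient module
  let Jz : Submodule ℤ R := Submodule.restrictScalars ℤ (Ideal.span genSet)
  let π : R →ₗ[ℤ] (R ⧸ Jz) := Jz.mkQ
  have hπs : Function.Surjective π := Submodule.mkQ_surjective Jz
  let L : R →ₗ[ℤ] ℂ := φ.toIntAlgHom.toLinearMap
  have hker : Jz ≤ LinearMap.ker L := by
    intro x hx
    have : φ x = 0 := hJle hx
    simpa [L, LinearMap.mem_ker] using this
  let ψ : (R ⧸ Jz) →ₗ[ℤ] ℂ := Submodule.liftQ Jz L hker
  have hψπ : ∀ x : R, ψ (π x) = φ x := fun x => rfl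
  have hψmem : ∀ q, ψ q ∈ A := by
    intro q; obtain ⟨x, rfl⟩ := hπs q; rw [hψπ]; exact hAz x
  let ψA : (R ⧸ Jz) →ₗ[ℤ] A :=
    { toFun := fun q => ⟨ψ q, hψmem q⟩
      map_add' := fun x y => Subtype.ext (by simp)
      map_smul' := fun c x => Subtype.ext (by simp) }
  have hψAs : Function.Surjective ψA := by
    rintro ⟨y, hy⟩
    obtain ⟨x, hx⟩ := hAle y hy
    exact ⟨π x, Subtype.ext (by simpa [ψA, hψπ] using hx)⟩
  -- ==================== counting ====================
  set a : ℕ → ℕ := fun p => m.factorization p with ha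
  have hfacts : ∀ p ∈ m.primeFactors, p.Prime ∧ 0 < a p ∧ p ^ a p ∣ m := by
    intro p hp
    exact ⟨Nat.prime_of_mem_primeFactors hp,
      (Nat.prime_of_mem_primeFactors hp).factorization_pos_of_dvd hm.ne'
        (Nat.dvd_of_mem_primeFactors hp), Nat.ordProj_dvd m p⟩
  set good : ℕ → Prop := fun k => ∀ p ∈ m.primeFactors, KerSpanAux.dgt p (a p) k ≠ p - 1
    with hgood_def
  let κ := {k : Fin m // good k.val}
  have hprodm : ∏ p ∈ m.primeFactors, p ^ a p = m := by
    rw [← Nat.support_factorization]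
    exact Nat.factorization_prod_pow_eq_self hm.ne'
  have hbound : ∀ (k : κ) (p : m.primeFactors),
      (k.1.1 % p.1 ^ a p.1) < (p.1 - 1) * p.1 ^ (a p.1 - 1) := by
    rintro ⟨⟨k, hk⟩, hgk⟩ ⟨p, hp⟩
    obtain ⟨hpp, hap, hpa⟩ := hfacts p hp
    have h1 : k % p ^ a p / p ^ (a p - 1) = KerSpanAux.dgt p (a p) k :=
      (KerSpanAux.dgt_eq_mod_div hap).symm
    have h2 : KerSpanAux.dgt p (a p) k < p - 1 :=
      lt_of_le_of_ne (Nat.le_sub_one_of_lt (KerSpanAux.dgt_lt hpp.pos _ _)) (hgk p hp)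
    rw [← h1] at h2
    exact (Nat.div_lt_iff_lt_mul (pow_pos hpp.pos _)).mp h2
  let F : κ → (∀ p : m.primeFactors, Fin ((p.1 - 1) * p.1 ^ (a p.1 - 1))) :=
    fun k p => ⟨k.1.1 % p.1 ^ a p.1, hbound k p⟩
  have hFinj : Function.Injective F := by
    rintro k k' hkk
    have hmods : ∀ p ∈ m.primeFactors, k.1.1 % p ^ a p = k'.1.1 % p ^ a p := by
      intro p hp
      have := congrFun hkk ⟨p, hp⟩
      simpa [F] using congrArg Fin.val this
    have hdvd : (m : ℤ) ∣ (k'.1.1 : ℤ) - (k.1.1 : ℤ) := by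
      have : ∏ p ∈ m.primeFactors, ((p ^ a p : ℕ) : ℤ) ∣ (k'.1.1 : ℤ) - (k.1.1 : ℤ) := by
        apply Finset.prod_dvd_of_coprime
        · intro p hp q hq hne
          exact Nat.isCoprime_iff_coprime.mpr (Nat.Coprime.pow _ _
            ((Nat.coprime_primes (Nat.prime_of_mem_primeFactors hp)
              (Nat.prime_of_mem_primeFactors hq)).mpr hne))
        · intro p hp
          exact_mod_cast (Nat.ModEq.dvd (hmods p hp))
      rwa [← Nat.cast_prod, hprodm] at this
    have hlt : |(k'.1.1 : ℤ) - (k.1.1 : ℤ)| < (m : ℤ) := by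
      have h1 : (k.1.1 : ℤ) < m := by exact_mod_cast k.1.2
      have h2 : (k'.1.1 : ℤ) < m := by exact_mod_cast k'.1.2
      have h3 : (0 : ℤ) ≤ k.1.1 := Int.natCast_nonneg _
      have h4 : (0 : ℤ) ≤ k'.1.1 := Int.natCast_nonneg _
      rw [abs_lt]; omega
    have := Int.eq_zero_of_abs_lt_dvd hdvd hlt
    have hkk' : (k.1.1 : ℤ) = (k'.1.1 : ℤ) := by omega
    exact Subtype.ext (Fin.ext (by exact_mod_cast hkk'))
  have hcardκ : Fintype.card κ ≤ n := by
    have htarget : Fintype.card (∀ p : m.primeFactors, Fin ((p.1 - 1) * p.1 ^ (a p.1 - 1))) = n := by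
      rw [Fintype.card_pi]
      simp only [Fintype.card_fin]
      rw [Finset.prod_coe_sort m.primeFactors (fun p => (p - 1) * p ^ (a p - 1))]
      rw [hn, Nat.totient_eq_prod_factorization hm.ne', Finsupp.prod, Nat.support_factorization]
      exact Finset.prod_congr rfl fun p hp => (mul_comm _ _)
    calc Fintype.card κ ≤ _ := Fintype.card_le_of_injective F hFinj
    _ = n := htarget
  obtain ⟨emb⟩ : Nonempty (κ ↪ Fin n) := by
    apply Function.Embedding.nonempty_of_card_le
    rwa [Fintype.card_fin]
  -- generators and span
  let u : κ → R ⧸ Jz := fun k => π (MonoidAlgebra.of ℤ G (z ^ (k.1.1 : ℕ)))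
  let v : Fin n → R ⧸ Jz := Function.extend emb u 0
  set T : Submodule ℤ (R ⧸ Jz) := Submodule.span ℤ (Set.range v) with hT
  have huv : ∀ k, u k ∈ Set.range v := fun k => ⟨emb k, emb.injective.extend_apply u 0 k⟩
  -- the key relation coming from the subgroup sums
  have hrel : ∀ (k p : ℕ), p ∈ m.primeFactors →
      π (MonoidAlgebra.of ℤ G (z ^ k)) =
        - ∑ t ∈ Finset.range (p - 1), π (MonoidAlgebra.of ℤ G (z ^ (k + m / p * (t + 1)))) := by
    intro k p hpf
    obtain ⟨hp, hap, hpa⟩ := hfacts p hpf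
    have hpdvd : p ∣ m := Nat.dvd_of_mem_primeFactors hpf
    have hordzp : orderOf (z ^ (m / p)) = p := by
      rw [orderOf_pow, hord, Nat.gcd_eq_right (Nat.div_dvd_of_dvd hpdvd),
        Nat.div_div_self hpdvd hm.ne']
    have hfin : IsOfFinOrder (z ^ (m / p)) := isOfFinOrder_of_finite _
    set P : Subgroup G := Subgroup.zpowers (z ^ (m / p)) with hP
    have hPcard : (Nat.card P).Prime := by rw [Nat.card_zpowers, hordzp]; exact hp
    have hσ : grpSum (P : Set G) (Set.toFinite _) ∈ genSet := ⟨P, hPcard, rfl⟩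
    have hprodσ : (∑ t ∈ Finset.range p, MonoidAlgebra.of ℤ G (z ^ (k + m / p * t)))
        = MonoidAlgebra.of ℤ G (z ^ k) * grpSum (P : Set G) (Set.toFinite _) := by
      rw [grpSum, Finset.mul_sum,
        Finset.sum_range (fun t => MonoidAlgebra.of ℤ G (z ^ (k + m / p * t))),
        ← Finset.sum_coe_sort ((Set.toFinite (P : Set G)).toFinset)
          (fun i => MonoidAlgebra.of ℤ G (z ^ k) * MonoidAlgebra.of ℤ G i)]
      refine Fintype.sum_equiv ((finCongr hordzp.symm).trans ((finEquivZPowers hfin).trans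
        (Equiv.subtypeEquivRight (fun x => (Set.Finite.mem_toFinset (Set.toFinite (P : Set G))).symm)))) _ _ ?_
      intro t
      show MonoidAlgebra.of ℤ G (z ^ (k + m / p * (t : ℕ))) =
        MonoidAlgebra.of ℤ G (z ^ k) * MonoidAlgebra.of ℤ G ((z ^ (m / p)) ^ ((t : ℕ)))
      rw [← map_mul, ← pow_mul, ← pow_add]
    have h0 : (∑ t ∈ Finset.range p, π (MonoidAlgebra.of ℤ G (z ^ (k + m / p * t)))) = 0 := by
      rw [← map_sum, hprodσ]
      show Submodule.Quotient.mk _ = (0 : R ⧸ Jz)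
      rw [Submodule.Quotient.mk_eq_zero]
      show _ ∈ Ideal.span genSet
      exact Ideal.mul_mem_left _ _ (Ideal.subset_span hσ)
    obtain ⟨p', hp'⟩ : ∃ p', p = p' + 1 := ⟨p - 1, (Nat.succ_pred_eq_of_pos hp.pos).symm⟩
    subst hp'
    rw [Finset.sum_range_succ'] at h0
    simp only [mul_zero, add_zero, Nat.add_sub_cancel] at h0 ⊢
    exact (add_eq_zero_iff_neg_eq.mp h0).symm
  -- the decrease of the digit-sum measure
  have hstep : ∀ (k p t : ℕ), p ∈ m.primeFactors → KerSpanAux.dgt p (a p) k = p - 1 →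
      t < p - 1 →
      (∑ q ∈ m.primeFactors, KerSpanAux.dgt q (a q) (k + m / p * (t + 1)))
        < ∑ q ∈ m.primeFactors, KerSpanAux.dgt q (a q) k := by
    intro k p t hpf hdg ht
    obtain ⟨hp, hap, hpa⟩ := hfacts p hpf
    have h2p : 2 ≤ p := hp.two_le
    have hpdvd : p ∣ m := Nat.dvd_of_mem_primeFactors hpf
    set M := m / p ^ a p with hM
    have hMnd : ¬ p ∣ M := Nat.not_dvd_ordCompl hp hm.ne'
    have hq : m / p = M * p ^ (a p - 1) := by
      have h1 : p ^ a p * M = m := Nat.ordProj_mul_ordCompl_eq_self m p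
      refine Nat.div_eq_of_eq_mul_left hp.pos ?_
      rw [← h1, mul_assoc, ← pow_succ, Nat.sub_add_cancel hap, mul_comm]
    have hplus : k + m / p * (t + 1) = k + (M * (t + 1)) * p ^ (a p - 1) := by
      rw [hq]; ring
    have hdp : KerSpanAux.dgt p (a p) (k + m / p * (t + 1)) < p - 1 := by
      rw [hplus, KerSpanAux.dgt_add_mul hp.pos, hdg]
      have he_lt : (M * (t + 1)) % p < p := Nat.mod_lt _ hp.pos
      have he0 : (M * (t + 1)) % p ≠ 0 := by
        intro h0
        rcases (Nat.Prime.dvd_mul hp).mp (Nat.dvd_of_mod_eq_zero h0) with h | h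
        · exact hMnd h
        · have := Nat.le_of_dvd (Nat.succ_pos t) h
          omega
      rw [Nat.add_mod, Nat.mod_eq_of_lt (by omega : p - 1 < p),
        show p - 1 + (M * (t + 1)) % p = ((M * (t + 1)) % p - 1) + p by omega,
        Nat.add_mod_right, Nat.mod_eq_of_lt (by omega)]
      omega
    have hdq : ∀ q ∈ m.primeFactors, q ≠ p →
        KerSpanAux.dgt q (a q) (k + m / p * (t + 1)) = KerSpanAux.dgt q (a q) k := by
      intro q hqf hne
      obtain ⟨hqp, haq, hqa⟩ := hfacts q hqf
      have hco : Nat.Coprime (q ^ a q) p := by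
        simpa using Nat.Coprime.pow (a q) 1 ((Nat.coprime_primes hqp hp).mpr hne)
      have hdvq : q ^ a q ∣ m / p := by
        refine Nat.Coprime.dvd_of_dvd_mul_left hco ?_
        rw [Nat.mul_div_cancel' hpdvd]
        exact hqa
      obtain ⟨c, hc⟩ := hdvq
      have hrw : k + m / p * (t + 1) = k + (c * (t + 1) * q) * q ^ (a q - 1) := by
        rw [hc, show q ^ a q = q ^ (a q - 1) * q from by rw [← pow_succ, Nat.sub_add_cancel haq]]
        ring
      rw [hrw, KerSpanAux.dgt_add_mul hqp.pos, Nat.add_mul_mod_self_right,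
        Nat.mod_eq_of_lt (KerSpanAux.dgt_lt hqp.pos _ _)]
    refine Finset.sum_lt_sum (fun q hq => ?_) ⟨p, hpf, ?_⟩
    · rcases eq_or_ne q p with rfl | hne
      · rw [hdg]; exact le_of_lt hdp
      · exact le_of_eq (hdq q hq hne)
    · rw [hdg]; exact hdp
  -- the spanning induction
  have key : ∀ N k, (∑ p ∈ m.primeFactors, KerSpanAux.dgt p (a p) k) ≤ N →
      π (MonoidAlgebra.of ℤ G (z ^ k)) ∈ T := by
    intro N
    induction N using Nat.strong_induction_on with
    | _ N ih =>
      intro k hk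
      by_cases hgd : good (k % m)
      · have hzk : z ^ k = z ^ (k % m) := by rw [← hord, pow_mod_orderOf]
        have heq : π (MonoidAlgebra.of ℤ G (z ^ k)) = u ⟨⟨k % m, Nat.mod_lt k hm⟩, hgd⟩ := by
          rw [hzk]
        rw [heq]
        exact Submodule.subset_span (huv _)
      · have hgd' : ∃ p ∈ m.primeFactors, KerSpanAux.dgt p (a p) (k % m) = p - 1 := by
          by_contra hcon
          push_neg at hcon
          exact hgd (fun p hp => hcon p hp)
        obtain ⟨p, hpf, hdg⟩ := hgd'
        obtain ⟨hp, hap, hpa⟩ := hfacts p hpf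
        have hdg' : KerSpanAux.dgt p (a p) k = p - 1 := by
          rwa [KerSpanAux.dgt_mod hap hpa] at hdg
        rw [hrel k p hpf]
        refine neg_mem (Submodule.sum_mem _ fun t ht => ?_)
        have ht' : t < p - 1 := Finset.mem_range.mp ht
        exact ih _ (lt_of_lt_of_le (hstep k p t hpf hdg' ht') hk) _ le_rfl
  -- every element of the quotient is in the span
  have hTtop : ∀ x : R, π x ∈ T := by
    intro x
    induction x using MonoidAlgebra.induction_on with
    | of g =>
      obtain ⟨j, rfl⟩ := mem_powers_iff_mem_zpowers.mpr (hz g)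
      exact key _ j le_rfl
    | add f g hf hg => rw [map_add]; exact add_mem hf hg
    | smul r f hf => rw [map_smul]; exact Submodule.smul_mem _ _ hf
  -- the linear combination map is surjective
  let lc : (Fin n → ℤ) →ₗ[ℤ] (R ⧸ Jz) := Fintype.linearCombination ℤ v
  have hlcs : Function.Surjective lc := by
    intro q
    obtain ⟨x, rfl⟩ := hπs q
    obtain ⟨c, hc⟩ := (Submodule.mem_span_range_iff_exists_fun ℤ).mp (hTtop x)
    exact ⟨c, by rw [Fintype.linearCombination_apply]; exact hc⟩
  -- the endomorphism argument
  let f : (Fin n → ℤ) →ₗ[ℤ] (Fin n → ℤ) :=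
    (b.equivFun.toLinearMap.comp ψA).comp lc
  have hfs : Function.Surjective f := by
    simp only [f, LinearMap.coe_comp]
    exact (b.equivFun.surjective.comp hψAs).comp hlcs
  have hfi : Function.Injective f := IsNoetherian.injective_of_surjective_endomorphism f hfs
  -- conclusion
  refine le_antisymm ?_ hJle
  intro x hx
  have hφx : φ x = 0 := hx
  obtain ⟨c, hc⟩ := hlcs (π x)
  have hfc : f c = 0 := by
    have hψA0 : ψA (π x) = 0 := Subtype.ext (by
      show ψ (π x) = 0
      rw [hψπ x, hφx])
    show b.equivFun (ψA (lc c)) = 0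
    rw [hc, hψA0]
    exact b.equivFun.map_zero
  have hc0 : c = 0 := hfi (by rw [hfc]; exact (map_zero f).symm)
  have hπx0 : π x = 0 := by rw [← hc, hc0, map_zero]
  have : x ∈ Jz := by
    rwa [← Submodule.Quotient.mk_eq_zero Jz]
  exact this


end
end

section
/- Let G = ⟨z⟩ be a multiplicative cyclic group of order m = p_1^{a_1}···p_r^{a_r}, where p_1, ..., p_r are distinct primes and each a_i > 0. Let G_0 ⊆ G be the unique subgroup of order p_1·p_2···p_r, and let g_1, ..., g_s (s = [G : G_0]) be a complete set of coset representatives of G_0 in G. Then ℕG ∩ ker φ = Σ_{j=1}^s g_j·(ℕG_0 ∩ ker φ), where ℕG_0 ∩ ker φ is viewed inside ℤG via the inclusion ℤG_0 ⊆ ℤG. -/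
lemma aux_totient {m s n₀ : ℕ} (hm : 0 < m) (hn₀ : n₀ = ∏ p ∈ m.primeFactors, p)
    (hms : m = s * n₀) : m.totient = s * n₀.totient := by
  have hn₀pos : 0 < n₀ := Nat.pos_of_mul_pos_left (a := s) (by omega)
  have hpf : n₀.primeFactors = m.primeFactors := by
    rw [hn₀]; exact Nat.primeFactors_prod (fun p hp => Nat.prime_of_mem_primeFactors hp)
  have h1 := Nat.totient_mul_prod_primeFactors m
  have h2 := Nat.totient_mul_prod_primeFactors n₀
  rw [hpf, hn₀] at h2
  rw [← hn₀] at h1 h2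
  have h3 : n₀.totient = ∏ p ∈ m.primeFactors, (p - 1) := by
    have := Nat.eq_of_mul_eq_mul_right hn₀pos (h2.trans (mul_comm _ _))
    exact this
  have : m.totient * n₀ = s * n₀.totient * n₀ := by
    rw [h1, h3, hms]; ring
  exact Nat.eq_of_mul_eq_mul_right hn₀pos this

set_option maxHeartbeats 1000000 in
set_option synthInstance.maxHeartbeats 200000 in
open IntermediateField Polynomial in
lemma aux_li {m s n₀ : ℕ} (hm : 0 < m) (hn₀pos : 0 < n₀) (hspos : 0 < s)
    (htot : m.totient = s * n₀.totient)
    (hms : m = s * n₀) {ζ : ℂ} (hζ : IsPrimitiveRoot ζ m) :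
    LinearIndependent ℚ⟮ζ ^ s⟯ (fun j : Fin s => ζ ^ (j : ℕ)) := by
  have hζ₀ : IsPrimitiveRoot (ζ ^ s) n₀ := hζ.pow hm hms
  have hint : IsIntegral ℚ ζ := by
    refine ⟨X ^ m - 1, monic_X_pow_sub_C 1 hm.ne', ?_⟩
    simp [hζ.pow_eq_one, sub_eq_zero]
  have hint₀ : IsIntegral ℚ (ζ ^ s) := hint.pow s
  set K : IntermediateField ℚ ℂ := ℚ⟮ζ ^ s⟯ with hK
  have hfinK : Module.finrank ℚ K = n₀.totient := by
    rw [hK, IntermediateField.adjoin.finrank hint₀,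
      ← cyclotomic_eq_minpoly_rat hζ₀ hn₀pos, natDegree_cyclotomic]
  have hintK : IsIntegral K ζ := hint.tower_top
  haveI : FiniteDimensional K K⟮ζ⟯ := IntermediateField.adjoin.finiteDimensional hintK
  haveI : FiniteDimensional ℚ K := IntermediateField.adjoin.finiteDimensional hint₀
  have hKle : K ≤ ℚ⟮ζ⟯ := adjoin_simple_le_iff.mpr (pow_mem (mem_adjoin_simple_self ℚ ζ) s)
  have hrs : (K⟮ζ⟯).restrictScalars ℚ = ℚ⟮ζ⟯ := by
    exact (restrictScalars_adjoin_eq_sup (K := K) (S := ({ζ} : Set ℂ))).trans (sup_eq_right.mpr hKle)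
  have hfinL : Module.finrank ℚ ℚ⟮ζ⟯ = m.totient := by
    rw [IntermediateField.adjoin.finrank hint,
      ← cyclotomic_eq_minpoly_rat hζ hm, natDegree_cyclotomic]
  have htower : Module.finrank ℚ K * Module.finrank K K⟮ζ⟯ = m.totient := by
    rw [Module.finrank_mul_finrank ℚ K K⟮ζ⟯, ← hfinL, ← hrs]
    rfl
  have hd : Module.finrank K K⟮ζ⟯ = s := by
    have h1 : Module.finrank K K⟮ζ⟯ ≤ s := by
      rw [IntermediateField.adjoin.finrank hintK]
      have hpne : (X ^ s - C (AdjoinSimple.gen ℚ (ζ ^ s)) : K[X]) ≠ 0 := by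
        intro h
        have := natDegree_X_pow_sub_C (n := s) (r := AdjoinSimple.gen ℚ (ζ ^ s)) (R := K)
        rw [h] at this
        simp at this
        omega
      have haev : aeval ζ (X ^ s - C (AdjoinSimple.gen ℚ (ζ ^ s)) : K[X]) = 0 := by
        simp [AdjoinSimple.algebraMap_gen]
      have := minpoly.degree_le_of_ne_zero K ζ hpne haev
      have h2 := natDegree_le_natDegree this
      rwa [natDegree_X_pow_sub_C] at h2
    have h2 : n₀.totient * Module.finrank K K⟮ζ⟯ = n₀.totient * s := by
      rw [← hfinK, htower, htot, hfinK, mul_comm]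
    exact le_antisymm h1 (Nat.le_of_mul_le_mul_left (le_of_eq h2.symm) (Nat.totient_pos.mpr hn₀pos))
  set pb := IntermediateField.adjoin.powerBasis hintK with hpb
  have hdim : pb.dim = s := by rw [← hd]; exact (PowerBasis.finrank pb).symm
  have hli := pb.basis.linearIndependent
  have hli2 := hli.map' (K⟮ζ⟯.val).toLinearMap (LinearMap.ker_eq_bot.mpr (K⟮ζ⟯.val).injective)
  have key : LinearIndependent K (fun i : Fin pb.dim => ζ ^ (i : ℕ)) := by
    rw [show (fun i : Fin pb.dim => ζ ^ (i : ℕ))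
        = ((K⟮ζ⟯.val).toLinearMap ∘ pb.basis) from ?_]
    · exact hli2
    · funext i
      simp only [Function.comp_apply, pb.coe_basis, AlgHom.toLinearMap_apply, map_pow,
        IntermediateField.adjoin.powerBasis_gen]
      rw [show pb.gen = AdjoinSimple.gen K ζ from by rw [hpb, IntermediateField.adjoin.powerBasis_gen]]
      rw [show (K⟮ζ⟯.val) (AdjoinSimple.gen K ζ) = ζ from AdjoinSimple.algebraMap_gen K ζ]
  have := key.comp (finCongr hdim.symm) (finCongr hdim.symm).injective
  exact this

lemma aux_G0 {G : Type} [CommGroup G] [Fintype G] {m s n₀ : ℕ}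
    (hn₀pos : 0 < n₀) (hspos : 0 < s) (hms : m = s * n₀)
    (hcard : Fintype.card G = m) {z : G} (hz : ∀ g : G, g ∈ Subgroup.zpowers z)
    {G₀ : Subgroup G} (hG₀ : Nat.card G₀ = n₀) :
    G₀ = Subgroup.zpowers (z ^ s) := by
  have horder : orderOf z = m := by
    rw [orderOf_eq_card_of_forall_mem_zpowers hz, Nat.card_eq_fintype_card, hcard]
  have hsdvd : s ∣ m := ⟨n₀, hms⟩
  have hle : G₀ ≤ Subgroup.zpowers (z ^ s) := by
    intro h hh
    have hpow : h ^ n₀ = 1 := by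
      have := pow_card_eq_one' (G := G₀) (x := ⟨h, hh⟩)
      rw [hG₀] at this
      exact_mod_cast congrArg (Subgroup.subtype G₀) this
    obtain ⟨k, hk⟩ := (mem_powers_iff_mem_zpowers).mpr (hz h)
    simp only at hk
    have hzk : z ^ (k * n₀) = 1 := by rw [pow_mul, hk, hpow]
    have hdvd : m ∣ k * n₀ := horder ▸ orderOf_dvd_of_pow_eq_one hzk
    have hsk : s ∣ k := by
      obtain ⟨c, hc⟩ := hdvd
      refine ⟨c, ?_⟩
      have h2 : k * n₀ = s * c * n₀ := by rw [hc, hms]; ring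
      exact Nat.eq_of_mul_eq_mul_right hn₀pos h2
    obtain ⟨j, hj⟩ := hsk
    rw [← hk, hj, pow_mul]
    exact Subgroup.npow_mem_zpowers _ _
  have hcard2 : Nat.card (Subgroup.zpowers (z ^ s)) = n₀ := by
    rw [Nat.card_zpowers, orderOf_pow, horder, Nat.gcd_eq_right hsdvd, hms,
      Nat.mul_div_cancel_left _ hspos]
  exact Subgroup.eq_of_le_of_card_ge hle (le_of_eq (hcard2.trans hG₀.symm))

set_option maxHeartbeats 2000000 in
/-- Theorem 3.1: with `G = ⟨z⟩` cyclic of order `m = p₁^{a₁}⋯p_r^{a_r}`,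
`φ : ℤG → ℂ` the ring homomorphism with `φ(z) = ζ` (`ζ` a primitive `m`-th root
of unity), `G₀ ⊆ G` the unique subgroup of order `p₁⋯p_r`, and `g₁, …, g_s` a
complete set of coset representatives of `G₀` in `G` (given by the finset `T`),
one has `ℕG ∩ ker φ = ∑_j g_j · (ℕG₀ ∩ ker φ)`, where elements of
`ℕG₀ ∩ ker φ` are viewed inside `ℤG` as the nonnegative elements of `ker φ`
supported on `G₀`. -/
theorem NG_inter_ker_eq_coset_decomposition
    (m : ℕ) (hm : 0 < m)
    (G : Type) [CommGroup G] [Fintype G] (hcard : Fintype.card G = m)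
    (z : G) (hz : ∀ g : G, g ∈ Subgroup.zpowers z)
    (ζ : ℂ) (hζ : IsPrimitiveRoot ζ m)
    (φ : MonoidAlgebra ℤ G →+* ℂ) (hφ : φ (MonoidAlgebra.of ℤ G z) = ζ)
    (G₀ : Subgroup G) (hG₀ : Nat.card G₀ = ∏ p ∈ m.primeFactors, p)
    (T : Finset G) (hT : ∀ g : G, ∃! t, t ∈ T ∧ g⁻¹ * t ∈ G₀) :
    {x : MonoidAlgebra ℤ G | (∀ g, 0 ≤ x.coeff g) ∧ φ x = 0} =
      {x : MonoidAlgebra ℤ G | ∃ y : G → MonoidAlgebra ℤ G,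
        (∀ t ∈ T, (∀ g, 0 ≤ (y t).coeff g) ∧ φ (y t) = 0 ∧ ∀ g ∉ G₀, (y t).coeff g = 0) ∧
        x = ∑ t ∈ T, MonoidAlgebra.of ℤ G t * y t} := by
  classical
  set n₀ := ∏ p ∈ m.primeFactors, p with hn₀
  have hn₀dvd : n₀ ∣ m := Nat.prod_primeFactors_dvd m
  have hn₀pos : 0 < n₀ := Nat.pos_of_dvd_of_pos hn₀dvd hm
  set s := m / n₀ with hs
  have hms : m = s * n₀ := (Nat.div_mul_cancel hn₀dvd).symm
  have hspos : 0 < s := by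
    rcases Nat.eq_zero_or_pos s with h | h
    · rw [h] at hms; omega
    · exact h
  have htot := aux_totient hm hn₀ hms
  have hζs := aux_li hm hn₀pos hspos htot hms hζ
  have hG₀eq := aux_G0 hn₀pos hspos hms hcard hz hG₀
  have hex : ∀ g : G, ∃ k : ℕ, z ^ k = g := by
    intro g
    obtain ⟨k, hk⟩ := mem_powers_iff_mem_zpowers.mpr (hz g)
    exact ⟨k, hk⟩
  choose e he using hex
  have horderz : orderOf z = m := by
    rw [orderOf_eq_card_of_forall_mem_zpowers hz, Nat.card_eq_fintype_card, hcard]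
  have horderζ : orderOf ζ = m := hζ.eq_orderOf.symm
  have hzpow : ∀ a : ℕ, ζ ^ a = ζ ^ (a % m) := by
    intro a
    conv_lhs => rw [← Nat.div_add_mod a m]
    rw [pow_add, pow_mul, hζ.pow_eq_one, one_pow, one_mul]
  have hzζ : ∀ a b : ℕ, z ^ a = z ^ b → ζ ^ a = ζ ^ b := by
    intro a b hab
    rw [pow_eq_pow_iff_modEq, horderz] at hab
    rw [hzpow a, hzpow b, hab]
  have hφof : ∀ g : G, φ (MonoidAlgebra.of ℤ G g) = ζ ^ e g := by
    intro g
    conv_lhs => rw [← he g]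
    rw [map_pow, map_pow, hφ]
  have hφsingle : ∀ (g : G) (c : ℤ),
      φ (MonoidAlgebra.single g c) = (c : ℂ) * ζ ^ e g := by
    intro g c
    have h1 : (MonoidAlgebra.single g c : MonoidAlgebra ℤ G)
        = (c : MonoidAlgebra ℤ G) * MonoidAlgebra.of ℤ G g := by
      rw [MonoidAlgebra.intCast_def, MonoidAlgebra.of_apply, MonoidAlgebra.single_mul_single]
      simp
    rw [h1, map_mul, map_intCast, hφof]
  have hrepr : ∀ v : MonoidAlgebra ℤ G, v = ∑ g : G, MonoidAlgebra.single g (v.coeff g) := by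
    intro v
    ext g'
    rw [MonoidAlgebra.coeff_sum, Finsupp.finset_sum_apply]
    simp [Finsupp.single_apply]
  have hφeval : ∀ v : MonoidAlgebra ℤ G, φ v = ∑ g : G, (v.coeff g : ℂ) * ζ ^ e g := by
    intro v
    conv_lhs => rw [hrepr v]
    rw [map_sum]
    exact Finset.sum_congr rfl fun g _ => hφsingle g (v.coeff g)
  ext x
  simp only [Set.mem_setOf_eq]
  constructor
  · rintro ⟨hpos, hker⟩
    set y : G → MonoidAlgebra ℤ G :=
      fun t => MonoidAlgebra.ofCoeff (Finsupp.equivFunOnFinite.symm (fun g => if g ∈ G₀ then x.coeff (t * g) else 0)) with hy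
    have hyapp : ∀ t g, (y t).coeff g = if g ∈ G₀ then x.coeff (t * g) else 0 := by
      intro t g
      rw [hy]
      rfl
    have hdecomp : x = ∑ t ∈ T, MonoidAlgebra.of ℤ G t * y t := by
      ext g
      rw [MonoidAlgebra.coeff_sum, Finsupp.finset_sum_apply]
      obtain ⟨t₀, ⟨ht₀T, ht₀⟩, huniq⟩ := hT g
      have hterm : ∀ t ∈ T,
          (MonoidAlgebra.of ℤ G t * y t).coeff g = if g⁻¹ * t ∈ G₀ then x.coeff g else 0 := by
        intro t _
        rw [MonoidAlgebra.of_apply, MonoidAlgebra.coeff_single_mul_apply, one_mul, hyapp]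
        by_cases hmem : t⁻¹ * g ∈ G₀
        · rw [if_pos hmem, if_pos, mul_inv_cancel_left]
          have := inv_mem hmem
          rwa [mul_inv_rev, inv_inv] at this
        · rw [if_neg hmem, if_neg]
          intro hc
          apply hmem
          have := inv_mem hc
          rwa [mul_inv_rev, inv_inv] at this
      rw [Finset.sum_congr rfl hterm]
      rw [Finset.sum_eq_single_of_mem t₀ ht₀T]
      · rw [if_pos ht₀]
      · intro t htT htne
        rw [if_neg]
        intro hc
        exact htne (huniq t ⟨htT, hc⟩)
    set K : IntermediateField ℚ ℂ := IntermediateField.adjoin ℚ {ζ ^ s} with hK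
    have hζsK : (ζ ^ s : ℂ) ∈ K := IntermediateField.mem_adjoin_simple_self ℚ (ζ ^ s)
    have hG₀pow : ∀ g : G, g ∈ G₀ → ζ ^ e g ∈ K := by
      intro g hg
      rw [hG₀eq] at hg
      obtain ⟨j, hj⟩ := mem_powers_iff_mem_zpowers.mpr hg
      simp only at hj
      have hzz : ζ ^ e g = (ζ ^ s) ^ j := by
        rw [← pow_mul]
        exact hzζ _ _ (by rw [he, pow_mul, hj])
      rw [hzz]
      exact pow_mem hζsK j
    have hyK : ∀ t, φ (y t) ∈ K := by
      intro t
      rw [hφeval]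
      refine sum_mem fun g _ => ?_
      rw [hyapp]
      by_cases hg : g ∈ G₀
      · rw [if_pos hg]
        exact mul_mem (IntermediateField.intCast_mem K _) (hG₀pow g hg)
      · rw [if_neg hg]
        push_cast
        rw [zero_mul]
        exact zero_mem K
    set f : G → Fin s := fun t => ⟨e t % s, Nat.mod_lt _ hspos⟩ with hf
    have hinj : ∀ t ∈ T, ∀ t' ∈ T, f t = f t' → t = t' := by
      intro t ht t' ht' hff
      have hmod : e t % s = e t' % s := congrArg Fin.val hff
      have hdvd : (s : ℤ) ∣ (e t' : ℤ) - (e t : ℤ) :=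
        (Nat.modEq_iff_dvd (n := s)).mp hmod
      obtain ⟨j, hj⟩ := hdvd
      have hmem : t⁻¹ * t' ∈ G₀ := by
        rw [hG₀eq]
        rw [Subgroup.mem_zpowers_iff]
        refine ⟨j, ?_⟩
        rw [← zpow_natCast z s, ← zpow_mul, ← hj, zpow_sub, zpow_natCast, zpow_natCast, he, he, mul_comm]
      obtain ⟨t'', ht'', huniq⟩ := hT t
      rw [huniq t' ⟨ht', hmem⟩, huniq t ⟨ht, by rw [inv_mul_cancel]; exact G₀.one_mem⟩]
    have h0 : (0 : ℂ) = ∑ t ∈ T, (ζ ^ s) ^ (e t / s) * ζ ^ (e t % s) * φ (y t) := by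
      have h1 : φ x = ∑ t ∈ T, ζ ^ (e t) * φ (y t) := by
        rw [hdecomp, map_sum]
        refine Finset.sum_congr rfl fun t _ => ?_
        rw [map_mul, hφof]
      rw [← hker, h1]
      have hrw : ∀ a : ℕ, ζ ^ a = (ζ ^ s) ^ (a / s) * ζ ^ (a % s) := by
        intro a
        rw [← pow_mul, ← pow_add]
        congr 1
        exact (Nat.div_add_mod a s).symm
      refine Finset.sum_congr rfl fun t _ => ?_
      rw [hrw (e t)]
    have hcoefK : ∀ t, (ζ ^ s) ^ (e t / s) * φ (y t) ∈ K :=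
      fun t => mul_mem (pow_mem hζsK _) (hyK t)
    set c : Fin s → K := fun j =>
      ⟨∑ t ∈ T.filter (fun t => f t = j), (ζ ^ s) ^ (e t / s) * φ (y t),
        sum_mem fun t _ => hcoefK t⟩ with hc
    have hsum0 : ∑ j : Fin s, c j • (ζ ^ (j : ℕ)) = 0 := by
      have h2 : ∀ j : Fin s, c j • (ζ ^ (j : ℕ))
          = ∑ t ∈ T.filter (fun t => f t = j), (ζ ^ s) ^ (e t / s) * ζ ^ (e t % s) * φ (y t) := by
        intro j
        rw [Algebra.smul_def]
        rw [show (algebraMap K ℂ) (c j) = (c j : ℂ) from rfl]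
        rw [hc]
        simp only [Finset.sum_mul]
        refine Finset.sum_congr rfl fun t htm => ?_
        have : f t = j := (Finset.mem_filter.mp htm).2
        have hcj : (j : ℕ) = e t % s := by rw [← this]
        rw [hcj]
        ring
      rw [Finset.sum_congr rfl fun j _ => h2 j]
      rw [Finset.sum_fiberwise_of_maps_to (fun t _ => Finset.mem_univ (f t))]
      exact h0.symm
    have hczero : ∀ j, c j = 0 := by
      have := Fintype.linearIndependent_iff.mp hζs c hsum0
      exact this
    have hφt : ∀ t ∈ T, φ (y t) = 0 := by
      intro t ht
      have hfil : T.filter (fun t' => f t' = f t) = {t} := by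
        ext t'
        simp only [Finset.mem_filter, Finset.mem_singleton]
        constructor
        · rintro ⟨ht', hft⟩
          exact hinj t' ht' t ht hft
        · rintro rfl
          exact ⟨ht, rfl⟩
      have := congrArg (Subtype.val) (hczero (f t))
      rw [hc] at this
      simp only [hfil, Finset.sum_singleton] at this
      have hζne : (ζ : ℂ) ≠ 0 := hζ.ne_zero hm.ne'
      have hppow : ((ζ ^ s) ^ (e t / s) : ℂ) ≠ 0 := pow_ne_zero _ (pow_ne_zero _ hζne)
      exact (mul_eq_zero.mp this).resolve_left hppow
    refine ⟨y, fun t ht => ⟨?_, hφt t ht, ?_⟩, hdecomp⟩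
    · intro g
      rw [hyapp]
      split
      · exact hpos _
      · exact le_refl 0
    · intro g hg
      rw [hyapp, if_neg hg]
  · rintro ⟨y, hy, rfl⟩
    constructor
    · intro g
      rw [MonoidAlgebra.coeff_sum, Finsupp.finset_sum_apply]
      refine Finset.sum_nonneg fun t ht => ?_
      rw [MonoidAlgebra.of_apply, MonoidAlgebra.coeff_single_mul_apply, one_mul]
      exact (hy t ht).1 _
    · rw [map_sum]
      refine Finset.sum_eq_zero fun t ht => ?_
      rw [map_mul, (hy t ht).2.1, mul_zero]
end

section
/- Let m be a positive integer and let α_1 + α_2 + ... + α_n = 0 (n ≥ 1) be a minimal vanishing sum of m-th roots of unity in ℂ. Then there exists an m-th root of unity u such that every u·α_i is an m_0-th root of unity, where m_0 is the radical of m (the product of the distinct primes dividing m); in particular (u·α_1) + ... + (u·α_n) = 0 is a vanishing sum of m_0-th roots of unity with m_0 square-free. -/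
open Polynomial

/-- The `j`-th `p`-section of a polynomial: coefficient `k` is coefficient `p*k+j` of `P`. -/
noncomputable def sect (p j : ℕ) (P : ℚ[X]) : ℚ[X] :=
  ∑ k ∈ Finset.range (P.natDegree + 1), C (P.coeff (p * k + j)) * X ^ k

lemma sect_coeff {p : ℕ} (hp : 0 < p) (j : ℕ) (P : ℚ[X]) (k : ℕ) :
    (sect p j P).coeff k = P.coeff (p * k + j) := by
  rw [sect, finset_sum_coeff]
  simp only [coeff_C_mul, coeff_X_pow, mul_ite, mul_one, mul_zero]
  rw [Finset.sum_ite_eq (Finset.range (P.natDegree + 1)) k (fun k => P.coeff (p * k + j))]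
  by_cases h : k ∈ Finset.range (P.natDegree + 1)
  · rw [if_pos h]
  · rw [if_neg h]
    symm
    apply coeff_eq_zero_of_natDegree_lt
    simp only [Finset.mem_range] at h
    have : k ≤ p * k := Nat.le_mul_of_pos_left k hp
    omega

lemma sect_add {p : ℕ} (hp : 0 < p) (j : ℕ) (P Q : ℚ[X]) :
    sect p j (P + Q) = sect p j P + sect p j Q := by
  ext k
  simp [sect_coeff hp]

lemma sect_zero {p : ℕ} (hp : 0 < p) (j : ℕ) : sect p j (0 : ℚ[X]) = 0 := by
  ext k
  simp [sect_coeff hp]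

lemma sect_X_pow {p : ℕ} (hp : 0 < p) {j : ℕ} (hj : j < p) (e : ℕ) :
    sect p j ((X : ℚ[X]) ^ e) = if e % p = j then X ^ (e / p) else 0 := by
  have hdm := Nat.div_add_mod e p
  ext k
  rw [sect_coeff hp, coeff_X_pow]
  by_cases h : e % p = j
  · rw [if_pos h, coeff_X_pow]
    by_cases hk : p * k + j = e
    · rw [if_pos hk, if_pos]
      subst hk
      rw [Nat.mul_add_div hp, Nat.div_eq_of_lt hj, add_zero]
    · rw [if_neg hk, if_neg]
      intro hke
      subst hke
      rw [h] at hdm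
      exact hk hdm
  · rw [if_neg h, coeff_zero, if_neg]
    intro hk
    apply h
    rw [← hk, Nat.mul_add_mod, Nat.mod_eq_of_lt hj]
lemma sect_expand_mul {p : ℕ} (hp : 0 < p) {j : ℕ} (hj : j < p) (A Q : ℚ[X]) :
    sect p j (expand ℚ p A * Q) = A * sect p j Q := by
  ext k
  rw [sect_coeff hp, coeff_mul, coeff_mul]
  have hstep1 :
      ∑ x ∈ Finset.HasAntidiagonal.antidiagonal (p * k + j), (expand ℚ p A).coeff x.1 * Q.coeff x.2
        = ∑ x ∈ (Finset.HasAntidiagonal.antidiagonal (p * k + j)).filter (fun x => p ∣ x.1),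
            (expand ℚ p A).coeff x.1 * Q.coeff x.2 := by
    symm
    apply Finset.sum_filter_of_ne
    intro x _ hx
    by_contra hd
    rw [coeff_expand hp, if_neg hd, zero_mul] at hx
    exact hx rfl
  have hset : (Finset.HasAntidiagonal.antidiagonal (p * k + j)).filter (fun x => p ∣ x.1)
      = (Finset.HasAntidiagonal.antidiagonal k).image (fun y : ℕ × ℕ => (p * y.1, p * y.2 + j)) := by
    ext ⟨a, b⟩
    simp only [Finset.mem_filter, Finset.HasAntidiagonal.mem_antidiagonal, Finset.mem_image, Prod.exists,
      Prod.mk.injEq]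
    constructor
    · rintro ⟨hab, c, rfl⟩
      have hck : c ≤ k := by
        by_contra hc
        have h1 : p * (k + 1) ≤ p * c := Nat.mul_le_mul_left p (by omega)
        rw [mul_add, mul_one] at h1
        omega
      refine ⟨c, k - c, by omega, rfl, ?_⟩
      have h2 : p * k = p * c + p * (k - c) := by
        rw [← mul_add, Nat.add_sub_cancel' hck]
      omega
    · rintro ⟨c, d, hcd, rfl, rfl⟩
      subst hcd
      exact ⟨by ring, dvd_mul_right _ _⟩
  have hinj : ∀ x ∈ Finset.HasAntidiagonal.antidiagonal k, ∀ y ∈ Finset.HasAntidiagonal.antidiagonal k,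
      (fun y : ℕ × ℕ => (p * y.1, p * y.2 + j)) x = (fun y : ℕ × ℕ => (p * y.1, p * y.2 + j)) y
        → x = y := by
    intro x _ y _ hxy
    simp only [Prod.mk.injEq] at hxy
    have h1 : x.1 = y.1 := Nat.eq_of_mul_eq_mul_left hp hxy.1
    have h2 : x.2 = y.2 := Nat.eq_of_mul_eq_mul_left hp (by omega)
    exact Prod.ext h1 h2
  rw [hstep1, hset, Finset.sum_image hinj]
  apply Finset.sum_congr rfl
  intro y _
  rw [coeff_expand_mul' hp, sect_coeff hp]

lemma classSum {p : ℕ} (hp : 0 < p) {j : ℕ} (hj : j < p) (ζ : ℂ) (E : Multiset ℕ) :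
    ((E.filter (fun e => e % p = j)).map (fun e => ζ ^ e)).sum
      = ζ ^ j * (aeval (ζ ^ p)) (sect p j ((E.map (fun e => (X : ℚ[X]) ^ e)).sum)) := by
  classical
  induction E using Multiset.induction_on with
  | empty =>
    simp [sect_zero hp]
  | cons e E ih =>
    rw [Multiset.map_cons, Multiset.sum_cons, sect_add hp, map_add, mul_add, ← ih,
      Multiset.filter_cons, Multiset.map_add, Multiset.sum_add, sect_X_pow hp hj]
    congr 1
    by_cases h : e % p = j
    · rw [if_pos h, if_pos h]
      simp only [Multiset.map_singleton, Multiset.sum_singleton, map_pow, aeval_X]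
      rw [← pow_mul, ← pow_add]
      congr 1
      have hdm := Nat.div_add_mod e p
      omega
    · rw [if_neg h, if_neg h]
      simp
lemma class_sum_zero {m p : ℕ} (hm : 0 < m) (hp : p.Prime) (hpp : p * p ∣ m)
    {ζ : ℂ} (hζ : IsPrimitiveRoot ζ m) (E : Multiset ℕ)
    (hsum : (E.map (fun e => ζ ^ e)).sum = 0) {j : ℕ} (hj : j < p) :
    ((E.filter (fun e => e % p = j)).map (fun e => ζ ^ e)).sum = 0 := by
  have hp0 : 0 < p := hp.pos
  have hpm : p ∣ m := (dvd_mul_right p p).trans hpp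
  have hpdvd : p ∣ m / p := by
    obtain ⟨c, hc⟩ := hpp
    refine ⟨c, ?_⟩
    rw [hc, mul_assoc, Nat.mul_div_cancel_left _ hp0]
  have hmdiv : m / p * p = m := Nat.div_mul_cancel hpm
  set P : ℚ[X] := (E.map fun e => (X : ℚ[X]) ^ e).sum with hP
  have hint : IsIntegral ℚ ζ :=
    ⟨X ^ m - C 1, monic_X_pow_sub_C 1 hm.ne', by simp [hζ.pow_eq_one]⟩
  have haeval : (aeval ζ) P = 0 := by
    rw [hP, map_multiset_sum, Multiset.map_map]
    simpa using hsum
  have hdvd : minpoly ℚ ζ ∣ P := minpoly.dvd ℚ ζ haeval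
  rw [← cyclotomic_eq_minpoly_rat hζ hm] at hdvd
  have hexp : expand ℚ p (cyclotomic (m / p) ℚ) = cyclotomic m ℚ := by
    rw [cyclotomic_expand_eq_cyclotomic hp hpdvd, hmdiv]
  obtain ⟨Q, hQ⟩ := hdvd
  have hsect : sect p j P = cyclotomic (m / p) ℚ * sect p j Q := by
    rw [hQ, ← hexp, sect_expand_mul hp0 hj]
  have hzp : IsPrimitiveRoot (ζ ^ p) (m / p) :=
    IsPrimitiveRoot.pow hm hζ (Nat.mul_div_cancel' hpm).symm
  have hmp_pos : 0 < m / p := Nat.div_pos (Nat.le_of_dvd hm hpm) hp0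
  have hcyc0 : (aeval (ζ ^ p)) (cyclotomic (m / p) ℚ) = 0 := by
    rw [cyclotomic_eq_minpoly_rat hzp hmp_pos]
    exact minpoly.aeval ℚ _
  rw [classSum hp0 hj ζ E, ← hP, hsect, map_mul, hcyc0, zero_mul, mul_zero]
lemma main_aux : ∀ m : ℕ, 0 < m → ∀ S : Multiset ℂ, S ≠ 0 →
    (∀ α ∈ S, α ^ m = 1) → S.sum = 0 →
    (∀ T : Multiset ℂ, T ≤ S → T ≠ 0 → T ≠ S → T.sum ≠ 0) →
    ∃ u : ℂ, u ^ m = 1 ∧ ∀ α ∈ S, (u * α) ^ (∏ p ∈ m.primeFactors, p) = 1 := by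
  intro m
  induction m using Nat.strong_induction_on with
  | _ m ih =>
  intro hm S hS hroots hsum hmin
  classical
  by_cases hsq : Squarefree m
  · exact ⟨1, one_pow m, fun α hα => by
      rw [one_mul, Nat.prod_primeFactors_of_squarefree hsq]; exact hroots α hα⟩
  rw [Nat.squarefree_iff_prime_squarefree] at hsq
  push_neg at hsq
  obtain ⟨p, hpPrime, hpp⟩ := hsq
  have hp' : p.Prime := hpPrime
  have hp0 : 0 < p := hp'.pos
  have hpm : p ∣ m := (dvd_mul_right p p).trans hpp
  have hpLE : p ≤ m := Nat.le_of_dvd hm hpm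
  set n := m / p with hn
  have hn0 : 0 < n := Nat.div_pos hpLE hp0
  have hnm : n < m := Nat.div_lt_self hm hp'.one_lt
  have hmn : m = n * p := (Nat.div_mul_cancel hpm).symm
  have hpn : p ∣ n := by
    obtain ⟨c, hc⟩ := hpp
    exact ⟨c, by rw [hn, hc, mul_assoc, Nat.mul_div_cancel_left _ hp0]⟩
  -- a primitive root and exponents
  set ζ : ℂ := Complex.exp (2 * Real.pi * Complex.I / m) with hζdef
  have hζ : IsPrimitiveRoot ζ m := Complex.isPrimitiveRoot_exp m hm.ne'
  haveI : NeZero m := ⟨hm.ne'⟩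
  have hex : ∀ α ∈ S, ∃ i, ζ ^ i = α := by
    intro α hα
    obtain ⟨i, _, hi⟩ := hζ.eq_pow_of_pow_eq_one (hroots α hα)
    exact ⟨i, hi⟩
  set f : ℂ → ℕ := fun α => if h : ∃ i, ζ ^ i = α then h.choose else 0 with hfdef
  have hf : ∀ α ∈ S, ζ ^ (f α) = α := by
    intro α hα
    have h : ∃ i, ζ ^ i = α := hex α hα
    simp only [hfdef, dif_pos h]
    exact h.choose_spec
  have hES : (S.map f).map (fun e => ζ ^ e) = S := by
    rw [Multiset.map_map]
    exact (Multiset.map_congr rfl fun α hα => hf α hα).trans (Multiset.map_id S)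
  have hEsum : ((S.map f).map fun e => ζ ^ e).sum = 0 := by rw [hES]; exact hsum
  -- all exponents lie in a single class
  obtain ⟨α₀, hα₀⟩ := Multiset.exists_mem_of_ne_zero hS
  set j₀ : ℕ := f α₀ % p with hj₀def
  have hj₀ : j₀ < p := Nat.mod_lt _ hp0
  have hall : ∀ α ∈ S, f α % p = j₀ := by
    by_contra hcon
    push_neg at hcon
    obtain ⟨α₁, hα₁, hne⟩ := hcon
    have h0 := class_sum_zero hm hp' hpp hζ (S.map f) hEsum hj₀
    set T : Multiset ℂ := ((S.map f).filter (fun e => e % p = j₀)).map (fun e => ζ ^ e)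
      with hTdef
    have hTle : T ≤ S := by
      rw [hTdef]
      calc ((S.map f).filter (fun e => e % p = j₀)).map (fun e => ζ ^ e)
          ≤ (S.map f).map (fun e => ζ ^ e) := Multiset.map_le_map (Multiset.filter_le _ _)
        _ = S := hES
    have hT0 : T ≠ 0 := by
      rw [hTdef, Ne, Multiset.map_eq_zero]
      intro h
      have hmem : f α₀ ∈ (S.map f).filter (fun e => e % p = j₀) :=
        Multiset.mem_filter.mpr ⟨Multiset.mem_map_of_mem f hα₀, rfl⟩
      rw [h] at hmem
      exact Multiset.notMem_zero _ hmem
    have hTS : T ≠ S := by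
      intro h
      have hc2 : (S.map f).filter (fun e => e % p = j₀) < S.map f := by
        apply lt_of_le_of_ne (Multiset.filter_le _ _)
        intro hfe
        have hmem : f α₁ ∈ (S.map f).filter (fun e => e % p = j₀) := by
          rw [hfe]; exact Multiset.mem_map_of_mem f hα₁
        exact hne (Multiset.mem_filter.mp hmem).2
      have hcard : Multiset.card T < Multiset.card S := by
        rw [hTdef, Multiset.card_map, ← Multiset.card_map f S]
        exact Multiset.card_lt_card hc2
      rw [h] at hcard
      exact lt_irrefl _ hcard
    exact hmin T hTle hT0 hTS h0
  -- rotate by u₁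
  set u₁ : ℂ := ζ ^ (m - j₀) with hu₁def
  have hu₁m : u₁ ^ m = 1 := by
    rw [hu₁def, ← pow_mul, mul_comm, pow_mul, hζ.pow_eq_one, one_pow]
  have hu₁0 : u₁ ≠ 0 := by
    intro h
    rw [h, zero_pow hm.ne'] at hu₁m
    exact zero_ne_one hu₁m
  have hS'roots : ∀ α ∈ S, (u₁ * α) ^ n = 1 := by
    intro α hα
    rw [hu₁def, ← hf α hα, ← pow_add, ← pow_mul, hζ.pow_eq_one_iff_dvd]
    have hfe : f α = p * (f α / p) + j₀ := by
      conv_lhs => rw [← Nat.div_add_mod (f α) p]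
      rw [hall α hα]
    have h1 : m - j₀ + f α = m + p * (f α / p) := by omega
    rw [h1, add_mul]
    refine dvd_add (dvd_mul_right m n) ⟨f α / p, ?_⟩
    rw [hmn]
    ring
  set S' : Multiset ℂ := S.map (fun α => u₁ * α) with hS'def
  have hS'0 : S' ≠ 0 := by
    rw [hS'def, Ne, Multiset.map_eq_zero]
    exact hS
  have hroots' : ∀ β ∈ S', β ^ n = 1 := by
    intro β hβ
    obtain ⟨α, hα, rfl⟩ := Multiset.mem_map.mp hβ
    exact hS'roots α hα
  have hsum' : S'.sum = 0 := by
    have h1 : S'.sum = u₁ * (S.map id).sum := by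
      rw [hS'def]
      simpa using Multiset.sum_map_mul_left (s := S) (a := u₁) (f := id)
    rw [h1, Multiset.map_id, hsum, mul_zero]
  have hcomp1 : ((fun β => u₁⁻¹ * β) ∘ fun α => u₁ * α) = id := by
    funext α
    simp [hu₁0, mul_assoc, inv_mul_cancel₀]
  have hcomp2 : ((fun α => u₁ * α) ∘ fun β => u₁⁻¹ * β) = id := by
    funext β
    simp [hu₁0, mul_assoc, mul_inv_cancel₀]
  have hmin' : ∀ T' : Multiset ℂ, T' ≤ S' → T' ≠ 0 → T' ≠ S' → T'.sum ≠ 0 := by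
    intro T' hle hT0 hTS hTsum
    set T := T'.map (fun β => u₁⁻¹ * β) with hT
    have hTle : T ≤ S := by
      have h1 := Multiset.map_le_map (f := fun β => u₁⁻¹ * β) hle
      rwa [hS'def, Multiset.map_map, hcomp1, Multiset.map_id] at h1
    have hTback : T.map (fun α => u₁ * α) = T' := by
      rw [hT, Multiset.map_map, hcomp2, Multiset.map_id]
    have hT0' : T ≠ 0 := by
      rw [hT, Ne, Multiset.map_eq_zero]
      exact hT0
    have hTS' : T ≠ S := by
      intro h
      apply hTS
      rw [← hTback, h, ← hS'def]
    have hTsum0 : T.sum = 0 := by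
      have h1 : T.sum = u₁⁻¹ * (T'.map id).sum := by
        rw [hT]
        simpa using Multiset.sum_map_mul_left (s := T') (a := u₁⁻¹) (f := id)
      rw [h1, Multiset.map_id, hTsum, mul_zero]
    exact hmin T hTle hT0' hTS' hTsum0
  obtain ⟨u', hu'n, hu'⟩ := ih n hnm hn0 S' hS'0 hroots' hsum' hmin'
  have hrad : n.primeFactors = m.primeFactors := by
    rw [hmn, Nat.primeFactors_mul hn0.ne' hp0.ne', hp'.primeFactors]
    exact (Finset.union_eq_left.mpr
      (Finset.singleton_subset_iff.mpr (Nat.mem_primeFactors.mpr ⟨hp', hpn, hn0.ne'⟩))).symm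
  refine ⟨u' * u₁, ?_, ?_⟩
  · have h2 : (u' ^ n) ^ p = u' ^ m := by rw [← pow_mul, ← hmn]
    rw [mul_pow, ← h2, hu'n, one_pow, hu₁m, one_mul]
  · intro α hα
    have hmem : u₁ * α ∈ S' := Multiset.mem_map_of_mem _ hα
    have h2 := hu' (u₁ * α) hmem
    rw [hrad] at h2
    rwa [mul_assoc]

/-- Corollary 3.2: every minimal vanishing sum of `m`-th roots of unity can be
rotated (multiplied by a single `m`-th root of unity `u`) so that all its terms
become `m₀`-th roots of unity, where `m₀` is the radical of `m`. -/
theorem minimal_vanishing_sum_rotate_to_squarefree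
    (m : ℕ) (hm : 0 < m) (S : Multiset ℂ) (hS : S ≠ 0)
    (hroots : ∀ α ∈ S, α ^ m = 1) (hsum : S.sum = 0)
    (hmin : ∀ T : Multiset ℂ, T ≤ S → T ≠ 0 → T ≠ S → T.sum ≠ 0) :
    ∃ u : ℂ, u ^ m = 1 ∧ ∀ α ∈ S, (u * α) ^ (∏ p ∈ m.primeFactors, p) = 1 :=
  main_aux m hm S hS hroots hsum hmin
end

section
/- Let G = ⟨z⟩ be a multiplicative cyclic group of order m = p^a, where p is prime and a > 0, and let P_1 be the unique subgroup of G of order p. Then ℕG ∩ ker φ = {y·σ(P_1) : y ∈ ℕG}. Equivalently, every vanishing sum of p^a-th roots of unity is a sum of rotations (by p^a-th roots of unity) of the basic vanishing sum 1 + ζ_p + ζ_p² + ... + ζ_p^{p-1} = 0. -/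
noncomputable section

/-- Every element of `zpowers x` (in a finite group) is `x ^ k` with `k < orderOf x`. -/
lemma aux_exists_pow {G : Type} [Group G] [Fintype G] {x g : G}
    (h : g ∈ Subgroup.zpowers x) : ∃ k, k < orderOf x ∧ g = x ^ k := by
  rw [← mem_powers_iff_mem_zpowers] at h
  obtain ⟨n, rfl⟩ := h
  exact ⟨n % orderOf x, Nat.mod_lt _ (orderOf_pos x), (pow_mod_orderOf x n).symm⟩

lemma aux_pow_inj {G : Type} [Group G] [Fintype G] {x : G} {i j : ℕ}
    (hi : i < orderOf x) (hj : j < orderOf x) (h : x ^ i = x ^ j) : i = j := by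
  have h2 := pow_eq_pow_iff_modEq.mp h
  rwa [Nat.ModEq, Nat.mod_eq_of_lt hi, Nat.mod_eq_of_lt hj] at h2

/-- Coefficient of `f(z)` in the group algebra, when `deg f < orderOf z`. -/
lemma aux_aeval_apply {G : Type} [CommGroup G] [Fintype G] (z : G)
    (f : Polynomial ℤ) (hf : f.natDegree < orderOf z) (k : ℕ) (hk : k < orderOf z) :
    (Polynomial.aeval (MonoidAlgebra.of ℤ G z) f).coeff (z ^ k) = f.coeff k := by
  classical
  rw [Polynomial.aeval_eq_sum_range' hf]
  have h1 : ∀ i, (f.coeff i • (MonoidAlgebra.of ℤ G z) ^ i)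
      = MonoidAlgebra.single (z ^ i) (f.coeff i) := by
    intro i
    rw [← map_pow]
    show f.coeff i • MonoidAlgebra.single (z ^ i) (1 : ℤ) = _
    rw [MonoidAlgebra.smul_single', mul_one]
  rw [Finset.sum_congr rfl fun i _ => h1 i]
  rw [MonoidAlgebra.coeff_sum, Finsupp.finset_sum_apply]
  rw [Finset.sum_eq_single k]
  · simp
  · intro i hi hik
    rw [MonoidAlgebra.coeff_single, Finsupp.single_apply, if_neg]
    intro h
    exact hik (aux_pow_inj (Finset.mem_range.mp hi) hk h)
  · intro h
    exact absurd (Finset.mem_range.mpr hk) h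

/-- Theorem 3.3(1): for `G = ⟨z⟩` cyclic of prime-power order `m = p^a` and
`φ : ℤG → ℂ` the ring homomorphism with `φ(z) = ζ` (`ζ` a primitive `m`-th root
of unity), with `P₁` the unique subgroup of order `p`:
`ℕG ∩ ker φ = {y·σ(P₁) : y ∈ ℕG}`; i.e. every vanishing sum of `p^a`-th roots of
unity is a sum of rotations of `1 + ζ_p + ⋯ + ζ_p^{p-1} = 0`. -/
theorem NG_inter_ker_prime_power
    (p a : ℕ) (hp : p.Prime) (ha : 0 < a)
    (G : Type) [CommGroup G] [Fintype G] (hcard : Fintype.card G = p ^ a)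
    (z : G) (hz : ∀ g : G, g ∈ Subgroup.zpowers z)
    (ζ : ℂ) (hζ : IsPrimitiveRoot ζ (p ^ a))
    (φ : MonoidAlgebra ℤ G →+* ℂ) (hφ : φ (MonoidAlgebra.of ℤ G z) = ζ)
    (P₁ : Subgroup G) (hP₁ : Nat.card P₁ = p) :
    {x : MonoidAlgebra ℤ G | (∀ g, 0 ≤ x.coeff g) ∧ φ x = 0} =
      {x : MonoidAlgebra ℤ G | ∃ y : MonoidAlgebra ℤ G, (∀ g, 0 ≤ y.coeff g) ∧
        x = y * grpSum (P₁ : Set G) (Set.toFinite _)} := by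
  classical
  have hm0 : 0 < p ^ a := pow_pos hp.pos a
  have hq0 : 0 < p ^ (a - 1) := pow_pos hp.pos _
  have hordz : orderOf z = p ^ a := by
    rw [orderOf_eq_card_of_forall_mem_zpowers hz, Nat.card_eq_fintype_card, hcard]
  have hmq : p ^ a = p ^ (a - 1) * p := by
    rw [← pow_succ, Nat.sub_add_cancel ha]
  set w := z ^ (p ^ (a - 1)) with hw
  have hordw : orderOf w = p := by
    rw [hw, orderOf_pow, hordz, Nat.gcd_eq_right ⟨p, hmq⟩, hmq,
      Nat.mul_div_cancel_left _ hq0]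
  -- P₁ is the subgroup generated by w
  have hP1 : P₁ = Subgroup.zpowers w := by
    have hle : P₁ ≤ Subgroup.zpowers w := by
      intro g hg
      have hgp : g ^ p = 1 := by
        have h1 : (⟨g, hg⟩ : P₁) ^ Nat.card P₁ = 1 := pow_card_eq_one'
        rw [hP₁] at h1
        have := congrArg (Subtype.val) h1
        simpa using this
      obtain ⟨k, hk, rfl⟩ := aux_exists_pow (hz g)
      rw [← pow_mul] at hgp
      have hdvd : p ^ a ∣ k * p := by
        rw [← hordz]; exact orderOf_dvd_of_pow_eq_one hgp
      have hdvd2 : p ^ (a - 1) ∣ k := by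
        rw [hmq] at hdvd
        exact (Nat.mul_dvd_mul_iff_right hp.pos).mp hdvd
      obtain ⟨t, rfl⟩ := hdvd2
      refine ⟨(t : ℤ), ?_⟩
      show w ^ (t : ℤ) = z ^ (p ^ (a - 1) * t)
      rw [zpow_natCast, hw, ← pow_mul]
    exact Subgroup.eq_of_le_of_card_ge hle (by rw [Nat.card_zpowers, hordw, hP₁])
  -- the cyclotomic polynomial
  set Φ := Polynomial.cyclotomic (p ^ a) ℤ with hΦdef
  have hΦ : Φ = ∑ i ∈ Finset.range p, (Polynomial.X ^ (p ^ (a - 1))) ^ i := by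
    rw [hΦdef, show p ^ a = p ^ ((a - 1) + 1) by rw [Nat.sub_add_cancel ha]]
    exact Polynomial.cyclotomic_prime_pow_eq_geom_sum hp
  -- grpSum P₁ = Φ(z)
  have hσ : grpSum (P₁ : Set G) (Set.toFinite _)
      = Polynomial.aeval (MonoidAlgebra.of ℤ G z) Φ := by
    have h3 : Polynomial.aeval (MonoidAlgebra.of ℤ G z) Φ
        = ∑ i ∈ Finset.range p, MonoidAlgebra.of ℤ G (w ^ i) := by
      rw [hΦ]
      simp only [map_sum, map_pow, Polynomial.aeval_X]
      exact Finset.sum_congr rfl fun i _ => by rw [← map_pow, ← map_pow]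
    rw [h3]
    unfold grpSum
    have h2 : (Set.toFinite (P₁ : Set G)).toFinset
        = (Finset.range p).image (fun i => w ^ i) := by
      ext g
      simp only [Set.Finite.mem_toFinset, SetLike.mem_coe, Finset.mem_image,
        Finset.mem_range]
      constructor
      · intro hg
        rw [hP1] at hg
        obtain ⟨k, hk, rfl⟩ := aux_exists_pow hg
        exact ⟨k, by rwa [hordw] at hk, rfl⟩
      · rintro ⟨i, _, rfl⟩
        rw [hP1]
        refine ⟨(i : ℤ), ?_⟩
        show w ^ (i : ℤ) = w ^ i
        exact zpow_natCast w i
    rw [h2, Finset.sum_image]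
    intro i hi j hj hij
    exact aux_pow_inj (by rwa [hordw, ← Finset.mem_range]) (by rwa [hordw, ← Finset.mem_range]) hij
  -- φ ∘ (aeval z) = aeval ζ
  have hcomp : ∀ f : Polynomial ℤ,
      φ (Polynomial.aeval (MonoidAlgebra.of ℤ G z) f) = Polynomial.aeval ζ f := by
    intro f
    have h1 : φ.comp ((Polynomial.aeval (MonoidAlgebra.of ℤ G z)).toRingHom)
        = (Polynomial.aeval (R := ℤ) ζ).toRingHom := by
      apply Polynomial.ringHom_ext
      · intro n
        simp only [RingHom.coe_comp, Function.comp_apply, AlgHom.toRingHom_eq_coe,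
          RingHom.coe_coe, Polynomial.aeval_C]
        simp [algebraMap_int_eq, map_intCast]
      · simpa using hφ
    exact RingHom.congr_fun h1 f
  have hΦζ : Polynomial.aeval ζ Φ = 0 := by
    rw [hΦdef, Polynomial.aeval_def, Polynomial.eval₂_eq_eval_map,
      algebraMap_int_eq, Polynomial.map_cyclotomic_int]
    exact (hζ.isRoot_cyclotomic hm0)
  ext x
  simp only [Set.mem_setOf_eq]
  constructor
  · rintro ⟨hxnn, hx0⟩
    -- build the polynomial with coefficients of x
    set f : Polynomial ℤ := ∑ k ∈ Finset.range (p ^ a),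
      Polynomial.C (x.coeff (z ^ k)) * Polynomial.X ^ k with hf
    have hfc : ∀ n, f.coeff n = if n ∈ Finset.range (p ^ a) then x.coeff (z ^ n) else 0 := by
      intro n
      rw [hf, Polynomial.finset_sum_coeff]
      simp only [Polynomial.coeff_C_mul, Polynomial.coeff_X_pow, mul_ite, mul_one, mul_zero]
      rw [Finset.sum_ite_eq (Finset.range (p ^ a)) n (fun k => x.coeff (z ^ k))]
    have hdeg : f.natDegree < p ^ a := by
      by_contra h
      push_neg at h
      have hf0 : f ≠ 0 := by
        intro h0
        rw [h0, Polynomial.natDegree_zero] at h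
        omega
      have hlc := Polynomial.leadingCoeff_ne_zero.mpr hf0
      rw [Polynomial.leadingCoeff, hfc, if_neg (by simp; omega)] at hlc
      exact hlc rfl
    have hψf : Polynomial.aeval (MonoidAlgebra.of ℤ G z) f = x := by
      ext g
      obtain ⟨k, hk, rfl⟩ := aux_exists_pow (hz g)
      rw [hordz] at hk
      rw [aux_aeval_apply z f (by rwa [hordz]) k (by rwa [hordz]),
        hfc, if_pos (Finset.mem_range.mpr hk)]
    have haev : Polynomial.aeval ζ f = 0 := by
      rw [← hcomp, hψf, hx0]
    have hdvd : Φ ∣ f := by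
      rw [hΦdef, Polynomial.cyclotomic_eq_minpoly hζ hm0]
      exact minpoly.isIntegrallyClosed_dvd (hζ.isIntegral hm0) haev
    obtain ⟨q, hq⟩ := hdvd
    -- degree bound for q
    have hqdeg : q.natDegree < p ^ (a - 1) := by
      rcases eq_or_ne q 0 with rfl | hq0'
      · simpa using hq0
      have hf0 : f ≠ 0 := by
        rw [hq]
        exact mul_ne_zero (Polynomial.cyclotomic_ne_zero _ ℤ) hq0'
      have hdΦ : Φ.natDegree = p ^ (a - 1) * (p - 1) := by
        rw [hΦdef, Polynomial.natDegree_cyclotomic, Nat.totient_prime_pow hp ha]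
      have h1 : f.natDegree = Φ.natDegree + q.natDegree :=
        by rw [hq, Polynomial.natDegree_mul (Polynomial.cyclotomic_ne_zero _ ℤ) hq0']
      rw [h1, hdΦ] at hdeg
      have h3 : p - 1 + 1 = p := Nat.sub_add_cancel hp.one_le
      have h2 : p ^ a = p ^ (a - 1) * (p - 1) + p ^ (a - 1) := by
        calc p ^ a = p ^ (a - 1) * p := hmq
          _ = p ^ (a - 1) * (p - 1 + 1) := by rw [h3]
          _ = p ^ (a - 1) * (p - 1) + p ^ (a - 1) := by ring
      omega
    have hqz : ∀ k, p ^ (a - 1) ≤ k → q.coeff k = 0 := fun k hk =>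
      Polynomial.coeff_eq_zero_of_natDegree_lt (lt_of_lt_of_le hqdeg hk)
    -- low coefficients of f agree with q
    have hqc : ∀ k, k < p ^ (a - 1) → f.coeff k = q.coeff k := by
      intro k hk
      rw [hq, hΦ, Finset.sum_mul, Polynomial.finset_sum_coeff]
      rw [Finset.sum_eq_single 0]
      · simp
      · intro i hi hi0
        rw [← pow_mul, mul_comm ((Polynomial.X : Polynomial ℤ) ^ _) q,
          Polynomial.coeff_mul_X_pow', if_neg]
        intro hle
        have : p ^ (a - 1) ≤ p ^ (a - 1) * i :=
          Nat.le_mul_of_pos_right _ (Nat.pos_of_ne_zero hi0)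
        omega
      · intro h
        exact absurd (Finset.mem_range.mpr hp.pos) h
    refine ⟨Polynomial.aeval (MonoidAlgebra.of ℤ G z) q, ?_, ?_⟩
    · intro g
      obtain ⟨k, hk, rfl⟩ := aux_exists_pow (hz g)
      have hqm : q.natDegree < orderOf z := by
        rw [hordz]
        exact lt_of_lt_of_le hqdeg (Nat.pow_le_pow_right hp.pos (Nat.sub_le a 1))
      rw [aux_aeval_apply z q hqm k hk]
      rcases lt_or_ge k (p ^ (a - 1)) with h | h
      · rw [← hqc k h, hfc, if_pos]
        · exact hxnn _
        · rw [hordz] at hk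
          exact Finset.mem_range.mpr (lt_of_lt_of_le hk le_rfl)
      · rw [hqz k h]
    · rw [← hψf, hq, map_mul, ← hσ, mul_comm]
  · rintro ⟨y, hynn, rfl⟩
    constructor
    · intro g
      have h1 : grpSum (P₁ : Set G) (Set.toFinite _)
          = ∑ h ∈ (Set.toFinite (P₁ : Set G)).toFinset, MonoidAlgebra.single h (1 : ℤ) := rfl
      rw [h1, Finset.mul_sum, MonoidAlgebra.coeff_sum, Finsupp.finset_sum_apply]
      apply Finset.sum_nonneg
      intro h _
      rw [MonoidAlgebra.coeff_mul_single_apply, mul_one]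
      exact hynn _
    · rw [map_mul, hσ, hcomp, hΦζ, mul_zero]

end
end

section
/- Let G be a multiplicative cyclic group of order m = p·q, where p and q are distinct primes, and let P and Q be the unique subgroups of G of orders p and q respectively. Then ℕG ∩ ker φ = ℕ[P]·σ(Q) + ℕ[Q]·σ(P), where ℕ[P] denotes the set of elements of ℤG supported on P with non-negative coefficients (and similarly ℕ[Q]). -/
noncomputable section

lemma pow_mod_n {ζ : ℂ} {n : ℕ} (h1 : ζ ^ n = 1) (a : ℕ) : ζ ^ a = ζ ^ (a % n) := by
  conv_lhs => rw [← Nat.mod_add_div a n, pow_add, pow_mul, h1, one_pow, mul_one]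

lemma pow_modEq {ζ : ℂ} {n : ℕ} (h1 : ζ ^ n = 1) {a b : ℕ} (h : a ≡ b [MOD n]) :
    ζ ^ a = ζ ^ b := by
  rw [pow_mod_n h1 a, pow_mod_n h1 b, h]

-- character additivity
lemma char_add {n : ℕ} [NeZero n] {ζ : ℂ} (h1 : ζ ^ n = 1) (a b : ZMod n) :
    ζ ^ (a + b).val = ζ ^ a.val * ζ ^ b.val := by
  rw [← pow_add]
  refine pow_modEq h1 ?_
  rw [ZMod.val_add]
  exact Nat.mod_modEq _ n

lemma char_mul_val {n : ℕ} [NeZero n] {ζ : ℂ} (h1 : ζ ^ n = 1) (a b : ZMod n) :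
    ζ ^ (a * b).val = (ζ ^ a.val) ^ b.val := by
  rw [← pow_mul]
  refine pow_modEq h1 ?_
  rw [ZMod.val_mul]
  exact Nat.mod_modEq _ n

lemma sum_char {n : ℕ} [NeZero n] (hn : 1 < n) {ζ : ℂ} (hζ : IsPrimitiveRoot ζ n) :
    ∑ v : ZMod n, ζ ^ v.val = 0 := by
  rw [← hζ.geom_sum_eq_zero hn]
  apply Finset.sum_nbij' (i := fun (v : ZMod n) => v.val) (j := fun k => (k : ZMod n))
  · intro a _; exact Finset.mem_range.mpr (ZMod.val_lt a)
  · intro a _; exact Finset.mem_univ _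
  · intro a _; exact ZMod.natCast_rightInverse a
  · intro k hk; exact ZMod.val_cast_of_lt (Finset.mem_range.mp hk)
  · intro a _; rfl

lemma units_sum (q : ℕ) (hq : q.Prime) [NeZero q] {ζq : ℂ} (hζ : IsPrimitiveRoot ζq q) (u : ZMod q) :
    ∑ t : (ZMod q)ˣ, ζq ^ ((t : ZMod q) * u).val =
      if u = 0 then ((q : ℂ) - 1) else -1 := by
  haveI : Fact q.Prime := ⟨hq⟩
  by_cases hu : u = 0
  · subst hu
    simp only [mul_zero, ZMod.val_zero, pow_zero, if_pos rfl, Finset.sum_const, nsmul_eq_mul,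
      mul_one]
    rw [Finset.card_univ, ZMod.card_units_eq_totient, Nat.totient_prime hq]
    have : (1:ℕ) ≤ q := hq.one_lt.le
    push_cast [this]
    ring
  · rw [if_neg hu]
    -- reindex by multiplication by the unit u
    have hsum1 : ∑ t : (ZMod q)ˣ, ζq ^ ((t : ZMod q) * u).val
        = ∑ t : (ZMod q)ˣ, ζq ^ (t : ZMod q).val := by
      refine Fintype.sum_equiv (Equiv.mulRight (Units.mk0 u hu)) _ _ ?_
      intro t
      rfl
    rw [hsum1]
    -- sum over units = sum over nonzero = total sum - 1
    have htot := sum_char hq.one_lt hζ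
    have hsplit : ∑ v : ZMod q, ζq ^ v.val
        = ζq ^ (0 : ZMod q).val + ∑ v ∈ Finset.univ.erase (0 : ZMod q), ζq ^ v.val :=
      (Finset.add_sum_erase _ _ (Finset.mem_univ 0)).symm
    have herase : ∑ v ∈ Finset.univ.erase (0 : ZMod q), ζq ^ v.val
        = ∑ t : (ZMod q)ˣ, ζq ^ (t : ZMod q).val := by
      apply Finset.sum_nbij' (i := fun (v : ZMod q) => if h : v = 0 then 1 else Units.mk0 v h)
        (j := fun t => (t : ZMod q))
      · intro a _; exact Finset.mem_univ _
      · intro t _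
        exact Finset.mem_erase.mpr ⟨Units.ne_zero t, Finset.mem_univ _⟩
      · intro a ha
        rw [dif_neg (Finset.mem_erase.mp ha).1]
        rfl
      · intro t _
        rw [dif_neg (Units.ne_zero t)]
        exact Units.ext rfl
      · intro a ha
        rw [dif_neg (Finset.mem_erase.mp ha).1]
        rfl
    rw [herase, ZMod.val_zero, pow_zero, htot] at hsplit
    linear_combination (-1 : ℂ) * hsplit

open Polynomial in
lemma constL (p : ℕ) (hp : p.Prime) [NeZero p] (ζp : ℂ) (hζ : IsPrimitiveRoot ζp p)
    (c : ZMod p → ℤ) (h : ∑ i : ZMod p, (c i : ℂ) * ζp ^ i.val = 0) :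
    ∀ i, c i = c 0 := by
  haveI : Fact p.Prime := ⟨hp⟩
  set f : ℚ[X] := ∑ i : ZMod p, C (c i : ℚ) * X ^ i.val with hf
  have hcoeff : ∀ i : ZMod p, f.coeff i.val = (c i : ℚ) := by
    intro i
    rw [hf, finset_sum_coeff]
    rw [Finset.sum_eq_single i]
    · simp
    · intro b _ hb
      rw [coeff_C_mul, coeff_X_pow, if_neg, mul_zero]
      exact fun hval => hb (ZMod.val_injective p hval.symm)
    · simp
  have haev : aeval ζp f = 0 := by
    rw [hf]
    simpa using h
  have hmin : minpoly ℚ ζp ∣ f := minpoly.dvd ℚ ζp haev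
  rw [← cyclotomic_eq_minpoly_rat hζ hp.pos] at hmin
  obtain ⟨g, hg⟩ := hmin
  have hdegc : (cyclotomic p ℚ).natDegree = p - 1 := by
    rw [natDegree_cyclotomic, Nat.totient_prime hp]
  have hdegf : f.natDegree ≤ p - 1 := by
    apply natDegree_sum_le_of_forall_le
    intro i _
    refine le_trans (natDegree_C_mul_le _ _) ?_
    simpa using Nat.le_sub_one_of_lt (ZMod.val_lt i)
  by_cases hfz : f = 0
  · intro i
    have h1 := hcoeff i
    have h2 := hcoeff 0
    rw [hfz] at h1 h2
    simp at h1 h2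
    exact_mod_cast h1.symm.trans h2
  have hgz : g ≠ 0 := by rintro rfl; simp [hg] at hfz
  have hdg : g.natDegree = 0 := by
    have := natDegree_mul (cyclotomic_ne_zero p ℚ) hgz
    rw [← hg, hdegc] at this
    omega
  obtain ⟨r, rfl⟩ := natDegree_eq_zero.mp hdg
  have key : ∀ i : ZMod p, (c i : ℚ) = r := by
    intro i
    rw [← hcoeff i, hg, coeff_mul_C, cyclotomic_prime ℚ p]
    have : (∑ k ∈ Finset.range p, (X : ℚ[X]) ^ k).coeff i.val = 1 := by
      rw [finset_sum_coeff]
      rw [Finset.sum_eq_single i.val]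
      · simp
      · intro b _ hb; rw [coeff_X_pow, if_neg (fun hh => hb hh.symm)]
      · intro hmem; exact absurd (Finset.mem_range.mpr (ZMod.val_lt i)) hmem
    rw [this, one_mul]
  intro i
  exact_mod_cast (key i).trans (key 0).symm

open Polynomial in
lemma coreLL (p q : ℕ) (hp : p.Prime) (hq : q.Prime) (hpq : p ≠ q) [NeZero p] [NeZero q]
    (ζ : ℂ) (hζ : IsPrimitiveRoot ζ (p * q)) (c : ZMod p → ZMod q → ℤ)
    (h : ∑ i : ZMod p, ∑ j : ZMod q, (c i j : ℂ) * (ζ ^ q) ^ i.val * (ζ ^ p) ^ j.val = 0) :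
    ∀ i j, c i j + c 0 0 = c i 0 + c 0 j := by
  haveI : Fact p.Prime := ⟨hp⟩
  haveI : Fact q.Prime := ⟨hq⟩
  have hco : Nat.Coprime p q := (Nat.coprime_primes hp hq).mpr hpq
  have hN : 0 < p * q := Nat.mul_pos hp.pos hq.pos
  have hζp : IsPrimitiveRoot (ζ ^ q) p := hζ.pow hN (mul_comm p q)
  have hζq : IsPrimitiveRoot (ζ ^ p) q := hζ.pow hN rfl
  have h1p : (ζ ^ q) ^ p = 1 := by rw [← pow_mul, mul_comm q p]; exact hζ.pow_eq_one
  have h1q : (ζ ^ p) ^ q = 1 := by rw [← pow_mul]; exact hζ.pow_eq_one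
  -- conjugation: the same relation holds with ζ replaced by ζ^s, s coprime to pq
  have conj : ∀ s : ℕ, s.Coprime (p * q) →
      ∑ i : ZMod p, ∑ j : ZMod q,
        (c i j : ℂ) * ((ζ ^ s) ^ q) ^ i.val * ((ζ ^ s) ^ p) ^ j.val = 0 := by
    intro s hs
    set F : ℚ[X] := ∑ i : ZMod p, ∑ j : ZMod q,
      C (c i j : ℚ) * X ^ (q * i.val + p * j.val) with hF
    have hep : ∀ μ : ℂ, aeval μ F
        = ∑ i : ZMod p, ∑ j : ZMod q, (c i j : ℂ) * (μ ^ q) ^ i.val * (μ ^ p) ^ j.val := by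
      intro μ
      rw [hF]
      simp only [map_sum, map_mul, map_pow, aeval_C, aeval_X, map_intCast]
      refine Finset.sum_congr rfl fun i _ => Finset.sum_congr rfl fun j _ => ?_
      rw [pow_add, pow_mul, pow_mul, ← pow_mul μ q, mul_comm (q : ℕ) i.val, pow_mul,
        ← pow_mul μ p, mul_comm (p : ℕ) j.val, pow_mul]
      push_cast
      ring
    have h0 : aeval ζ F = 0 := by rw [hep]; exact h
    have hdvd : minpoly ℚ ζ ∣ F := minpoly.dvd ℚ ζ h0
    rw [← cyclotomic_eq_minpoly_rat hζ hN] at hdvd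
    obtain ⟨g, hg⟩ := hdvd
    have hroot : aeval ((ζ : ℂ) ^ s) (cyclotomic (p * q) ℚ) = 0 := by
      have hprim := hζ.pow_of_coprime s hs
      have hr := hprim.isRoot_cyclotomic hN
      rw [aeval_def, eval₂_eq_eval_map, map_cyclotomic]
      exact hr
    have : aeval ((ζ : ℂ) ^ s) F = 0 := by
      rw [hg, map_mul, hroot, zero_mul]
    rw [hep] at this
    exact this
  -- the key linear relations
  have key : ∀ (j1 : ZMod q) (i : ZMod p),
      (q : ℤ) * c i j1 - (∑ j : ZMod q, c i j)
        = (q : ℤ) * c 0 j1 - (∑ j : ZMod q, c 0 j) := by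
    intro j1
    have E : ∀ t : (ZMod q)ˣ, ∑ i : ZMod p, ∑ j : ZMod q,
        (c i j : ℂ) * (ζ ^ q) ^ i.val * (ζ ^ p) ^ (((t : ZMod q) * j).val) = 0 := by
      intro t
      obtain ⟨s, hs1, hs2⟩ := Nat.chineseRemainder hco 1 ((t : ZMod q)).val
      have hsp : Nat.Coprime s p := by
        rw [Nat.coprime_comm, hp.coprime_iff_not_dvd]
        intro hdvd
        have h01 : (1 : ℕ) ≡ 0 [MOD p] := hs1.symm.trans (Nat.modEq_zero_iff_dvd.mpr hdvd)
        have hp1 : p ∣ 1 := Nat.modEq_zero_iff_dvd.mp h01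
        exact hp.one_lt.ne' (Nat.dvd_one.mp hp1)
      have hsq : Nat.Coprime s q := by
        rw [Nat.coprime_comm, hq.coprime_iff_not_dvd]
        intro hdvd
        have h02 : ((t : ZMod q)).val ≡ 0 [MOD q] := hs2.symm.trans (Nat.modEq_zero_iff_dvd.mpr hdvd)
        have : q ∣ ((t : ZMod q)).val := Nat.modEq_zero_iff_dvd.mp h02
        have hv0 : ((t : ZMod q)).val = 0 := Nat.eq_zero_of_dvd_of_lt this (ZMod.val_lt _)
        have : (t : ZMod q) = 0 := by
          rwa [ZMod.val_eq_zero] at hv0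
        exact (t.ne_zero) this
      have hcop : Nat.Coprime s (p * q) := Nat.Coprime.mul_right hsp hsq
      have hconj := conj s hcop
      have e1 : ((ζ ^ s) ^ q) = ζ ^ q := by
        rw [← pow_mul, mul_comm s q, pow_mul]
        calc (ζ ^ q) ^ s = (ζ ^ q) ^ 1 := pow_modEq h1p hs1
        _ = ζ ^ q := pow_one _
      have e2 : ∀ j : ZMod q, ((ζ ^ s) ^ p) ^ j.val = (ζ ^ p) ^ (((t : ZMod q) * j).val) := by
        intro j
        rw [char_mul_val h1q]
        congr 1
        rw [← pow_mul, mul_comm s p, pow_mul]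
        exact pow_modEq h1q hs2
      rw [← hconj]
      refine Finset.sum_congr rfl fun i _ => Finset.sum_congr rfl fun j _ => ?_
      rw [e1, e2 j]
    -- multiply the conjugated relations by characters and sum over units
    have hT : ∑ t : (ZMod q)ˣ, ((ζ ^ p) ^ (((t : ZMod q) * (-j1)).val) *
        ∑ i : ZMod p, ∑ j : ZMod q,
          (c i j : ℂ) * (ζ ^ q) ^ i.val * (ζ ^ p) ^ (((t : ZMod q) * j).val)) = 0 :=
      Finset.sum_eq_zero fun t _ => by rw [E t, mul_zero]
    have hswap : ∑ t : (ZMod q)ˣ, ((ζ ^ p) ^ (((t : ZMod q) * (-j1)).val) *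
        ∑ i : ZMod p, ∑ j : ZMod q,
          (c i j : ℂ) * (ζ ^ q) ^ i.val * (ζ ^ p) ^ (((t : ZMod q) * j).val))
        = ∑ i : ZMod p, ∑ j : ZMod q, (c i j : ℂ) * (ζ ^ q) ^ i.val *
            (∑ t : (ZMod q)ˣ, (ζ ^ p) ^ (((t : ZMod q) * (j - j1)).val)) := by
      simp only [Finset.mul_sum]
      rw [Finset.sum_comm]
      refine Finset.sum_congr rfl fun i _ => ?_
      rw [Finset.sum_comm]
      refine Finset.sum_congr rfl fun j _ => ?_
      refine Finset.sum_congr rfl fun t _ => ?_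
      have : (ζ ^ p) ^ (((t : ZMod q) * (j - j1)).val)
          = (ζ ^ p) ^ (((t : ZMod q) * (-j1)).val) * (ζ ^ p) ^ (((t : ZMod q) * j).val) := by
        rw [← char_add h1q]
        congr 1
        ring
      rw [this]
      ring
    have hunits : ∀ j : ZMod q, (∑ t : (ZMod q)ˣ, (ζ ^ p) ^ (((t : ZMod q) * (j - j1)).val))
        = if j = j1 then ((q : ℂ) - 1) else -1 := by
      intro j
      rw [units_sum q hq hζq (j - j1)]
      by_cases hj : j = j1
      · rw [if_pos (by rw [hj, sub_self]), if_pos hj]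
      · rw [if_neg (fun hh => hj (sub_eq_zero.mp hh)), if_neg hj]
    have hsumt : ∑ i : ZMod p, ((((q : ℤ) * c i j1 - ∑ j : ZMod q, c i j) : ℤ) : ℂ)
        * (ζ ^ q) ^ i.val = 0 := by
      rw [← hT, hswap]
      refine Finset.sum_congr rfl fun i _ => ?_
      have : ∑ j : ZMod q, (c i j : ℂ) * (ζ ^ q) ^ i.val *
          (∑ t : (ZMod q)ˣ, (ζ ^ p) ^ (((t : ZMod q) * (j - j1)).val))
          = (∑ j : ZMod q, (c i j : ℂ) * (if j = j1 then ((q : ℂ) - 1) else -1))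
            * (ζ ^ q) ^ i.val := by
        rw [Finset.sum_mul]
        refine Finset.sum_congr rfl fun j _ => ?_
        rw [hunits j]
        ring
      rw [this]
      congr 1
      have hii : ∑ j : ZMod q, (c i j : ℂ) * (if j = j1 then ((q : ℂ) - 1) else -1)
          = ∑ j : ZMod q, ((if j = j1 then (c i j : ℂ) * q else 0) - (c i j : ℂ)) := by
        refine Finset.sum_congr rfl fun j _ => ?_
        by_cases hj : j = j1
        · rw [if_pos hj, if_pos hj]; ring
        · rw [if_neg hj, if_neg hj]; ring
      rw [hii, Finset.sum_sub_distrib, Finset.sum_ite_eq' Finset.univ j1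
        (fun j => (c i j : ℂ) * q), if_pos (Finset.mem_univ _)]
      push_cast
      ring
    have := constL p hp (ζ ^ q) hζp (fun i => (q : ℤ) * c i j1 - ∑ j : ZMod q, c i j) hsumt
    intro i
    exact this i
  intro i j
  have k1 := key j i
  have k2 := key 0 i
  have hmul : (q : ℤ) * (c i j + c 0 0) = (q : ℤ) * (c i 0 + c 0 j) := by ring_nf; linarith [k1, k2]
  have hq0 : (q : ℤ) ≠ 0 := by exact_mod_cast hq.ne_zero
  exact mul_left_cancel₀ hq0 hmul


-- reindexing a sum over a cyclic subgroup by ZMod n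
lemma subgroup_sum {G : Type} [CommGroup G] [Fintype G] (g0 : G) (n : ℕ) [NeZero n]
    (hord : orderOf g0 = n) {M : Type*} [AddCommMonoid M] (f : G → M)
    (hs : ((Subgroup.zpowers g0 : Subgroup G) : Set G).Finite) :
    ∑ h ∈ hs.toFinset, f h = ∑ i : ZMod n, f (g0 ^ i.val) := by
  symm
  apply Finset.sum_bij (i := fun (i : ZMod n) _ => g0 ^ i.val)
  · intro a _
    rw [Set.Finite.mem_toFinset]
    exact Subgroup.pow_mem _ (Subgroup.mem_zpowers g0) _
  · intro a _ b _ hab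
    have := pow_eq_pow_iff_modEq.mp hab
    rw [hord] at this
    have h1 : a.val % n = b.val % n := this
    rw [Nat.mod_eq_of_lt (ZMod.val_lt a), Nat.mod_eq_of_lt (ZMod.val_lt b)] at h1
    exact ZMod.val_injective n h1
  · intro b hb
    rw [Set.Finite.mem_toFinset] at hb
    obtain ⟨k, hk⟩ := mem_powers_iff_mem_zpowers.mpr hb
    refine ⟨(k : ZMod n), Finset.mem_univ _, ?_⟩
    rw [← hk]
    apply pow_eq_pow_iff_modEq.mpr
    rw [hord, ZMod.val_natCast]
    exact Nat.mod_modEq k n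
  · intro a _
    rfl

/-- Theorem 3.3(2): for `G` cyclic of order `m = p·q` (`p ≠ q` primes), with
`P, Q` the unique subgroups of orders `p, q`, one has
`ℕG ∩ ker φ = ℕ[P]·σ(Q) + ℕ[Q]·σ(P)`, where `ℕ[P]` is the set of elements of
`ℤG` supported on `P` with non-negative coefficients (similarly `ℕ[Q]`). -/
theorem NG_inter_ker_two_primes
    (p q : ℕ) (hp : p.Prime) (hq : q.Prime) (hpq : p ≠ q)
    (G : Type) [CommGroup G] [Fintype G] (hcard : Fintype.card G = p * q)
    (z : G) (hz : ∀ g : G, g ∈ Subgroup.zpowers z)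
    (ζ : ℂ) (hζ : IsPrimitiveRoot ζ (p * q))
    (φ : MonoidAlgebra ℤ G →+* ℂ) (hφ : φ (MonoidAlgebra.of ℤ G z) = ζ)
    (P Q : Subgroup G) (hP : Nat.card P = p) (hQ : Nat.card Q = q) :
    {x : MonoidAlgebra ℤ G | (∀ g, 0 ≤ x.coeff g) ∧ φ x = 0} =
      {x : MonoidAlgebra ℤ G | ∃ u v : MonoidAlgebra ℤ G,
        (∀ g, 0 ≤ u.coeff g) ∧ (∀ g ∉ P, u.coeff g = 0) ∧
        (∀ g, 0 ≤ v.coeff g) ∧ (∀ g ∉ Q, v.coeff g = 0) ∧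
        x = u * grpSum (Q : Set G) (Set.toFinite _) +
            v * grpSum (P : Set G) (Set.toFinite _)} := by
  classical
  haveI : NeZero p := ⟨hp.ne_zero⟩
  haveI : NeZero q := ⟨hq.ne_zero⟩
  have hco : Nat.Coprime p q := (Nat.coprime_primes hp hq).mpr hpq
  have hN : 0 < p * q := Nat.mul_pos hp.pos hq.pos
  have hζp : IsPrimitiveRoot (ζ ^ q) p := hζ.pow hN (mul_comm p q)
  have hζq : IsPrimitiveRoot (ζ ^ p) q := hζ.pow hN rfl
  -- order of z
  have hzt : Subgroup.zpowers z = ⊤ := by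
    rw [eq_top_iff]; intro g _; exact hz g
  have hordz : orderOf z = p * q := by
    rw [← Nat.card_zpowers, hzt, Subgroup.card_top, Nat.card_eq_fintype_card, hcard]
  set gP := z ^ q with hgP
  set gQ := z ^ p with hgQ
  have hordP : orderOf gP = p := by
    rw [hgP, orderOf_pow, hordz, Nat.gcd_eq_right (dvd_mul_left q p),
      Nat.mul_div_cancel _ hq.pos]
  have hordQ : orderOf gQ = q := by
    rw [hgQ, orderOf_pow, hordz, Nat.gcd_eq_right (dvd_mul_right p q),
      Nat.mul_div_cancel_left _ hp.pos]
  have hgP1 : gP ^ p = 1 := hordP ▸ pow_orderOf_eq_one gP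
  have hgQ1 : gQ ^ q = 1 := hordQ ▸ pow_orderOf_eq_one gQ
  -- P and Q are the cyclic subgroups generated by gP, gQ
  have gen : ∀ (a b : ℕ), 0 < a → b.Prime → orderOf z = b * a →
      ∀ (H : Subgroup G), Nat.card H = b → H = Subgroup.zpowers (z ^ a) := by
    intro a b ha hb hord H hH
    have hordH : orderOf (z ^ a) = b := by
      rw [orderOf_pow, hord, Nat.gcd_eq_right (dvd_mul_left a b),
        Nat.mul_div_cancel _ ha]
    have hle : H ≤ Subgroup.zpowers (z ^ a) := by
      intro x hx
      obtain ⟨k, hk0⟩ := hz x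
      have hk : z ^ k = x := hk0
      have hap : x ^ b = 1 := by
        have h1 : (⟨x, hx⟩ : H) ^ b = 1 := by
          rw [← hH]; exact pow_card_eq_one'
        have := congrArg (Subtype.val) h1
        simpa using this
      have hzkp : z ^ (k * (b : ℤ)) = 1 := by
        rw [zpow_mul, hk, zpow_natCast, hap]
      have hdvd : ((b * a : ℕ) : ℤ) ∣ k * b := by
        rw [← hord]; exact orderOf_dvd_iff_zpow_eq_one.mpr hzkp
      obtain ⟨m, hm⟩ := hdvd
      have hkm : k = (a : ℤ) * m := by
        have hb0 : (b : ℤ) ≠ 0 := by exact_mod_cast hb.ne_zero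
        have : k * (b : ℤ) = ((a : ℤ) * m) * (b : ℤ) := by push_cast at hm ⊢; linarith
        exact mul_right_cancel₀ hb0 this
      refine ⟨m, ?_⟩
      show (z ^ a) ^ m = x
      rw [← hk, hkm, ← zpow_natCast z a, ← zpow_mul]
    have hcard' : Nat.card (Subgroup.zpowers (z ^ a)) ≤ Nat.card H := by
      rw [Nat.card_zpowers, hordH, hH]
    exact Subgroup.eq_of_le_of_card_ge hle hcard'
  have hPz : P = Subgroup.zpowers gP := gen q p hq.pos hp hordz P hP
  have hQz : Q = Subgroup.zpowers gQ := gen p q hp.pos hq (by rw [hordz, mul_comm]) Q hQ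
  clear hP hQ
  subst hPz
  subst hQz
  -- φ on group elements
  have hφpow : ∀ k : ℕ, φ (MonoidAlgebra.of ℤ G (z ^ k)) = ζ ^ k := by
    intro k
    rw [map_pow, map_pow, hφ]
  have hφP : ∀ n : ℕ, φ (MonoidAlgebra.of ℤ G (gP ^ n)) = (ζ ^ q) ^ n := by
    intro n
    rw [map_pow, map_pow, hgP, hφpow q]
  have hφQ : ∀ n : ℕ, φ (MonoidAlgebra.of ℤ G (gQ ^ n)) = (ζ ^ p) ^ n := by
    intro n
    rw [map_pow, map_pow, hgQ, hφpow p]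
  -- coefficients of grpSum
  have hgrp_apply : ∀ (s : Set G) (hs : s.Finite) (g : G),
      (grpSum s hs).coeff g = if g ∈ s then 1 else 0 := by
    intro s hs g
    rw [grpSum, MonoidAlgebra.coeff_sum, Finsupp.finset_sum_apply]
    simp only [MonoidAlgebra.of_apply, MonoidAlgebra.coeff_single, Finsupp.single_apply]
    by_cases hgs : g ∈ s
    · simp [Finset.sum_ite_eq', Set.Finite.mem_toFinset, hgs]
    · simp [Finset.sum_ite_eq', Set.Finite.mem_toFinset, hgs]
  -- nonnegativity of products
  have hmul_nonneg : ∀ u w : MonoidAlgebra ℤ G, (∀ g, 0 ≤ u.coeff g) → (∀ g, 0 ≤ w.coeff g) →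
      ∀ g, 0 ≤ (u * w).coeff g := by
    intro u w hu hw g
    rw [MonoidAlgebra.coeff_mul]
    apply Finset.sum_nonneg
    intro a _
    apply Finset.sum_nonneg
    intro b _
    dsimp only
    split
    · exact mul_nonneg (hu a) (hw b)
    · exact le_refl 0
  -- φ kills the subgroup sums
  have hφσP : φ (grpSum ((Subgroup.zpowers gP : Subgroup G) : Set G) (Set.toFinite _)) = 0 := by
    rw [grpSum, map_sum,
      subgroup_sum gP p hordP (fun h => φ (MonoidAlgebra.of ℤ G h)) (Set.toFinite _)]
    simp only [hφP]
    exact sum_char hp.one_lt hζp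
  have hφσQ : φ (grpSum ((Subgroup.zpowers gQ : Subgroup G) : Set G) (Set.toFinite _)) = 0 := by
    rw [grpSum, map_sum,
      subgroup_sum gQ q hordQ (fun h => φ (MonoidAlgebra.of ℤ G h)) (Set.toFinite _)]
    simp only [hφQ]
    exact sum_char hq.one_lt hζq
  -- nonneg coefficients of grpSum
  have hσ_nonneg : ∀ (s : Set G) (hs : s.Finite) (g : G), 0 ≤ (grpSum s hs).coeff g := by
    intro s hs g
    rw [hgrp_apply]
    split <;> norm_num
  -- the bijection (i, j) ↦ gP^i * gQ^j
  have hψinj : Function.Injective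
      (fun ij : ZMod p × ZMod q => gP ^ ij.1.val * gQ ^ ij.2.val) := by
    rintro ⟨i, j⟩ ⟨i', j'⟩ hψ
    simp only at hψ
    have hw : gP ^ ((i.val : ℤ) - i'.val) = gQ ^ ((j'.val : ℤ) - j.val) := by
      rw [zpow_natCast_sub_natCast, zpow_natCast_sub_natCast, div_eq_div_iff_mul_eq_mul]
      exact hψ.trans (mul_comm _ _)
    set w : G := gP ^ ((i.val : ℤ) - i'.val) with hwdef
    have hwp : w ^ p = 1 := by
      rw [hwdef, ← zpow_natCast (gP ^ _), ← zpow_mul, mul_comm, zpow_mul, zpow_natCast, hgP1,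
        one_zpow]
    have hwq : w ^ q = 1 := by
      rw [hw, ← zpow_natCast (gQ ^ _), ← zpow_mul, mul_comm, zpow_mul, zpow_natCast,
        hgQ1, one_zpow]
    have hw1 : w = 1 := by
      have h1 : orderOf w ∣ p := orderOf_dvd_of_pow_eq_one hwp
      have h2 : orderOf w ∣ q := orderOf_dvd_of_pow_eq_one hwq
      have := Nat.dvd_gcd h1 h2
      rw [hco] at this
      exact orderOf_eq_one_iff.mp (Nat.dvd_one.mp this)
    have hi : i = i' := by
      have hd : ((orderOf gP : ℕ) : ℤ) ∣ ((i.val : ℤ) - i'.val) :=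
        orderOf_dvd_iff_zpow_eq_one.mpr hw1
      rw [hordP] at hd
      have : ((i.val : ℤ) - i'.val) = 0 := by
        refine Int.eq_zero_of_abs_lt_dvd hd ?_
        have h1 := ZMod.val_lt i
        have h2 := ZMod.val_lt i'
        rw [abs_lt]
        constructor <;> [skip; skip] <;> push_cast <;> omega
      have : i.val = i'.val := by omega
      exact ZMod.val_injective p this
    have hj : j = j' := by
      have hw1' : gQ ^ ((j'.val : ℤ) - j.val) = 1 := by rw [← hw]; exact hw1
      have hd : ((orderOf gQ : ℕ) : ℤ) ∣ ((j'.val : ℤ) - j.val) :=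
        orderOf_dvd_iff_zpow_eq_one.mpr hw1'
      rw [hordQ] at hd
      have : ((j'.val : ℤ) - j.val) = 0 := by
        refine Int.eq_zero_of_abs_lt_dvd hd ?_
        have h1 := ZMod.val_lt j
        have h2 := ZMod.val_lt j'
        rw [abs_lt]
        constructor <;> [skip; skip] <;> push_cast <;> omega
      have : j.val = j'.val := by omega
      exact ZMod.val_injective q this
    rw [hi, hj]
  have hψbij : Function.Bijective
      (fun ij : ZMod p × ZMod q => gP ^ ij.1.val * gQ ^ ij.2.val) := by
    rw [Fintype.bijective_iff_injective_and_card]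
    refine ⟨hψinj, ?_⟩
    rw [Fintype.card_prod, ZMod.card, ZMod.card, hcard]
  -- representation of elements of the group ring
  have hxrep : ∀ x : MonoidAlgebra ℤ G, x = ∑ g : G, MonoidAlgebra.single g (x.coeff g) := by
    intro x
    ext g'
    rw [MonoidAlgebra.coeff_sum, Finsupp.finset_sum_apply]
    simp only [MonoidAlgebra.coeff_single, Finsupp.single_apply]
    simp [Finset.sum_ite_eq']
  have hφsingle : ∀ (g : G) (n : ℤ),
      φ (MonoidAlgebra.single g n) = n * φ (MonoidAlgebra.of ℤ G g) := by
    intro g n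
    have hsm : MonoidAlgebra.single g n = n • MonoidAlgebra.of ℤ G g := by
      rw [MonoidAlgebra.of_apply, MonoidAlgebra.smul_single]
      norm_num
    rw [hsm, map_zsmul, zsmul_eq_mul]
  have hφψ : ∀ (i : ZMod p) (j : ZMod q),
      φ (MonoidAlgebra.of ℤ G (gP ^ i.val * gQ ^ j.val))
        = (ζ ^ q) ^ i.val * (ζ ^ p) ^ j.val := by
    intro i j
    rw [map_mul, map_mul, hφP, hφQ]
  have pinj : ∀ a b : ZMod p, gP ^ a.val = gP ^ b.val → a = b := by
    intro a b hab
    have := pow_eq_pow_iff_modEq.mp hab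
    rw [hordP] at this
    have h1 : a.val % p = b.val % p := this
    rw [Nat.mod_eq_of_lt (ZMod.val_lt a), Nat.mod_eq_of_lt (ZMod.val_lt b)] at h1
    exact ZMod.val_injective p h1
  have qinj : ∀ a b : ZMod q, gQ ^ a.val = gQ ^ b.val → a = b := by
    intro a b hab
    have := pow_eq_pow_iff_modEq.mp hab
    rw [hordQ] at this
    have h1 : a.val % q = b.val % q := this
    rw [Nat.mod_eq_of_lt (ZMod.val_lt a), Nat.mod_eq_of_lt (ZMod.val_lt b)] at h1
    exact ZMod.val_injective q h1
  have hσQ_eq : grpSum ((Subgroup.zpowers gQ : Subgroup G) : Set G) (Set.toFinite _)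
      = ∑ j : ZMod q, MonoidAlgebra.of ℤ G (gQ ^ j.val) := by
    rw [grpSum]
    exact subgroup_sum gQ q hordQ _ _
  have hσP_eq : grpSum ((Subgroup.zpowers gP : Subgroup G) : Set G) (Set.toFinite _)
      = ∑ i : ZMod p, MonoidAlgebra.of ℤ G (gP ^ i.val) := by
    rw [grpSum]
    exact subgroup_sum gP p hordP _ _
  ext x
  simp only [Set.mem_setOf_eq]
  constructor
  · rintro ⟨hxnn, hφx⟩
    set c : ZMod p → ZMod q → ℤ := fun i j => x.coeff (gP ^ i.val * gQ ^ j.val) with hc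
    have hgsum := Fintype.sum_bijective _ hψbij
      (fun ij : ZMod p × ZMod q => φ (MonoidAlgebra.single
        (gP ^ ij.1.val * gQ ^ ij.2.val) (x.coeff (gP ^ ij.1.val * gQ ^ ij.2.val))))
      (fun g => φ (MonoidAlgebra.single g (x.coeff g))) (fun ij => rfl)
    have hsum : ∑ i : ZMod p, ∑ j : ZMod q,
        (c i j : ℂ) * (ζ ^ q) ^ i.val * (ζ ^ p) ^ j.val = 0 := by
      calc ∑ i : ZMod p, ∑ j : ZMod q, (c i j : ℂ) * (ζ ^ q) ^ i.val * (ζ ^ p) ^ j.val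
          = ∑ ij : ZMod p × ZMod q, φ (MonoidAlgebra.single
              (gP ^ ij.1.val * gQ ^ ij.2.val) (x.coeff (gP ^ ij.1.val * gQ ^ ij.2.val))) := by
            rw [Fintype.sum_prod_type]
            refine Finset.sum_congr rfl fun i _ => Finset.sum_congr rfl fun j _ => ?_
            rw [hφsingle, hφψ]
            rw [hc]
            ring
        _ = ∑ g : G, φ (MonoidAlgebra.single g (x.coeff g)) := hgsum
        _ = φ x := by rw [← map_sum, ← hxrep x]
        _ = 0 := hφx
    have hrel := coreLL p q hp hq hpq ζ hζ c hsum
    have hne : (Finset.univ : Finset (ZMod q)).Nonempty := ⟨0, Finset.mem_univ 0⟩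
    set μ : ℤ := Finset.univ.inf' hne (fun j => c 0 j) with hμ
    obtain ⟨j0, -, hj0⟩ := Finset.exists_mem_eq_inf' hne (fun j => c 0 j)
    have hμle : ∀ j : ZMod q, μ ≤ c 0 j := fun j => Finset.inf'_le _ (Finset.mem_univ j)
    set u : MonoidAlgebra ℤ G :=
      ∑ i : ZMod p, MonoidAlgebra.single (gP ^ i.val) (c i 0 - c 0 0 + μ) with hu
    set v : MonoidAlgebra ℤ G :=
      ∑ j : ZMod q, MonoidAlgebra.single (gQ ^ j.val) (c 0 j - μ) with hv
    have hu_at : ∀ i0 : ZMod p, u.coeff (gP ^ i0.val) = c i0 0 - c 0 0 + μ := by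
      intro i0
      rw [hu, MonoidAlgebra.coeff_sum, Finsupp.finset_sum_apply]
      simp only [MonoidAlgebra.coeff_single, Finsupp.single_apply]
      rw [Finset.sum_eq_single i0]
      · rw [if_pos rfl]
      · intro b _ hb
        rw [if_neg (fun hbe => hb (pinj b i0 hbe))]
      · intro hmem
        exact absurd (Finset.mem_univ i0) hmem
    have hv_at : ∀ j0' : ZMod q, v.coeff (gQ ^ j0'.val) = c 0 j0' - μ := by
      intro j0'
      rw [hv, MonoidAlgebra.coeff_sum, Finsupp.finset_sum_apply]
      simp only [MonoidAlgebra.coeff_single, Finsupp.single_apply]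
      rw [Finset.sum_eq_single j0']
      · rw [if_pos rfl]
      · intro b _ hb
        rw [if_neg (fun hbe => hb (qinj b j0' hbe))]
      · intro hmem
        exact absurd (Finset.mem_univ j0') hmem
    have hu_notP : ∀ g ∉ Subgroup.zpowers gP, u.coeff g = 0 := by
      intro g hg
      rw [hu, MonoidAlgebra.coeff_sum, Finsupp.finset_sum_apply]
      apply Finset.sum_eq_zero
      intro i _
      rw [MonoidAlgebra.coeff_single, Finsupp.single_apply, if_neg]
      intro he
      exact hg (he ▸ Subgroup.pow_mem _ (Subgroup.mem_zpowers gP) _)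
    have hv_notQ : ∀ g ∉ Subgroup.zpowers gQ, v.coeff g = 0 := by
      intro g hg
      rw [hv, MonoidAlgebra.coeff_sum, Finsupp.finset_sum_apply]
      apply Finset.sum_eq_zero
      intro j _
      rw [MonoidAlgebra.coeff_single, Finsupp.single_apply, if_neg]
      intro he
      exact hg (he ▸ Subgroup.pow_mem _ (Subgroup.mem_zpowers gQ) _)
    have hmemrep : ∀ g ∈ Subgroup.zpowers gP, ∃ i : ZMod p, gP ^ i.val = g := by
      intro g hg
      obtain ⟨k, hk⟩ := mem_powers_iff_mem_zpowers.mpr hg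
      refine ⟨(k : ZMod p), ?_⟩
      rw [← hk]
      apply pow_eq_pow_iff_modEq.mpr
      rw [hordP, ZMod.val_natCast]
      exact Nat.mod_modEq k p
    have hmemrepQ : ∀ g ∈ Subgroup.zpowers gQ, ∃ j : ZMod q, gQ ^ j.val = g := by
      intro g hg
      obtain ⟨k, hk⟩ := mem_powers_iff_mem_zpowers.mpr hg
      refine ⟨(k : ZMod q), ?_⟩
      rw [← hk]
      apply pow_eq_pow_iff_modEq.mpr
      rw [hordQ, ZMod.val_natCast]
      exact Nat.mod_modEq k q
    have hu_nonneg : ∀ g, 0 ≤ u.coeff g := by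
      intro g
      by_cases hg : g ∈ Subgroup.zpowers gP
      · obtain ⟨i, hi⟩ := hmemrep g hg
        rw [← hi, hu_at i]
        have h1 := hrel i j0
        have h2 := hxnn (gP ^ i.val * gQ ^ j0.val)
        have h3 : (0 : ℤ) ≤ c i j0 := h2
        omega
      · rw [hu_notP g hg]
    have hv_nonneg : ∀ g, 0 ≤ v.coeff g := by
      intro g
      by_cases hg : g ∈ Subgroup.zpowers gQ
      · obtain ⟨j, hj⟩ := hmemrepQ g hg
        rw [← hj, hv_at j]
        have := hμle j
        omega
      · rw [hv_notQ g hg]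
    refine ⟨u, v, hu_nonneg, hu_notP, hv_nonneg, hv_notQ, ?_⟩
    -- the decomposition identity
    have hx2 : x = ∑ i : ZMod p, ∑ j : ZMod q,
        MonoidAlgebra.single (gP ^ i.val * gQ ^ j.val) (c i j) := by
      have hgsum2 := Fintype.sum_bijective _ hψbij
        (fun ij : ZMod p × ZMod q => MonoidAlgebra.single
          (gP ^ ij.1.val * gQ ^ ij.2.val) (x.coeff (gP ^ ij.1.val * gQ ^ ij.2.val)))
        (fun g => MonoidAlgebra.single g (x.coeff g)) (fun ij => rfl)
      calc x = ∑ g : G, MonoidAlgebra.single g (x.coeff g) := hxrep x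
        _ = ∑ ij : ZMod p × ZMod q, MonoidAlgebra.single
              (gP ^ ij.1.val * gQ ^ ij.2.val) (x.coeff (gP ^ ij.1.val * gQ ^ ij.2.val)) := hgsum2.symm
        _ = ∑ i : ZMod p, ∑ j : ZMod q,
              MonoidAlgebra.single (gP ^ i.val * gQ ^ j.val) (c i j) := by
            rw [Fintype.sum_prod_type]
    rw [hx2, hσQ_eq, hσP_eq, hu, hv]
    rw [Finset.sum_mul_sum, Finset.sum_mul_sum]
    rw [Finset.sum_comm (s := (Finset.univ : Finset (ZMod q)))
      (t := (Finset.univ : Finset (ZMod p)))]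
    rw [← Finset.sum_add_distrib]
    refine Finset.sum_congr rfl fun i _ => ?_
    rw [← Finset.sum_add_distrib]
    refine Finset.sum_congr rfl fun j _ => ?_
    rw [MonoidAlgebra.of_apply, MonoidAlgebra.of_apply, MonoidAlgebra.single_mul_single,
      MonoidAlgebra.single_mul_single, mul_one, mul_one,
      mul_comm (gQ ^ j.val) (gP ^ i.val), ← MonoidAlgebra.single_add]
    congr 1
    have := hrel i j
    omega
  · rintro ⟨u, v, hun, huP, hvn, hvQ, rfl⟩
    constructor
    · intro g
      have h1 := hmul_nonneg u (grpSum ((Subgroup.zpowers gQ : Subgroup G) : Set G)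
        (Set.toFinite _)) hun (hσ_nonneg _ _) g
      have h2 := hmul_nonneg v (grpSum ((Subgroup.zpowers gP : Subgroup G) : Set G)
        (Set.toFinite _)) hvn (hσ_nonneg _ _) g
      rw [MonoidAlgebra.coeff_add, Finsupp.add_apply]
      exact add_nonneg h1 h2
    · rw [map_add, map_mul, map_mul, hφσQ, hφσP, mul_zero, mul_zero, add_zero]

end
end

section
/- Let m be an even positive integer. If m is a power of 2, then W(m) = 2ℕ, the set of even natural numbers. If m is not a power of 2 and p is the smallest odd prime dividing m, then W(m) = {n ∈ ℕ : n is even} ∪ {n ∈ ℕ : n ≥ p}, i.e. W(m) = {0, 2, 4, ..., p − 1, p, p + 1, p + 2, ...}. -/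
set_option synthInstance.maxHeartbeats 1000000
set_option maxHeartbeats 2000000

open IntermediateField Module Polynomial Finset

/-- `n ∈ W(m)` : there exists a vanishing sum of `n` many `m`-th roots of unity. -/
def IsVanishingWeight (m n : ℕ) : Prop :=
  ∃ α : Fin n → ℂ, (∀ i, α i ^ m = 1) ∧ ∑ i, α i = 0

open IntermediateField Module Polynomial

lemma finrank_Q_adjoin_primroot {x : ℂ} {k : ℕ} (hk : 0 < k) (hx : IsPrimitiveRoot x k) :
    finrank ℚ ℚ⟮x⟯ = Nat.totient k := by
  have hint : IsIntegral ℚ x := (hx.isIntegral hk).tower_top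
  rw [adjoin.finrank hint, ← Polynomial.cyclotomic_eq_minpoly_rat hx hk,
    Polynomial.natDegree_cyclotomic]

lemma minpoly_natDegree_mul {θ η ζ : ℂ} {M' P M : ℕ} (hM' : 0 < M') (hP : 0 < P) (hM : 0 < M)
    (hθ : IsPrimitiveRoot θ M') (hη : IsPrimitiveRoot η P) (hζ : IsPrimitiveRoot ζ M)
    (hθζ : θ ∈ ℚ⟮ζ⟯) (hηζ : η ∈ ℚ⟮ζ⟯) (hζmem : ζ ∈ ℚ⟮θ, η⟯) :
    (minpoly ℚ⟮θ⟯ η).natDegree * Nat.totient M' = Nat.totient M := by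
  set K := ℚ⟮θ⟯
  have hηint : IsIntegral K η := ((hη.isIntegral hP).tower_top (A := ℚ)).tower_top
  have h1 : finrank K K⟮η⟯ = (minpoly K η).natDegree := adjoin.finrank hηint
  have h2 : (K⟮η⟯).restrictScalars ℚ = ℚ⟮θ, η⟯ := adjoin_simple_adjoin_simple ℚ θ η
  have h3 : ℚ⟮θ, η⟯ = ℚ⟮ζ⟯ := by
    apply le_antisymm
    · apply adjoin_le_iff.2
      rintro y hy
      simp only [Set.mem_insert_iff, Set.mem_singleton_iff] at hy
      rcases hy with rfl | rfl <;> assumption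
    · apply adjoin_le_iff.2
      rintro y hy
      simp only [Set.mem_singleton_iff] at hy
      subst hy; exact hζmem
  have h4 : finrank ℚ ((K⟮η⟯).restrictScalars ℚ) = finrank ℚ K⟮η⟯ := rfl
  have h5 : finrank ℚ K * finrank K K⟮η⟯ = finrank ℚ K⟮η⟯ := Module.finrank_mul_finrank ℚ K K⟮η⟯
  have h6 : finrank ℚ K = Nat.totient M' := finrank_Q_adjoin_primroot hM' hθ
  have h7 : finrank ℚ ((K⟮η⟯).restrictScalars ℚ) = Nat.totient M := by
    rw [h2, h3]
    exact finrank_Q_adjoin_primroot hM hζ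
  rw [← h1, mul_comm, ← h6]
  rw [h5, ← h4, h7]

open Polynomial

lemma aux_indep {K L : Type*} [Field K] [Field L] [Algebra K L] {x : L}
    (hx : IsIntegral K x) {d : ℕ} (hd : d ≤ (minpoly K x).natDegree) (T : ℕ → K)
    (h : ∑ r ∈ Finset.range d, (algebraMap K L (T r)) * x ^ r = 0) :
    ∀ r < d, T r = 0 := by
  set g : K[X] := ∑ r ∈ Finset.range d, C (T r) * X ^ r with hg
  have hcoeff : ∀ r, r < d → g.coeff r = T r := by
    intro r hr
    rw [hg, Polynomial.finset_sum_coeff]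
    rw [Finset.sum_eq_single r]
    · simp
    · intro b _ hb
      simp [coeff_C_mul, coeff_X_pow, Ne.symm hb]
    · intro hr'; exact absurd (Finset.mem_range.2 hr) hr'
  have haev : aeval x g = 0 := by
    rw [hg]
    simpa [aeval_def, eval₂_finset_sum] using h
  have hg0 : g = 0 := by
    by_contra hne
    have h1 : (minpoly K x).degree ≤ g.degree := minpoly.degree_le_of_ne_zero K x hne haev
    have h2 : g.degree < d := by
      apply lt_of_le_of_lt (Polynomial.degree_sum_le _ _)
      rw [Finset.sup_lt_iff (by exact_mod_cast WithBot.bot_lt_coe d)]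
      intro b hb
      exact lt_of_le_of_lt (degree_C_mul_X_pow_le _ _) (by exact_mod_cast Finset.mem_range.1 hb)
    have h3 : (minpoly K x).degree = ((minpoly K x).natDegree : WithBot ℕ) :=
      (degree_eq_natDegree (minpoly.ne_zero hx)).trans rfl
    rw [h3] at h1
    have := lt_of_le_of_lt h1 h2
    exact absurd this (by exact_mod_cast not_lt.2 (by exact_mod_cast hd))
  intro r hr
  rw [← hcoeff r hr, hg0, coeff_zero]

lemma fiber_partition {M P M' : ℕ} {R F : ℕ → ℕ}
    (hR : ∀ e ∈ Finset.range M, R e ∈ Finset.range P)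
    (hF : ∀ e ∈ Finset.range M, F e ∈ Finset.range M')
    {β : Type*} [AddCommMonoid β] (v : ℕ → β) :
    ∑ e ∈ Finset.range M, v e =
      ∑ r ∈ Finset.range P, ∑ f ∈ Finset.range M',
        ∑ e ∈ (Finset.range M).filter (fun e => R e = r ∧ F e = f), v e := by
  rw [← Finset.sum_fiberwise_of_maps_to (g := fun e => (R e, F e))
      (t := Finset.range P ×ˢ Finset.range M')
      (fun e he => Finset.mem_product.2 ⟨hR e he, hF e he⟩) v]
  rw [Finset.sum_product]
  refine Finset.sum_congr rfl (fun r _ => Finset.sum_congr rfl (fun f _ => ?_))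
  congr 1
  ext e
  simp [Prod.ext_iff]

def dfib (M : ℕ) (R F : ℕ → ℕ) (c : ℕ → ℤ) (r f : ℕ) : ℤ :=
  ∑ e ∈ (Finset.range M).filter (fun e => R e = r ∧ F e = f), c e

lemma dfib_sum {M P M' : ℕ} {R F : ℕ → ℕ}
    (hR : ∀ e ∈ Finset.range M, R e ∈ Finset.range P)
    (hF : ∀ e ∈ Finset.range M, F e ∈ Finset.range M') (c : ℕ → ℤ) :
    ∑ r ∈ Finset.range P, ∑ f ∈ Finset.range M', dfib M R F c r f
      = ∑ e ∈ Finset.range M, c e :=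
  (fiber_partition hR hF c).symm

lemma dfib_abs {M P M' : ℕ} {R F : ℕ → ℕ}
    (hR : ∀ e ∈ Finset.range M, R e ∈ Finset.range P)
    (hF : ∀ e ∈ Finset.range M, F e ∈ Finset.range M') (c : ℕ → ℤ) :
    ∑ r ∈ Finset.range P, ∑ f ∈ Finset.range M', |dfib M R F c r f|
      ≤ ∑ e ∈ Finset.range M, |c e| := by
  rw [fiber_partition hR hF (fun e => |c e|)]
  refine Finset.sum_le_sum (fun r _ => Finset.sum_le_sum (fun f _ => ?_))
  exact Finset.abs_sum_le_sum_abs _ _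

lemma dfib_relation {M P M' : ℕ} {R F : ℕ → ℕ}
    (hR : ∀ e ∈ Finset.range M, R e ∈ Finset.range P)
    (hF : ∀ e ∈ Finset.range M, F e ∈ Finset.range M') (c : ℕ → ℤ)
    {ζ η θ : ℂ} (hmul : ∀ e ∈ Finset.range M, ζ ^ e = η ^ (R e) * θ ^ (F e))
    (hsum : ∑ e ∈ Finset.range M, (c e : ℂ) * ζ ^ e = 0) :
    ∑ r ∈ Finset.range P, η ^ r *
      (∑ f ∈ Finset.range M', (dfib M R F c r f : ℂ) * θ ^ f) = 0 := by
  rw [← hsum, fiber_partition hR hF (fun e => (c e : ℂ) * ζ ^ e)]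
  refine Finset.sum_congr rfl (fun r hr => ?_)
  rw [Finset.mul_sum]
  refine Finset.sum_congr rfl (fun f hf => ?_)
  rw [dfib, Int.cast_sum, Finset.sum_mul, Finset.mul_sum]
  refine Finset.sum_congr rfl (fun e he => ?_)
  rw [Finset.mem_filter] at he
  obtain ⟨heM, hRe, hFe⟩ := he
  rw [hmul e heM, hRe, hFe]
  ring

lemma odd_mem_of_odd_sum {ι : Type*} {s : Finset ι} {g : ι → ℤ} (h : Odd (∑ i ∈ s, g i)) :
    ∃ i ∈ s, Odd (g i) := by
  by_contra hc
  push_neg at hc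
  simp only [Int.not_odd_iff_even] at hc
  exact (Int.not_odd_iff_even.2 (Finset.even_sum (f := g) hc)) h

lemma pow_mod {x : ℂ} {k : ℕ} (h : x ^ k = 1) (a : ℕ) : x ^ (a % k) = x ^ a := by
  conv_rhs => rw [← Nat.mod_add_div a k, pow_add, pow_mul, h, one_pow, mul_one]

lemma adjoin_sum_eq (θ : ℂ) (d : ℕ → ℤ) (M' : ℕ) :
    algebraMap ℚ⟮θ⟯ ℂ (∑ f ∈ Finset.range M',
        (d f : ℚ⟮θ⟯) * (IntermediateField.AdjoinSimple.gen ℚ θ) ^ f)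
    = ∑ f ∈ Finset.range M', (d f : ℂ) * θ ^ f := by
  rw [map_sum]
  refine Finset.sum_congr rfl fun f _ => ?_
  rw [map_mul, map_pow, IntermediateField.AdjoinSimple.algebraMap_gen, map_intCast]

lemma key : ∀ M : ℕ, 0 < M → ∀ ζ : ℂ, IsPrimitiveRoot ζ M → ∀ c : ℕ → ℤ,
    (∑ e ∈ Finset.range M, (c e : ℂ) * ζ ^ e) = 0 →
    Odd (∑ e ∈ Finset.range M, c e) →
    ∃ q, q.Prime ∧ Odd q ∧ q ∣ M ∧ (q : ℤ) ≤ ∑ e ∈ Finset.range M, |c e| := by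
  intro M
  induction M using Nat.strong_induction_on with
  | _ M IH =>
  intro hM ζ hζ c hsum hodd
  by_cases hM1 : M = 1
  · subst hM1
    simp only [Finset.sum_range_one, pow_zero, mul_one] at hsum hodd
    have hc0 : c 0 = 0 := by exact_mod_cast hsum
    rw [hc0] at hodd
    exact absurd hodd (by simp)
  -- M ≥ 2
  have hp : M.minFac.Prime := Nat.minFac_prime hM1
  set p := M.minFac with hp_def
  obtain ⟨M', hMM'⟩ : p ∣ M := Nat.minFac_dvd M
  have hM'pos : 0 < M' := by
    rcases Nat.eq_zero_or_pos M' with h | h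
    · rw [h, mul_zero] at hMM'; omega
    · exact h
  have hM'lt : M' < M := by
    rw [hMM']
    calc M' = 1 * M' := (one_mul M').symm
    _ < p * M' := by exact (Nat.mul_lt_mul_right hM'pos).2 hp.one_lt
  have hθ : IsPrimitiveRoot (ζ ^ p) M' := hζ.pow hM hMM'
  by_cases hpM' : p ∣ M'
  · -- Case A : p divides M/p
    set R : ℕ → ℕ := fun e => e % p with hR_def
    set F : ℕ → ℕ := fun e => e / p with hF_def
    have hR : ∀ e ∈ Finset.range M, R e ∈ Finset.range p :=
      fun e _ => Finset.mem_range.2 (Nat.mod_lt _ hp.pos)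
    have hF : ∀ e ∈ Finset.range M, F e ∈ Finset.range M' := by
      intro e he
      rw [Finset.mem_range] at he ⊢
      exact Nat.div_lt_of_lt_mul (by omega)
    have hmul : ∀ e ∈ Finset.range M, ζ ^ e = ζ ^ (R e) * (ζ ^ p) ^ (F e) := by
      intro e _
      rw [← pow_mul, ← pow_add]
      congr 1
      exact (Nat.mod_add_div e p).symm
    set d := dfib M R F c with hd_def
    set K := ℚ⟮ζ ^ p⟯ with hK_def
    have hdeg : (minpoly K ζ).natDegree = p := by
      have h1 := minpoly_natDegree_mul hM'pos hM hM hθ hζ hζ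
        (pow_mem (IntermediateField.mem_adjoin_simple_self ℚ ζ) p)
        (IntermediateField.mem_adjoin_simple_self ℚ ζ)
        (IntermediateField.subset_adjoin ℚ _ (by simp))
      have h2 : Nat.totient M = p * Nat.totient M' := by
        rw [hMM', Nat.totient_mul_of_prime_of_dvd hp hpM']
      rw [h2] at h1
      exact Nat.eq_of_mul_eq_mul_right (Nat.totient_pos.2 hM'pos) h1
    set t : ℕ → K := fun r => ∑ f ∈ Finset.range M',
      (d r f : K) * (IntermediateField.AdjoinSimple.gen ℚ (ζ ^ p)) ^ f with ht_def
    have halg : ∀ r, algebraMap K ℂ (t r) = ∑ f ∈ Finset.range M', (d r f : ℂ) * (ζ ^ p) ^ f :=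
      fun r => adjoin_sum_eq (ζ ^ p) (d r) M'
    have hint : IsIntegral K ζ := ((hζ.isIntegral hM).tower_top (A := ℚ)).tower_top
    have hrel := dfib_relation hR hF c hmul hsum
    have hvanish : ∀ r < p, t r = 0 := by
      refine aux_indep hint (le_of_eq hdeg.symm) t ?_
      rw [← hrel]
      refine Finset.sum_congr rfl fun r _ => ?_
      rw [halg, mul_comm]
    have hT : ∀ r < p, ∑ f ∈ Finset.range M', (d r f : ℂ) * (ζ ^ p) ^ f = 0 := by
      intro r hr
      rw [← halg, hvanish r hr, map_zero]
    have hodd' : Odd (∑ r ∈ Finset.range p, ∑ f ∈ Finset.range M', d r f) := by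
      rw [hd_def, dfib_sum hR hF c]; exact hodd
    obtain ⟨r0, hr0mem, hr0odd⟩ := odd_mem_of_odd_sum hodd'
    obtain ⟨q, hq, hqodd, hqdvd, hqle⟩ := IH M' hM'lt hM'pos (ζ ^ p) hθ (d r0)
      (hT r0 (Finset.mem_range.1 hr0mem)) hr0odd
    refine ⟨q, hq, hqodd, hqdvd.trans ⟨p, by rw [hMM', mul_comm]⟩, le_trans hqle ?_⟩
    calc ∑ f ∈ Finset.range M', |d r0 f|
        ≤ ∑ r ∈ Finset.range p, ∑ f ∈ Finset.range M', |d r f| :=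
          Finset.single_le_sum (f := fun r => ∑ f ∈ Finset.range M', |d r f|)
            (fun i _ => Finset.sum_nonneg fun _ _ => abs_nonneg _) hr0mem
      _ ≤ ∑ e ∈ Finset.range M, |c e| := dfib_abs hR hF c
  by_cases hp2 : p = 2
  · -- Case B : M = 2 * M' with M' odd
    have hM2 : M = 2 * M' := by rw [← hp2]; exact hMM'
    have hM'odd : ¬ 2 ∣ M' := by rw [← hp2]; exact hpM'
    have hM'o : M' % 2 = 1 := by omega
    have hζ0 : ζ ≠ 0 := hζ.ne_zero hM.ne'
    set η := ζ ^ M' with hη_def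
    have hη2 : η ^ 2 = 1 := by
      rw [hη_def, ← pow_mul, mul_comm, ← hM2, hζ.pow_eq_one]
    have hηne : η ≠ 1 := hζ.pow_ne_one_of_pos_of_lt hM'pos.ne' hM'lt
    have hηneg : η = -1 := by
      rcases mul_eq_zero.1 (show (η - 1) * (η + 1) = 0 by linear_combination hη2) with h | h
      · exact absurd (sub_eq_zero.1 h) hηne
      · exact eq_neg_of_add_eq_zero_left h
    set θ := ζ ^ 2 with hθB_def
    have hθprim : IsPrimitiveRoot θ M' := by rw [hθB_def, ← hp2]; exact hθ
    set R : ℕ → ℕ := fun e => e % 2 with hRB_def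
    set F : ℕ → ℕ := fun e => if e % 2 = 0 then e / 2 else ((e + M') % M) / 2 with hFB_def
    have hR : ∀ e ∈ Finset.range M, R e ∈ Finset.range 2 :=
      fun e _ => Finset.mem_range.2 (Nat.mod_lt _ (by norm_num))
    have hF : ∀ e ∈ Finset.range M, F e ∈ Finset.range M' := by
      intro e he
      rw [Finset.mem_range] at he ⊢
      rw [hFB_def]
      by_cases h : e % 2 = 0
      · simp only [h, if_true]; omega
      · simp only [h, if_false]
        have := Nat.mod_lt (e + M') (show 0 < M by omega)
        omega
    have hmul : ∀ e ∈ Finset.range M, ζ ^ e = η ^ (R e) * θ ^ (F e) := by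
      intro e _
      rw [hRB_def, hFB_def]
      by_cases h : e % 2 = 0
      · simp only [h, if_true, pow_zero, one_mul, hθB_def, ← pow_mul]
        congr 1
        omega
      · simp only [h, if_false]
        have h1 : e % 2 = 1 := by omega
        have hx2 : ((e + M') % M) % 2 = 0 := by
          rw [Nat.mod_mod_of_dvd _ ⟨M', hM2⟩]
          omega
        rw [h1, pow_one, hθB_def, ← pow_mul,
          show 2 * (((e + M') % M) / 2) = (e + M') % M by omega,
          pow_mod hζ.pow_eq_one (e + M'), hη_def, ← pow_add,
          show M' + (e + M') = e + M by omega, pow_add, hζ.pow_eq_one, mul_one]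
    set d := dfib M R F c with hdB_def
    have hrel := dfib_relation hR hF c hmul hsum
    rw [Finset.sum_range_succ, Finset.sum_range_one, pow_zero, one_mul, pow_one, hηneg] at hrel
    -- hrel : T0 + (-1) * T1 = 0
    set c' : ℕ → ℤ := fun f => d 0 f - d 1 f with hc'_def
    have hsum'' : ∑ f ∈ Finset.range M', (c' f : ℂ) * θ ^ f = 0 := by
      have : ∀ f, (c' f : ℂ) * θ ^ f = (d 0 f : ℂ) * θ ^ f - (d 1 f : ℂ) * θ ^ f := by
        intro f; rw [hc'_def]; push_cast; ring
      rw [Finset.sum_congr rfl (fun f _ => this f), Finset.sum_sub_distrib]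
      linear_combination hrel
    have htot := dfib_sum hR hF c
    rw [Finset.sum_range_succ, Finset.sum_range_one] at htot
    have hodd'' : Odd (∑ f ∈ Finset.range M', c' f) := by
      have heq : ∑ f ∈ Finset.range M', c' f =
          (∑ f ∈ Finset.range M', d 0 f + ∑ f ∈ Finset.range M', d 1 f)
            - 2 * ∑ f ∈ Finset.range M', d 1 f := by
        rw [hc'_def, Finset.sum_sub_distrib]; ring
      rw [heq, htot]
      exact hodd.sub_even (even_two_mul _)
    obtain ⟨q, hq, hqodd, hqdvd, hqle⟩ := IH M' hM'lt hM'pos θ hθprim c' hsum'' hodd''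
    refine ⟨q, hq, hqodd, hqdvd.trans ⟨2, by rw [hM2, mul_comm]⟩, le_trans hqle ?_⟩
    calc ∑ f ∈ Finset.range M', |c' f|
        ≤ ∑ f ∈ Finset.range M', (|d 0 f| + |d 1 f|) :=
          Finset.sum_le_sum (fun f _ => abs_sub _ _)
      _ = ∑ r ∈ Finset.range 2, ∑ f ∈ Finset.range M', |d r f| := by
          rw [Finset.sum_add_distrib, Finset.sum_range_succ, Finset.sum_range_one]
      _ ≤ ∑ e ∈ Finset.range M, |c e| := dfib_abs hR hF c
  · -- Case C : p odd, p does not divide M'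
    have hpodd : Odd p := hp.odd_of_ne_two hp2
    have hpge : 2 ≤ p := hp.two_le
    have hcop : Nat.Coprime p M' := (Nat.Prime.coprime_iff_not_dvd hp).2 hpM'
    have hζ0 : ζ ≠ 0 := hζ.ne_zero hM.ne'
    have hbez : (p : ℤ) * Nat.gcdA p M' + (M' : ℤ) * Nat.gcdB p M' = 1 := by
      have h := Nat.gcd_eq_gcd_ab p M'
      rw [Nat.Coprime.gcd_eq_one hcop] at h
      exact_mod_cast h.symm
    set A := Nat.gcdA p M' with hA_def
    set B := Nat.gcdB p M' with hB_def
    set θ := ζ ^ ((p : ℤ) * A) with hθC_def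
    set η := ζ ^ ((M' : ℤ) * B) with hηC_def
    have hζM : ζ ^ (M : ℤ) = 1 := by
      rw [zpow_natCast]; exact hζ.pow_eq_one
    have hθM' : θ ^ M' = 1 := by
      rw [hθC_def, ← zpow_natCast, ← zpow_mul,
        show (p:ℤ) * A * M' = M * A by rw [hMM']; push_cast; ring,
        zpow_mul, hζM, one_zpow]
    have hηp : η ^ p = 1 := by
      rw [hηC_def, ← zpow_natCast, ← zpow_mul,
        show (M':ℤ) * B * p = M * B by rw [hMM']; push_cast; ring,
        zpow_mul, hζM, one_zpow]
    have hηθ : η * θ = ζ := by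
      rw [hηC_def, hθC_def, ← zpow_add₀ hζ0,
        show (M':ℤ) * B + (p:ℤ) * A = 1 by linarith [hbez], zpow_one]
    have hθprim : IsPrimitiveRoot θ M' := by
      refine ⟨hθM', fun l hl => ?_⟩
      have hζl : ζ ^ l = η ^ l := by rw [← hηθ, mul_pow, hl, mul_one]
      have hlp : ζ ^ (l * p) = 1 := by
        rw [pow_mul, hζl, ← pow_mul, mul_comm, pow_mul, hηp, one_pow]
      have hdvd : M ∣ l * p := hζ.dvd_of_pow_eq_one _ hlp
      rw [hMM', mul_comm l p] at hdvd
      exact (Nat.mul_dvd_mul_iff_left hp.pos).1 hdvd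
    have hηprim : IsPrimitiveRoot η p := by
      refine ⟨hηp, fun l hl => ?_⟩
      have hζl : ζ ^ l = θ ^ l := by rw [← hηθ, mul_pow, hl, one_mul]
      have hlM : ζ ^ (l * M') = 1 := by
        rw [pow_mul, hζl, ← pow_mul, mul_comm, pow_mul, hθM', one_pow]
      have hdvd : M ∣ l * M' := hζ.dvd_of_pow_eq_one _ hlM
      rw [hMM', mul_comm p M'] at hdvd
      rw [mul_comm l M'] at hdvd
      exact (Nat.mul_dvd_mul_iff_left hM'pos).1 hdvd
    set R : ℕ → ℕ := fun e => e % p with hRC_def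
    set F : ℕ → ℕ := fun e => e % M' with hFC_def
    have hR : ∀ e ∈ Finset.range M, R e ∈ Finset.range p :=
      fun e _ => Finset.mem_range.2 (Nat.mod_lt _ hp.pos)
    have hF : ∀ e ∈ Finset.range M, F e ∈ Finset.range M' :=
      fun e _ => Finset.mem_range.2 (Nat.mod_lt _ hM'pos)
    have hmul : ∀ e ∈ Finset.range M, ζ ^ e = η ^ (R e) * θ ^ (F e) := by
      intro e _
      rw [hRC_def, hFC_def, ← hηθ, mul_pow, pow_mod hηp, pow_mod hθM']
    set d := dfib M R F c with hdC_def
    set K := ℚ⟮θ⟯ with hKC_def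
    have memθ : θ ∈ ℚ⟮ζ⟯ := by
      rw [hθC_def]; exact zpow_mem (IntermediateField.mem_adjoin_simple_self ℚ ζ) _
    have memη : η ∈ ℚ⟮ζ⟯ := by
      rw [hηC_def]; exact zpow_mem (IntermediateField.mem_adjoin_simple_self ℚ ζ) _
    have memζ : ζ ∈ ℚ⟮θ, η⟯ := by
      rw [← hηθ]
      exact mul_mem (IntermediateField.subset_adjoin ℚ _ (by simp))
        (IntermediateField.subset_adjoin ℚ _ (by simp))
    have hdeg : (minpoly K η).natDegree = p - 1 := by
      have h1 := minpoly_natDegree_mul hM'pos hp.pos hM hθprim hηprim hζ memθ memη memζ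
      have h2 : Nat.totient M = (p - 1) * Nat.totient M' := by
        rw [hMM', Nat.totient_mul hcop, Nat.totient_prime hp]
      rw [h2] at h1
      exact Nat.eq_of_mul_eq_mul_right (Nat.totient_pos.2 hM'pos) h1
    set t : ℕ → K := fun r => ∑ f ∈ Finset.range M',
      (d r f : K) * (IntermediateField.AdjoinSimple.gen ℚ θ) ^ f with htC_def
    have halg : ∀ r, algebraMap K ℂ (t r) = ∑ f ∈ Finset.range M', (d r f : ℂ) * θ ^ f :=
      fun r => adjoin_sum_eq θ (d r) M'
    have hint : IsIntegral K η := ((hηprim.isIntegral hp.pos).tower_top (A := ℚ)).tower_top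
    have hrel := dfib_relation hR hF c hmul hsum
    have hgeom : ∑ r ∈ Finset.range p, η ^ r = 0 := hηprim.geom_sum_eq_zero hp.one_lt
    have hsrel : ∑ r ∈ Finset.range (p-1), algebraMap K ℂ (t r - t (p-1)) * η ^ r = 0 := by
      have e1 : ∑ r ∈ Finset.range (p-1), algebraMap K ℂ (t r) * η ^ r
          + algebraMap K ℂ (t (p-1)) * η ^ (p-1) = 0 := by
        rw [← Finset.sum_range_succ (fun r => algebraMap K ℂ (t r) * η ^ r) (p-1),
          (show p - 1 + 1 = p by omega), ← hrel]
        exact Finset.sum_congr rfl fun r _ => by rw [halg r]; ring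
      have e2 : ∑ r ∈ Finset.range (p-1), η ^ r + η ^ (p-1) = 0 := by
        rw [← Finset.sum_range_succ (fun r => η ^ r) (p-1),
          (show p - 1 + 1 = p by omega)]
        exact hgeom
      have expand : ∀ r, algebraMap K ℂ (t r - t (p-1)) * η ^ r
          = algebraMap K ℂ (t r) * η ^ r - algebraMap K ℂ (t (p-1)) * η ^ r := by
        intro r; rw [map_sub]; ring
      rw [Finset.sum_congr rfl (fun r _ => expand r), Finset.sum_sub_distrib,
        ← Finset.mul_sum]
      linear_combination e1 - algebraMap K ℂ (t (p-1)) * e2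
    have hteq : ∀ r < p, t r = t (p-1) := by
      have h0 := aux_indep hint hdeg.ge (fun r => t r - t (p-1)) hsrel
      intro r hr
      rcases lt_or_eq_of_le (Nat.lt_succ_iff.1 (by omega : r < (p-1)+1)) with h | h
      · exact sub_eq_zero.1 (h0 r h)
      · rw [h]
    by_cases h0 : t (p - 1) = 0
    · have hT : ∀ r < p, ∑ f ∈ Finset.range M', (d r f : ℂ) * θ ^ f = 0 := by
        intro r hr
        rw [← halg r, hteq r hr, h0, map_zero]
      have hodd' : Odd (∑ r ∈ Finset.range p, ∑ f ∈ Finset.range M', d r f) := by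
        rw [hdC_def, dfib_sum hR hF c]; exact hodd
      obtain ⟨r0, hr0mem, hr0odd⟩ := odd_mem_of_odd_sum hodd'
      obtain ⟨q, hq, hqodd, hqdvd, hqle⟩ := IH M' hM'lt hM'pos θ hθprim (d r0)
        (hT r0 (Finset.mem_range.1 hr0mem)) hr0odd
      refine ⟨q, hq, hqodd, hqdvd.trans ⟨p, by rw [hMM', mul_comm]⟩, le_trans hqle ?_⟩
      calc ∑ f ∈ Finset.range M', |d r0 f|
          ≤ ∑ r ∈ Finset.range p, ∑ f ∈ Finset.range M', |d r f| :=
            Finset.single_le_sum (f := fun r => ∑ f ∈ Finset.range M', |d r f|)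
              (fun i _ => Finset.sum_nonneg fun _ _ => abs_nonneg _) hr0mem
        _ ≤ ∑ e ∈ Finset.range M, |c e| := dfib_abs hR hF c
    · refine ⟨p, hp, hpodd, ⟨M', hMM'⟩, ?_⟩
      have hone : ∀ r ∈ Finset.range p, (1:ℤ) ≤ ∑ f ∈ Finset.range M', |d r f| := by
        intro r hr
        by_contra hlt
        push_neg at hlt
        have hz : ∑ f ∈ Finset.range M', |d r f| = 0 :=
          le_antisymm (by omega) (Finset.sum_nonneg fun _ _ => abs_nonneg _)
        have hall : ∀ f ∈ Finset.range M', d r f = 0 := by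
          intro f hf
          exact abs_eq_zero.1
            ((Finset.sum_eq_zero_iff_of_nonneg (fun _ _ => abs_nonneg _)).1 hz f hf)
        have ht0 : t r = 0 := by
          rw [htC_def]
          exact Finset.sum_eq_zero fun f hf => by rw [hall f hf]; simp
        exact h0 ((hteq r (Finset.mem_range.1 hr)) ▸ ht0)
      calc (p:ℤ) = ∑ _r ∈ Finset.range p, (1:ℤ) := by simp
        _ ≤ ∑ r ∈ Finset.range p, ∑ f ∈ Finset.range M', |d r f| := Finset.sum_le_sum hone
        _ ≤ ∑ e ∈ Finset.range M, |c e| := dfib_abs hR hF c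

lemma vw_zero (m : ℕ) : IsVanishingWeight m 0 :=
  ⟨fun i => i.elim0, fun i => i.elim0, by simp⟩

lemma vw_add {m a b : ℕ} (ha : IsVanishingWeight m a) (hb : IsVanishingWeight m b) :
    IsVanishingWeight m (a + b) := by
  obtain ⟨α, hα, hαs⟩ := ha
  obtain ⟨β, hβ, hβs⟩ := hb
  refine ⟨Fin.append α β, ?_, ?_⟩
  · intro i
    refine Fin.addCases (motive := fun i => Fin.append α β i ^ m = 1) (fun j => ?_) (fun j => ?_) i
    · simpa using hα j
    · simpa using hβ j
  · rw [Fin.sum_univ_add]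
    simp only [Fin.append_left, Fin.append_right]
    rw [hαs, hβs, add_zero]

lemma vw_dvd {m d : ℕ} (hd : d ∣ m) (h1 : 1 < d) : IsVanishingWeight m d := by
  have hζ := Complex.isPrimitiveRoot_exp d (by omega)
  set ω := Complex.exp (2 * Real.pi * Complex.I / d) with hω
  obtain ⟨k, hk⟩ := hd
  refine ⟨fun i => ω ^ (i : ℕ), fun i => ?_, ?_⟩
  · rw [← pow_mul, hk, show (i:ℕ) * (d * k) = d * ((i:ℕ) * k) by ring, pow_mul,
      hζ.pow_eq_one, one_pow]
  · rw [Fin.sum_univ_eq_sum_range (fun e => ω ^ e) d]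
    exact hζ.geom_sum_eq_zero h1

lemma vw_even {m n : ℕ} (h2 : 2 ∣ m) (hn : Even n) : IsVanishingWeight m n := by
  obtain ⟨k, rfl⟩ := hn
  induction k with
  | zero => exact vw_zero m
  | succ k ih =>
      rw [show (k+1)+(k+1) = (k+k)+2 by ring]
      exact vw_add ih (vw_dvd h2 one_lt_two)

lemma vw_of_even_or_ge {m n p : ℕ} (h2 : 2 ∣ m) (hp : p.Prime) (hpodd : Odd p)
    (hpdvd : p ∣ m) (h : Even n ∨ p ≤ n) : IsVanishingWeight m n := by
  rcases h with h | h
  · exact vw_even h2 h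
  · by_cases he : Even n
    · exact vw_even h2 he
    · have hno : Odd n := Nat.not_even_iff_odd.1 he
      have hsub : Even (n - p) := Nat.Odd.sub_odd hno hpodd
      rw [show n = p + (n - p) by omega]
      exact vw_add (vw_dvd hpdvd hp.one_lt) (vw_even h2 hsub)

lemma exists_odd_prime_of_odd {m n : ℕ} (hm : 0 < m) (h : IsVanishingWeight m n)
    (hn : Odd n) : ∃ q, q.Prime ∧ Odd q ∧ q ∣ m ∧ q ≤ n := by
  obtain ⟨α, hα, hαs⟩ := h
  haveI : NeZero m := ⟨hm.ne'⟩
  have hζ : IsPrimitiveRoot (Complex.exp (2 * Real.pi * Complex.I / m)) m :=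
    Complex.isPrimitiveRoot_exp m hm.ne'
  set ζ := Complex.exp (2 * Real.pi * Complex.I / m) with hζdef
  have hex : ∀ i, ∃ e, e < m ∧ ζ ^ e = α i := fun i => by
    obtain ⟨e, he, heq⟩ := hζ.eq_pow_of_pow_eq_one (hα i)
    exact ⟨e, he, heq⟩
  choose E hElt hEeq using hex
  have hEmem : ∀ i ∈ (Finset.univ : Finset (Fin n)), E i ∈ Finset.range m :=
    fun i _ => Finset.mem_range.2 (hElt i)
  set c : ℕ → ℤ := fun e => ((Finset.univ.filter (fun i : Fin n => E i = e)).card : ℤ)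
    with hc
  have hsum' : ∑ e ∈ Finset.range m, (c e : ℂ) * ζ ^ e = 0 := by
    rw [← hαs, ← Finset.sum_fiberwise_of_maps_to hEmem α]
    refine Finset.sum_congr rfl fun e _ => ?_
    have : ∀ i ∈ Finset.univ.filter (fun i : Fin n => E i = e), α i = ζ ^ e := by
      intro i hi
      rw [Finset.mem_filter] at hi
      rw [← hEeq i, hi.2]
    rw [Finset.sum_congr rfl this, Finset.sum_const, nsmul_eq_mul, hc]
    push_cast
    ring
  have hcount : ∑ e ∈ Finset.range m, c e = (n : ℤ) := by
    have h2 := Finset.sum_fiberwise_of_maps_to hEmem (fun _ => (1 : ℤ))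
    simp only [Finset.sum_const, nsmul_eq_mul, mul_one] at h2
    rw [hc]
    simpa using h2
  have hoddc : Odd (∑ e ∈ Finset.range m, c e) := by
    rw [hcount]; exact_mod_cast hn
  obtain ⟨q, hq, hqodd, hqdvd, hqle⟩ := key m hm ζ hζ c hsum' hoddc
  refine ⟨q, hq, hqodd, hqdvd, ?_⟩
  have habs : ∑ e ∈ Finset.range m, |c e| = (n : ℤ) := by
    rw [← hcount]
    exact Finset.sum_congr rfl fun e _ => abs_of_nonneg (by rw [hc]; positivity)
  rw [habs] at hqle
  exact_mod_cast hqle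

/-- Corollary 5.6: for even `m`, `W(m) = 2ℕ` if `m` is a power of `2`; otherwise
`W(m) = {even n} ∪ {n : n ≥ p}` where `p` is the smallest odd prime dividing `m`. -/
theorem weight_set_of_even (m : ℕ) (hm : 0 < m) (h2 : 2 ∣ m) :
    ((∃ k, m = 2 ^ k) → ∀ n, IsVanishingWeight m n ↔ Even n) ∧
    ((¬ ∃ k, m = 2 ^ k) → ∀ p : ℕ, p.Prime → Odd p → p ∣ m →
      (∀ q : ℕ, q.Prime → Odd q → q ∣ m → p ≤ q) →
      ∀ n, IsVanishingWeight m n ↔ (Even n ∨ p ≤ n)) := by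
  constructor
  · rintro ⟨k, hk⟩ n
    constructor
    · intro h
      by_contra hne
      obtain ⟨q, hq, hqodd, hqdvd, _⟩ :=
        exists_odd_prime_of_odd hm h (Nat.not_even_iff_odd.1 hne)
      rw [hk] at hqdvd
      have hq2 : q = 2 :=
        (Nat.prime_dvd_prime_iff_eq hq Nat.prime_two).1 (hq.dvd_of_dvd_pow hqdvd)
      rw [hq2] at hqodd
      exact (Nat.not_odd_iff_even.2 even_two) hqodd
    · exact vw_even h2
  · intro _ p hp hpodd hpdvd hmin n
    constructor
    · intro h
      by_cases he : Even n
      · exact Or.inl he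
      · obtain ⟨q, hq, hqodd, hqdvd, hqle⟩ :=
          exists_odd_prime_of_odd hm h (Nat.not_even_iff_odd.1 he)
        exact Or.inr (le_trans (hmin q hq hqodd hqdvd) hqle)
    · exact vw_of_even_or_ge h2 hp hpodd hpdvd
end

section
/- Let p, q, ℓ be three distinct primes, and let α, β, γ ∈ ℂ be primitive p-th, q-th and ℓ-th roots of unity respectively. Then the sum Σ_{i=1}^{p−1} Σ_{j=1}^{q−1} α^i·β^j + Σ_{k=1}^{ℓ−1} γ^k equals 0, and this vanishing sum is minimal: no proper nonempty sub-multiset of the multiset {α^i β^j : 1 ≤ i ≤ p−1, 1 ≤ j ≤ q−1} ∪ {γ^k : 1 ≤ k ≤ ℓ−1} has sum 0. Its weight is (p−1)(q−1) + (ℓ−1). -/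
private lemma multiset_exists_of_le_map {A B : Type*} {f : A → B} :
    ∀ (s : Multiset A) (t : Multiset B), t ≤ s.map f → ∃ u ≤ s, u.map f = t := by
  classical
  intro s
  induction s using Multiset.induction with
  | empty =>
    intro t ht
    simp only [Multiset.map_zero, Multiset.le_zero] at ht
    exact ⟨0, le_rfl, by simp [ht]⟩
  | cons a s ih =>
    intro t ht
    rw [Multiset.map_cons] at ht
    by_cases h : f a ∈ t
    · have h1 : t.erase (f a) ≤ s.map f := Multiset.erase_le_iff_le_cons.mpr ht
      obtain ⟨u, hu, hu2⟩ := ih _ h1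
      exact ⟨a ::ₘ u, Multiset.cons_le_cons _ hu,
        by rw [Multiset.map_cons, hu2, Multiset.cons_erase h]⟩
    · have h1 : t ≤ s.map f := by
        rw [Multiset.le_iff_count] at ht ⊢
        intro b
        rcases eq_or_ne b (f a) with rfl | hb
        · simp [Multiset.count_eq_zero_of_notMem h]
        · have := ht b
          rwa [Multiset.count_cons_of_ne hb] at this
      obtain ⟨u, hu, hu2⟩ := ih _ h1
      exact ⟨u, le_trans hu (Multiset.le_cons_self _ _), hu2⟩

private lemma multiset_le_add_decomp {A : Type*} (s₁ s₂ t : Multiset A) (h : t ≤ s₁ + s₂) :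
    ∃ u₁ ≤ s₁, ∃ u₂ ≤ s₂, t = u₁ + u₂ := by
  classical
  refine ⟨t ∩ s₁, Multiset.inter_le_right, t - s₁, ?_, ?_⟩
  · rw [Multiset.sub_le_iff_le_add]
    rwa [add_comm]
  · rw [add_comm, Multiset.sub_add_inter]

private lemma prim_sum_Icc {r : ℕ} (hr : 1 < r) {ζ : ℂ} (h : IsPrimitiveRoot ζ r) :
    ∑ i ∈ Finset.Icc 1 (r - 1), ζ ^ i = -1 := by
  have h0 : ∑ i ∈ Finset.range r, ζ ^ i = 0 := h.geom_sum_eq_zero hr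
  have hIcc : Finset.Icc 1 (r - 1) = Finset.Ico 1 r := by
    rw [← Finset.Ico_add_one_right_eq_Icc]
    congr 1
    omega
  rw [Finset.range_eq_Ico, Finset.sum_eq_sum_Ico_succ_bot (by omega)] at h0
  rw [hIcc]
  rw [pow_zero] at h0
  linear_combination h0

private lemma prim_pow_mem_span {r : ℕ} (hr : 1 < r) {ζ : ℂ} (h : IsPrimitiveRoot ζ r) (a : ℕ) :
    ζ ^ a ∈ Submodule.span ℚ ((fun i => ζ ^ i) '' ↑(Finset.Icc 1 (r - 1))) := by
  have hmod : ζ ^ a = ζ ^ (a % r) := by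
    conv_lhs => rw [← Nat.div_add_mod a r]
    rw [pow_add, pow_mul, h.pow_eq_one, one_pow, one_mul]
  rcases Nat.eq_zero_or_pos (a % r) with h0 | hpos
  · rw [hmod, h0, pow_zero]
    have key : (1 : ℂ) = -∑ i ∈ Finset.Icc 1 (r - 1), ζ ^ i := by
      rw [prim_sum_Icc hr h]; ring
    rw [key]
    refine neg_mem (Submodule.sum_mem _ fun i hi => ?_)
    exact Submodule.subset_span ⟨i, by simpa using hi, rfl⟩
  · rw [hmod]
    refine Submodule.subset_span ⟨a % r, ?_, rfl⟩
    have : a % r < r := Nat.mod_lt _ (by omega)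
    simp only [Finset.coe_Icc, Set.mem_Icc]
    omega

private lemma monomials_li
    (p q ℓ : ℕ) (hp : p.Prime) (hq : q.Prime) (hl : ℓ.Prime)
    (hpq : p ≠ q) (hpl : p ≠ ℓ) (hql : q ≠ ℓ)
    (α β γ : ℂ) (hα : IsPrimitiveRoot α p) (hβ : IsPrimitiveRoot β q)
    (hγ : IsPrimitiveRoot γ ℓ) :
    LinearIndependent ℚ
      (fun x : ((Finset.Icc 1 (p-1) ×ˢ Finset.Icc 1 (q-1)) ×ˢ Finset.Icc 1 (ℓ-1) :
          Finset ((ℕ × ℕ) × ℕ)) =>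
        α ^ (x : (ℕ × ℕ) × ℕ).1.1 * β ^ (x : (ℕ × ℕ) × ℕ).1.2 * γ ^ (x : (ℕ × ℕ) × ℕ).2) := by
  classical
  set E : Finset ((ℕ × ℕ) × ℕ) :=
    (Finset.Icc 1 (p-1) ×ˢ Finset.Icc 1 (q-1)) ×ˢ Finset.Icc 1 (ℓ-1) with hE
  set v : E → ℂ := fun x =>
    α ^ (x : (ℕ × ℕ) × ℕ).1.1 * β ^ (x : (ℕ × ℕ) × ℕ).1.2 * γ ^ (x : (ℕ × ℕ) × ℕ).2 with hv
  -- ζ is a primitive pqℓ-th root of unity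
  set ζ : ℂ := α * β * γ with hζdef
  have hp2 := hp.two_le
  have hq2 := hq.two_le
  have hl2 := hl.two_le
  have hoα : orderOf α = p := hα.eq_orderOf.symm
  have hoβ : orderOf β = q := hβ.eq_orderOf.symm
  have hoγ : orderOf γ = ℓ := hγ.eq_orderOf.symm
  have cpq : Nat.Coprime p q := (Nat.coprime_primes hp hq).mpr hpq
  have cpl : Nat.Coprime p ℓ := (Nat.coprime_primes hp hl).mpr hpl
  have cql : Nat.Coprime q ℓ := (Nat.coprime_primes hq hl).mpr hql
  have hoαβ : orderOf (α * β) = p * q := by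
    rw [(Commute.all α β).orderOf_mul_eq_mul_orderOf_of_coprime (by rw [hoα, hoβ]; exact cpq),
      hoα, hoβ]
  have hoζ : orderOf ζ = p * q * ℓ := by
    rw [hζdef, (Commute.all (α * β) γ).orderOf_mul_eq_mul_orderOf_of_coprime
      (by rw [hoαβ, hoγ]; exact cpl.mul cql), hoαβ, hoγ]
  have hζ : IsPrimitiveRoot ζ (p * q * ℓ) := by
    have := IsPrimitiveRoot.orderOf ζ
    rwa [hoζ] at this
  have hnpos : 0 < p * q * ℓ := by positivity
  -- degree facts
  have hdeg : (minpoly ℚ ζ).natDegree = (p - 1) * (q - 1) * (ℓ - 1) := by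
    rw [← Polynomial.cyclotomic_eq_minpoly_rat hζ hnpos, Polynomial.natDegree_cyclotomic,
      Nat.totient_mul (cpl.mul cql), Nat.totient_mul cpq, Nat.totient_prime hp,
      Nat.totient_prime hq, Nat.totient_prime hl]
  -- span membership
  set M : Submodule ℚ ℂ := Submodule.span ℚ (Set.range v) with hM
  have hspan : ∀ a b c : ℕ, α ^ a * β ^ b * γ ^ c ∈ M := by
    intro a b c
    have h1 := prim_pow_mem_span (by omega : 1 < p) hα a
    have h2 := prim_pow_mem_span (by omega : 1 < q) hβ b
    have h3 := prim_pow_mem_span (by omega : 1 < ℓ) hγ c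
    have hmul : α ^ a * β ^ b * γ ^ c ∈
        (Submodule.span ℚ ((fun i => α ^ i) '' ↑(Finset.Icc 1 (p - 1))) *
          Submodule.span ℚ ((fun i => β ^ i) '' ↑(Finset.Icc 1 (q - 1)))) *
          Submodule.span ℚ ((fun i => γ ^ i) '' ↑(Finset.Icc 1 (ℓ - 1))) :=
      Submodule.mul_mem_mul (Submodule.mul_mem_mul h1 h2) h3
    rw [Submodule.span_mul_span, Submodule.span_mul_span] at hmul
    refine Submodule.span_le.mpr ?_ hmul
    rintro x ⟨y, ⟨ya, ⟨i, hi, rfl⟩, yb, ⟨j, hj, rfl⟩, rfl⟩, yc, ⟨k, hk, rfl⟩, rfl⟩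
    simp only [Finset.coe_Icc, Set.mem_Icc] at hi hj hk
    refine Submodule.subset_span ⟨⟨((i, j), k), by simp [hE, Finset.mem_Icc, hi, hj, hk]⟩, rfl⟩
  have hzpow : ∀ t : ℕ, ζ ^ t ∈ M := by
    intro t
    have : ζ ^ t = α ^ t * β ^ t * γ ^ t := by rw [hζdef, mul_pow, mul_pow]
    rw [this]; exact hspan t t t
  -- finrank bound
  haveI : FiniteDimensional ℚ M := FiniteDimensional.span_of_finite ℚ (Set.finite_range v)
  have hli : LinearIndependent ℚ
      (fun i : Fin (minpoly ℚ ζ).natDegree => (⟨ζ ^ (i : ℕ), hzpow i⟩ : M)) := by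
    apply LinearIndependent.of_comp M.subtype
    have := linearIndependent_pow (K := ℚ) ζ
    exact this
  have hge : (p - 1) * (q - 1) * (ℓ - 1) ≤ Module.finrank ℚ M := by
    have := hli.fintype_card_le_finrank
    rwa [Fintype.card_fin, hdeg] at this
  have hcard : Fintype.card E = (p - 1) * (q - 1) * (ℓ - 1) := by
    simp [hE, Nat.card_Icc]
  rw [linearIndependent_iff_card_eq_finrank_span]
  have hle : (Set.range v).finrank ℚ ≤ Fintype.card E := finrank_range_le_card v
  have : (Set.range v).finrank ℚ = Module.finrank ℚ M := rfl
  omega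

/-- Example 2.5: for distinct primes `p, q, ℓ` and primitive roots of unity
`α, β, γ` of those orders, the sum `∑_{i=1}^{p-1} ∑_{j=1}^{q-1} αⁱβʲ + ∑_{k=1}^{ℓ-1} γᵏ`
vanishes, is minimal, and has weight `(p-1)(q-1) + (ℓ-1)`. -/
theorem redei_sum_minimal
    (p q ℓ : ℕ) (hp : p.Prime) (hq : q.Prime) (hl : ℓ.Prime)
    (hpq : p ≠ q) (hpl : p ≠ ℓ) (hql : q ≠ ℓ)
    (α β γ : ℂ) (hα : IsPrimitiveRoot α p) (hβ : IsPrimitiveRoot β q)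
    (hγ : IsPrimitiveRoot γ ℓ)
    (S : Multiset ℂ)
    (hSdef : S = ((Finset.Icc 1 (p - 1) ×ˢ Finset.Icc 1 (q - 1)).val.map
        fun ij => α ^ ij.1 * β ^ ij.2) +
      ((Finset.Icc 1 (ℓ - 1)).val.map fun k => γ ^ k)) :
    S.sum = 0 ∧
    (∀ T : Multiset ℂ, T ≤ S → T ≠ 0 → T ≠ S → T.sum ≠ 0) ∧
    Multiset.card S = (p - 1) * (q - 1) + (ℓ - 1) := by
  classical
  have hp2 := hp.two_le
  have hq2 := hq.two_le
  have hl2 := hl.two_le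
  set E₁ : Finset (ℕ × ℕ) := Finset.Icc 1 (p - 1) ×ˢ Finset.Icc 1 (q - 1) with hE₁
  set E₃ : Finset ℕ := Finset.Icc 1 (ℓ - 1) with hE₃
  set f : ℕ × ℕ → ℂ := fun ij => α ^ ij.1 * β ^ ij.2 with hf
  set g : ℕ → ℂ := fun k => γ ^ k with hg
  have K1 : ∑ i ∈ Finset.Icc 1 (p - 1), α ^ i = -1 := prim_sum_Icc (by omega) hα
  have K2 : ∑ j ∈ Finset.Icc 1 (q - 1), β ^ j = -1 := prim_sum_Icc (by omega) hβ
  have K3 : ∑ k ∈ E₃, γ ^ k = -1 := prim_sum_Icc (by omega) hγ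
  have sum1 : ∑ ij ∈ E₁, f ij = 1 := by
    rw [hE₁, Finset.sum_product, hf]
    simp only
    rw [← Finset.sum_mul_sum, K1, K2]
    norm_num
  have hsum_map₁ : ∀ A : Finset (ℕ × ℕ), (A.val.map f).sum = ∑ ij ∈ A, f ij := fun _ => rfl
  have hsum_map₂ : ∀ B : Finset ℕ, (B.val.map g).sum = ∑ k ∈ B, g k := fun _ => rfl
  have hSsum : S.sum = 0 := by
    rw [hSdef, Multiset.sum_add, hsum_map₁ E₁, hsum_map₂ E₃, sum1, K3]
    norm_num
  refine ⟨hSsum, ?_, ?_⟩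
  · -- minimality
    intro T hT hT0 hTS hTsum
    rw [hSdef] at hT
    obtain ⟨u₁, hu₁, u₂, hu₂, hTdec⟩ := multiset_le_add_decomp _ _ _ hT
    obtain ⟨A', hA'le, hA'map⟩ := multiset_exists_of_le_map _ _ hu₁
    obtain ⟨B', hB'le, hB'map⟩ := multiset_exists_of_le_map _ _ hu₂
    have hA'nd : A'.Nodup := Multiset.nodup_of_le hA'le E₁.nodup
    have hB'nd : B'.Nodup := Multiset.nodup_of_le hB'le E₃.nodup
    set A : Finset (ℕ × ℕ) := ⟨A', hA'nd⟩ with hA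
    set B : Finset ℕ := ⟨B', hB'nd⟩ with hB
    have hAsub : A ⊆ E₁ := Finset.val_le_iff.mp hA'le
    have hBsub : B ⊆ E₃ := Finset.val_le_iff.mp hB'le
    have hTsum' : (∑ ij ∈ A, f ij) + ∑ k ∈ B, g k = 0 := by
      rw [← hsum_map₁ A, ← hsum_map₂ B]
      show (A'.map f).sum + (B'.map g).sum = 0
      rw [hA'map, hB'map, ← Multiset.sum_add, ← hTdec, hTsum]
    -- express as linear combination of the independent monomials
    set c : (ℕ × ℕ) × ℕ → ℚ :=
      fun x => (if x.1 ∈ A then (-1 : ℚ) else 0) + (if x.2 ∈ B then (1 : ℚ) else 0) with hc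
    have HC : ∑ x ∈ E₁ ×ˢ E₃, c x • (α ^ x.1.1 * β ^ x.1.2 * γ ^ x.2)
        = (∑ ij ∈ A, f ij) + ∑ k ∈ B, g k := by
      rw [Finset.sum_product]
      have expand : ∀ ij ∈ E₁, ∑ k ∈ E₃, c (ij, k) • (α ^ ij.1 * β ^ ij.2 * γ ^ k)
          = (if ij ∈ A then f ij else 0) +
            ∑ k ∈ E₃, (if k ∈ B then (1 : ℚ) else 0) • (f ij * γ ^ k) := by
        intro ij _
        simp only [hc, add_smul, Finset.sum_add_distrib]
        congr 1
        have hcollect : ∑ x ∈ E₃, (if ij ∈ A then (-1 : ℚ) else 0) • (α ^ ij.1 * β ^ ij.2 * γ ^ x)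
            = (if ij ∈ A then (-1 : ℚ) else 0) • (α ^ ij.1 * β ^ ij.2 * ∑ x ∈ E₃, γ ^ x) := by
          rw [Finset.mul_sum, Finset.smul_sum]
        rw [hcollect, K3]
        by_cases h : ij ∈ A <;> simp [h, hf]
      rw [Finset.sum_congr rfl expand, Finset.sum_add_distrib]
      congr 1
      · rw [Finset.sum_ite_mem, Finset.inter_eq_right.mpr hAsub]
      · rw [Finset.sum_comm]
        have expand2 : ∀ k ∈ E₃, ∑ ij ∈ E₁, (if k ∈ B then (1 : ℚ) else 0) • (f ij * γ ^ k)
            = if k ∈ B then g k else 0 := by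
          intro k _
          have hcollect : ∑ ij ∈ E₁, (if k ∈ B then (1 : ℚ) else 0) • (f ij * γ ^ k)
              = (if k ∈ B then (1 : ℚ) else 0) • ((∑ ij ∈ E₁, f ij) * γ ^ k) := by
            rw [Finset.sum_mul, Finset.smul_sum]
          rw [hcollect, sum1, one_mul]
          by_cases h : k ∈ B <;> simp [h, hg]
        rw [Finset.sum_congr rfl expand2, Finset.sum_ite_mem,
          Finset.inter_eq_right.mpr hBsub]
    have hli := monomials_li p q ℓ hp hq hl hpq hpl hql α β γ hα hβ hγ
    rw [Fintype.linearIndependent_iff] at hli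
    have hz := hli (fun x => c ↑x) ?_
    swap
    · rw [Finset.sum_coe_sort (E₁ ×ˢ E₃)
        (fun x => c x • (α ^ x.1.1 * β ^ x.1.2 * γ ^ x.2))]
      rw [HC, hTsum']
    have hz' : ∀ ij ∈ E₁, ∀ k ∈ E₃,
        (if ij ∈ A then (-1 : ℚ) else 0) + (if k ∈ B then (1 : ℚ) else 0) = 0 :=
      fun ij hij k hk => hz ⟨(ij, k), Finset.mem_product.mpr ⟨hij, hk⟩⟩
    have h11 : ((1, 1) : ℕ × ℕ) ∈ E₁ := by
      simp only [hE₁, Finset.mem_product, Finset.mem_Icc]; omega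
    have h1 : (1 : ℕ) ∈ E₃ := by simp only [hE₃, Finset.mem_Icc]; omega
    by_cases hB1 : (1 : ℕ) ∈ B
    · -- then A = E₁ and B = E₃, so T = S
      have hAfull : A = E₁ := by
        refine Finset.Subset.antisymm hAsub fun ij hij => ?_
        have := hz' ij hij 1 h1
        by_contra h
        rw [if_neg h, if_pos hB1] at this
        norm_num at this
      have hBfull : B = E₃ := by
        refine Finset.Subset.antisymm hBsub fun k hk => ?_
        have := hz' (1, 1) h11 k hk
        by_contra h
        rw [if_pos (hAfull ▸ h11), if_neg h] at this
        norm_num at this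
      apply hTS
      have : A' = E₁.val := congrArg Finset.val hAfull
      have hB'' : B' = E₃.val := congrArg Finset.val hBfull
      rw [hTdec, ← hA'map, ← hB'map, this, hB'', hSdef]
    · -- then A = ∅ and B = ∅, so T = 0
      have hAempty : A = ∅ := by
        refine Finset.eq_empty_of_forall_notMem fun ij hij => ?_
        have := hz' ij (hAsub hij) 1 h1
        rw [if_pos hij, if_neg hB1] at this
        norm_num at this
      have hBempty : B = ∅ := by
        refine Finset.eq_empty_of_forall_notMem fun k hk => ?_
        have := hz' (1, 1) h11 k (hBsub hk)
        have hA11 : ((1, 1) : ℕ × ℕ) ∉ A := by rw [hAempty]; exact Finset.notMem_empty _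
        rw [if_neg hA11, if_pos hk] at this
        norm_num at this
      apply hT0
      have h1' : A' = 0 := congrArg Finset.val hAempty
      have h2' : B' = 0 := congrArg Finset.val hBempty
      rw [hTdec, ← hA'map, ← hB'map, h1', h2']
      simp
  · -- cardinality
    rw [hSdef]
    simp [hE₁, hE₃, Finset.card_product, Nat.card_Icc]
end

section
/- Let F be a field of characteristic 0, G a finite group, and χ the character of a finite-dimensional representation of G over F. Let g ∈ G have order m, and suppose χ(g) = s·1_F for some integer s with s > 0, and that t := χ(1) + s is odd. Then m has an odd prime divisor, and t ≥ ℓ, where ℓ is the smallest odd prime dividing m. -/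
open Polynomial

private lemma multiset_sum_partition {γ : Type*} [AddCommMonoid γ] (q : ℕ) (p : ℕ → ℕ)
    (hp : ∀ k, p k < q) (E : Multiset ℕ) (f : ℕ → γ) :
    (E.map f).sum = ∑ r ∈ Finset.range q, ((E.filter (fun k => p k = r)).map f).sum := by
  induction E using Multiset.induction_on with
  | empty => simp
  | cons a E ih =>
      have key : ∀ r ∈ Finset.range q,
          (((a ::ₘ E).filter (fun k => p k = r)).map f).sum
            = (if p a = r then f a else 0) + ((E.filter (fun k => p k = r)).map f).sum := by
        intro r _
        by_cases h : p a = r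
        · rw [Multiset.filter_cons_of_pos (p := fun k => p k = r) E h, Multiset.map_cons,
            Multiset.sum_cons, if_pos h]
        · rw [Multiset.filter_cons_of_neg (p := fun k => p k = r) E h, if_neg h, zero_add]
      rw [Finset.sum_congr rfl key, Finset.sum_add_distrib, ← ih, Multiset.map_cons,
        Multiset.sum_cons, Finset.sum_ite_eq (Finset.range q) (p a) (fun _ => f a),
        if_pos (Finset.mem_range.mpr (hp a))]

private lemma multiset_card_partition (q : ℕ) (p : ℕ → ℕ) (hp : ∀ k, p k < q) (E : Multiset ℕ) :
    Multiset.card E = ∑ r ∈ Finset.range q, Multiset.card (E.filter (fun k => p k = r)) := by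
  have h := multiset_sum_partition q p hp E (fun _ => (1 : ℕ))
  simpa using h

private lemma transform_sum {K : Type*} [Field K] [CharZero K] {w : K} {d : ℕ} (hd : 0 < d)
    (hw : IsPrimitiveRoot w d) (E : Multiset ℕ) (h0 : (E.map (fun k => w ^ k)).sum = 0)
    (j : ℕ) (hj : j.Coprime d) :
    (E.map (fun k => w ^ (j * k))).sum = 0 := by
  set P : ℚ[X] := (E.map (fun k => (X : ℚ[X]) ^ k)).sum with hP
  have hev : ∀ z : K, (Polynomial.aeval z) P = (E.map (fun k => z ^ k)).sum := by
    intro z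
    rw [hP, map_multiset_sum, Multiset.map_map]
    congr 1
    apply Multiset.map_congr rfl
    intro k _
    simp
  have h1 : Polynomial.aeval w P = 0 := by rw [hev]; exact h0
  have hmin : minpoly ℚ w ∣ P := minpoly.dvd _ _ h1
  have hw' : IsPrimitiveRoot (w ^ j) d := hw.pow_of_coprime j hj
  have e1 : Polynomial.cyclotomic d ℚ = minpoly ℚ w := Polynomial.cyclotomic_eq_minpoly_rat hw hd
  have e2 : Polynomial.cyclotomic d ℚ = minpoly ℚ (w ^ j) :=
    Polynomial.cyclotomic_eq_minpoly_rat hw' hd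
  have h2 : Polynomial.aeval (w ^ j) P = 0 := by
    obtain ⟨Q, hQ⟩ := hmin
    rw [hQ, map_mul, ← e1, e2, minpoly.aeval, zero_mul]
  rw [hev] at h2
  rw [show (fun k => w ^ (j * k)) = fun k => (w ^ j) ^ k from funext fun k => by
    rw [← pow_mul], ]
  exact h2

private lemma aeval_multiset_pow {K : Type*} [Field K] [CharZero K] (z : K) (E : Multiset ℕ)
    (g : ℕ → ℕ) :
    (Polynomial.aeval z) ((E.map (fun k => (X : ℚ[X]) ^ (g k))).sum)
      = (E.map (fun k => z ^ (g k))).sum := by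
  rw [map_multiset_sum, Multiset.map_map]
  congr 1
  apply Multiset.map_congr rfl
  intro k _
  simp

private lemma caseA {K : Type*} [Field K] [CharZero K] {w : K} {d q : ℕ} (hd : 0 < d)
    (hq : q.Prime) (hq2 : q * q ∣ d) (hw : IsPrimitiveRoot w d) (E : Multiset ℕ)
    (h0 : (E.map (fun k => w ^ k)).sum = 0) :
    ∀ r, ((E.filter (fun k => k % q = r)).map (fun k => (w ^ q) ^ (k / q))).sum = 0 := by
  have hqpos : 0 < q := hq.pos
  set e := d / q with he
  have hde : d = q * e := (Nat.mul_div_cancel' (dvd_of_mul_left_dvd hq2)).symm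
  have hqe : q ∣ e := by
    have := hq2
    rw [hde] at this
    exact (mul_dvd_mul_iff_left (by positivity : (q:ℕ) ≠ 0)).mp this
  have hepos : 0 < e := by
    rcases Nat.eq_zero_or_pos e with h | h
    · rw [h, mul_zero] at hde; omega
    · exact h
  -- polynomials
  set Pr : ℕ → ℚ[X] := fun r => ((E.filter (fun k => k % q = r)).map (fun k => X ^ (k / q))).sum
    with hPr
  set P : ℚ[X] := (E.map (fun k => (X : ℚ[X]) ^ k)).sum with hP
  set Φe : ℚ[X] := Polynomial.cyclotomic e ℚ with hΦe
  set Φd : ℚ[X] := Polynomial.cyclotomic d ℚ with hΦd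
  have hΦemonic : Φe.Monic := Polynomial.cyclotomic.monic e ℚ
  have hexpand : Polynomial.expand ℚ q Φe = Φd := by
    rw [hΦe, hΦd, Polynomial.cyclotomic_expand_eq_cyclotomic hq hqe, mul_comm e q, ← hde]
  -- key identity
  have hkey : P = ∑ r ∈ Finset.range q, X ^ r * Polynomial.expand ℚ q (Pr r) := by
    rw [hP, multiset_sum_partition q (fun k => k % q) (fun k => Nat.mod_lt k hqpos) E
      (fun k => (X : ℚ[X]) ^ k)]
    refine Finset.sum_congr rfl fun r _ => ?_
    rw [hPr, map_multiset_sum, Multiset.map_map, ← Multiset.sum_map_mul_left]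
    refine congrArg Multiset.sum ?_
    apply Multiset.map_congr rfl
    intro k hk
    have hkr : k % q = r := (Multiset.mem_filter.mp hk).2
    simp only [Function.comp_apply]
    rw [map_pow, Polynomial.expand_X, ← pow_mul, ← pow_add]
    congr 1
    have h5 : k = q * (k / q) + r := by rw [← hkr]; exact (Nat.div_add_mod k q).symm
    exact h5.trans (add_comm _ _)
  have hPdvd : Φd ∣ P := by
    have h1 : Polynomial.aeval w P = 0 :=
      (aeval_multiset_pow w E (fun k => k)).trans h0
    rw [hΦd, Polynomial.cyclotomic_eq_minpoly_rat hw hd]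
    exact minpoly.dvd _ _ h1
  set B : ℕ → ℚ[X] := fun r => Pr r %ₘ Φe with hB
  have hPrB : ∀ r, Pr r = Φe * (Pr r /ₘ Φe) + B r := fun r =>
    (Polynomial.modByMonic_add_div (Pr r) Φe).symm.trans (add_comm _ _)
  have hsplit : ∀ r, Polynomial.expand ℚ q (Pr r)
      = Φd * Polynomial.expand ℚ q (Pr r /ₘ Φe) + Polynomial.expand ℚ q (B r) := by
    intro r
    conv_lhs => rw [hPrB r]
    rw [map_add, map_mul, hexpand]
  set G : ℚ[X] := ∑ r ∈ Finset.range q, X ^ r * Polynomial.expand ℚ q (B r) with hG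
  have hGdvd : Φd ∣ G := by
    have : G = P - Φd * ∑ r ∈ Finset.range q, X ^ r * Polynomial.expand ℚ q (Pr r /ₘ Φe) := by
      rw [hkey, Finset.mul_sum, ← Finset.sum_sub_distrib]
      refine Finset.sum_congr rfl fun r _ => ?_
      rw [hsplit r]
      ring
    rw [this]
    exact dvd_sub hPdvd (Dvd.intro _ rfl)
  have hΦddeg : Φd.degree = (d.totient : ℕ) := Polynomial.degree_cyclotomic d ℚ
  have htot : d.totient = q * e.totient := by
    rw [hde, Nat.totient_mul_of_prime_of_dvd hq hqe]
  have hGzero : G = 0 := by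
    rcases eq_or_ne G 0 with h | h
    · exact h
    refine Polynomial.eq_zero_of_dvd_of_degree_lt hGdvd ?_
    rw [hΦddeg]
    refine lt_of_le_of_lt (Polynomial.degree_sum_le _ _) ?_
    rw [Finset.sup_lt_iff (by
      simp only [Nat.cast_pos, bot_lt_iff_ne_bot]
      exact WithBot.natCast_ne_bot _)]
    intro r hr
    rcases eq_or_ne (B r) 0 with hB0 | hB0
    · rw [hB0, map_zero, mul_zero, Polynomial.degree_zero]
      exact bot_lt_iff_ne_bot.mpr (WithBot.natCast_ne_bot _)
    · have hBdeg : (B r).natDegree < e.totient := by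
        refine (Polynomial.natDegree_lt_iff_degree_lt hB0).mpr ?_
        have h2 := Polynomial.degree_modByMonic_lt (Pr r) hΦemonic
        rw [Polynomial.degree_cyclotomic e ℚ] at h2
        exact h2
      have hexp0 : Polynomial.expand ℚ q (B r) ≠ 0 := fun hcon => hB0 (by
        simpa using (Polynomial.expand_eq_zero hqpos).mp hcon)
      rw [Polynomial.degree_mul, Polynomial.degree_X_pow,
        Polynomial.degree_eq_natDegree hexp0, Polynomial.natDegree_expand]
      rw [htot, ← Nat.cast_add, Nat.cast_lt (α := WithBot ℕ)]
      have hrq : r < q := Finset.mem_range.mp hr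
      calc r + (B r).natDegree * q < q + (B r).natDegree * q := by omega
        _ = ((B r).natDegree + 1) * q := by ring
        _ ≤ e.totient * q := Nat.mul_le_mul_right q hBdeg
        _ = q * e.totient := mul_comm _ _
  -- extract coefficients
  have hB0 : ∀ r < q, B r = 0 := by
    intro r hrq
    ext i
    have hcoeff : G.coeff (q * i + r) = 0 := by rw [hGzero]; simp
    rw [hG, Polynomial.finset_sum_coeff] at hcoeff
    rw [Finset.sum_eq_single r (fun r' _ hne => ?_) (fun h => absurd (Finset.mem_range.mpr hrq) h)]
      at hcoeff
    · rw [Polynomial.coeff_X_pow_mul (Polynomial.expand ℚ q (B r)) r (q * i),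
        Polynomial.coeff_expand hqpos, if_pos (Dvd.intro i rfl),
        Nat.mul_div_cancel_left i hqpos] at hcoeff
      simpa using hcoeff
    · rename_i hmem
      have hr'q : r' < q := Finset.mem_range.mp hmem
      rcases le_or_gt r' (q * i + r) with hle | hlt
      · rw [Polynomial.coeff_X_pow_mul' (Polynomial.expand ℚ q (B r')) r' (q * i + r),
          if_pos hle, Polynomial.coeff_expand hqpos]
        rw [if_neg]
        rintro ⟨c, hc⟩
        have h1 : q * i + r = q * c + r' := by omega
        have h2 : (q * i + r) % q = r % q := Nat.mul_add_mod q i r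
        have h3 : (q * c + r') % q = r' % q := Nat.mul_add_mod q c r'
        rw [h1, h3, Nat.mod_eq_of_lt hrq, Nat.mod_eq_of_lt hr'q] at h2
        exact hne h2
      · rw [Polynomial.coeff_X_pow_mul' (Polynomial.expand ℚ q (B r')) r' (q * i + r),
          if_neg (by omega)]
  -- conclude
  intro r
  rcases Nat.lt_or_ge r q with hrq | hrq
  · have hPrfact : Pr r = Φe * (Pr r /ₘ Φe) := by
      have h4 := hPrB r
      rw [hB0 r hrq, add_zero] at h4
      exact h4
    have hwq : IsPrimitiveRoot (w ^ q) e := hw.pow hd hde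
    have hΦeval : (Polynomial.aeval (w ^ q)) Φe = 0 := by
      rw [hΦe, Polynomial.aeval_def, Polynomial.eval₂_eq_eval_map, Polynomial.map_cyclotomic]
      exact hwq.isRoot_cyclotomic hepos
    have heq := aeval_multiset_pow (w ^ q) (E.filter (fun k => k % q = r)) (fun k => k / q)
    rw [← heq]
    show (Polynomial.aeval (w ^ q)) (Pr r) = 0
    rw [hPrfact, map_mul, hΦeval, zero_mul]
  · have : E.filter (fun k => k % q = r) = 0 := by
      rw [Multiset.filter_eq_nil]
      intro k hk hkr
      have h2 : k % q < q := Nat.mod_lt _ hqpos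
      omega
    rw [this]
    simp

private lemma caseB {K : Type*} [Field K] [CharZero K] {w : K} {d q : ℕ} (hd : 0 < d)
    (hq : q.Prime) (hqd : q ∣ d) (hq2 : ¬q * q ∣ d) (hw : IsPrimitiveRoot w d)
    (E : Multiset ℕ) (h0 : (E.map (fun k => w ^ k)).sum = 0) :
    ∃ (p : ℕ → ℕ) (μ : ℕ → K), (∀ k, p k < q) ∧ (∀ k, μ k ^ (d / q) = 1) ∧
      ∀ r₀ r₁, r₀ < q → r₁ < q →
        ((E.filter (fun k => p k = r₀)).map μ).sum
          = ((E.filter (fun k => p k = r₁)).map μ).sum := by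
  haveI : Fact q.Prime := ⟨hq⟩
  haveI : NeZero q := ⟨hq.ne_zero⟩
  have hqpos : 0 < q := hq.pos
  have hq1 : 1 < q := hq.one_lt
  set e := d / q with he
  have hde : d = q * e := (Nat.mul_div_cancel' hqd).symm
  have hqe : ¬q ∣ e := fun hcon => hq2 (hde ▸ mul_dvd_mul_left q hcon)
  have hepos : 0 < e := Nat.pos_of_ne_zero fun h => by rw [h, mul_zero] at hde; omega
  have heq0 : (e : ZMod q) ≠ 0 := by
    rw [Ne, ZMod.natCast_eq_zero_iff]; exact hqe
  set x := ((e : ZMod q)⁻¹).val with hxdef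
  have hxcast : ((x : ℕ) : ZMod q) = (e : ZMod q)⁻¹ := by
    rw [hxdef, ZMod.natCast_val, ZMod.cast_id]
  have hxe : (e : ZMod q) * ((x : ℕ) : ZMod q) = 1 := by
    rw [hxcast]; exact mul_inv_cancel₀ heq0
  set ω := w ^ e with hω
  have hωprim : IsPrimitiveRoot ω q := hw.pow hd (by rw [hde, mul_comm])
  have hωord : orderOf ω = q := hωprim.eq_orderOf.symm
  set p : ℕ → ℕ := fun k => k * x % q with hp
  have hplt : ∀ k, p k < q := fun k => Nat.mod_lt _ hqpos
  set μ : ℕ → K := fun k => w ^ k * ω ^ (q - p k) with hμ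
  have hpcast : ∀ k, ((p k : ℕ) : ZMod q) = (k : ZMod q) * ((x : ℕ) : ZMod q) := by
    intro k
    show (((k * x % q : ℕ)) : ZMod q) = _
    rw [ZMod.natCast_mod, Nat.cast_mul]
  have hμe : ∀ k, μ k ^ e = 1 := by
    intro k
    show (w ^ k * ω ^ (q - p k)) ^ e = 1
    have h1 : (w ^ k * ω ^ (q - p k)) ^ e = ω ^ (k + (q - p k) * e) := by
      calc (w ^ k * ω ^ (q - p k)) ^ e = w ^ ((k + e * (q - p k)) * e) := by
            rw [hω, ← pow_mul, ← pow_add, ← pow_mul]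
        _ = ω ^ (k + (q - p k) * e) := by rw [hω, ← pow_mul]; congr 1; ring
    rw [h1, hωprim.pow_eq_one_iff_dvd]
    rw [← ZMod.natCast_eq_zero_iff]
    push_cast [Nat.cast_sub (hplt k).le]
    rw [ZMod.natCast_self, hpcast k]
    linear_combination (-(k : ZMod q)) * hxe
  set T : ℕ → K := fun r => ((E.filter (fun k => p k = r)).map μ).sum with hT
  have hHu : ∀ u, 1 ≤ u → u < q → ∑ r ∈ Finset.range q, ω ^ (u * r) * T r = 0 := by
    intro u hu1 huq
    set z := (u - 1) * x % q with hz
    set j := 1 + e * z with hj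
    have hjmodq : ((j : ℕ) : ZMod q) = (u : ZMod q) := by
      rw [hj]
      push_cast [hz, ZMod.natCast_mod, Nat.cast_sub hu1]
      linear_combination ((u : ZMod q) - 1) * hxe
    have hjq : ¬q ∣ j := by
      intro hcon
      have h2 : ((j : ℕ) : ZMod q) = 0 := (ZMod.natCast_eq_zero_iff _ _).mpr hcon
      rw [hjmodq] at h2
      have h3 : q ∣ u := (ZMod.natCast_eq_zero_iff _ _).mp h2
      have := Nat.le_of_dvd (by omega) h3
      omega
    have hje : Nat.Coprime e j := by
      show Nat.gcd e j = 1
      rw [hj, mul_comm e z, Nat.gcd_add_mul_right_right e 1 z, Nat.gcd_one_right]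
    have hjd : j.Coprime d := by
      rw [hde]
      exact Nat.Coprime.mul_right (hq.coprime_iff_not_dvd.mpr hjq).symm hje.symm
    have htr := transform_sum hd hw E h0 j hjd
    rw [multiset_sum_partition q p hplt E (fun k => w ^ (j * k))] at htr
    rw [← htr]
    refine Finset.sum_congr rfl fun r hr => ?_
    rw [hT, ← Multiset.sum_map_mul_left]
    refine congrArg Multiset.sum (Multiset.map_congr rfl fun k hk => ?_)
    have hpk : p k = r := by
      have := (Multiset.mem_filter.mp hk).2
      exact this
    have hrq : r < q := Finset.mem_range.mp hr
    show ω ^ (u * r) * μ k = w ^ (j * k)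
    have hL : w ^ (j * k) = w ^ k * ω ^ (z * k) := by
      rw [hj, add_mul, one_mul, pow_add, hω, ← pow_mul]
      congr 2
      ring
    rw [hL]
    show ω ^ (u * r) * (w ^ k * ω ^ (q - p k)) = _
    rw [hpk, mul_comm (ω ^ (u * r)) _, mul_assoc, ← pow_add]
    congr 1
    have hrcast : ((r : ℕ) : ZMod q) = (k : ZMod q) * ((x : ℕ) : ZMod q) := by
      rw [← hpk]; exact hpcast k
    have hmodeq : (q - r + u * r) ≡ z * k [MOD q] := by
      rw [← ZMod.natCast_eq_natCast_iff]
      push_cast [hz, ZMod.natCast_mod, Nat.cast_sub hu1, Nat.cast_sub hrq.le]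
      rw [ZMod.natCast_self, hrcast]
      ring
    calc ω ^ (q - r + u * r) = ω ^ ((q - r + u * r) % orderOf ω) := (pow_mod_orderOf ω _).symm
      _ = ω ^ ((z * k) % orderOf ω) := by rw [hωord]; exact congrArg (ω ^ ·) hmodeq
      _ = ω ^ (z * k) := pow_mod_orderOf ω _
  have hqT : ∀ r₀, r₀ < q → (q : K) * T r₀ = ∑ r ∈ Finset.range q, T r := by
    intro r₀ hr₀
    have hsum0 : ∑ u ∈ Finset.Ico 1 q, ω ^ (u * (q - r₀)) *
        (∑ r ∈ Finset.range q, ω ^ (u * r) * T r) = 0 := by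
      refine Finset.sum_eq_zero fun u hu => ?_
      rw [hHu u (Finset.mem_Ico.mp hu).1 (Finset.mem_Ico.mp hu).2, mul_zero]
    have hswap : ∑ u ∈ Finset.Ico 1 q, ∑ r ∈ Finset.range q,
        ω ^ (u * (q - r₀ + r)) * T r = 0 := by
      rw [← hsum0]
      refine Finset.sum_congr rfl fun u _ => ?_
      rw [Finset.mul_sum]
      refine Finset.sum_congr rfl fun r _ => ?_
      rw [← mul_assoc, ← pow_add, ← Nat.mul_add]
    rw [Finset.sum_comm] at hswap
    have hinner : ∀ r, r < q → ∑ u ∈ Finset.Ico 1 q, ω ^ (u * (q - r₀ + r))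
        = (if r = r₀ then (q : K) - 1 else -1) := by
      intro r hrq
      set v := q - r₀ + r with hv
      have hξq : (ω ^ v) ^ q = 1 := by
        rw [← pow_mul, mul_comm, pow_mul, hωprim.pow_eq_one, one_pow]
      have hrw : ∀ u ∈ Finset.Ico 1 q, ω ^ (u * v) = (ω ^ v) ^ u := fun u _ => by
        rw [mul_comm u v, pow_mul]
      rw [Finset.sum_congr rfl hrw]
      by_cases hcase : r = r₀
      · have hξ : ω ^ v = 1 := by
          rw [hv, hcase, Nat.sub_add_cancel hr₀.le, hωprim.pow_eq_one]
        rw [if_pos hcase]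
        simp only [hξ, one_pow, Finset.sum_const, Nat.card_Ico, nsmul_eq_mul, mul_one]
        push_cast [Nat.cast_sub hq1.le]
        ring
      · have hξ : ω ^ v ≠ 1 := by
          rw [Ne, hωprim.pow_eq_one_iff_dvd]
          rintro ⟨c, hc⟩
          have hvpos : 0 < v := by rw [hv]; omega
          have hvlt : v < 2 * q := by rw [hv]; omega
          have hvq : v ≠ q := by rw [hv]; omega
          rcases Nat.lt_or_ge c 2 with hcase2 | hcase2
          · interval_cases c
            · omega
            · have : v = q := by simpa using hc
              omega
          · have h2q : 2 * q ≤ q * c :=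
              le_trans (le_of_eq (mul_comm 2 q)) (Nat.mul_le_mul_left q hcase2)
            have : 2 * q ≤ v := hc ▸ h2q
            omega
        rw [if_neg hcase]
        have hIco : ∑ u ∈ Finset.Ico 1 q, (ω ^ v) ^ u
            = (∑ u ∈ Finset.range q, (ω ^ v) ^ u) - 1 := by
          rw [Finset.range_eq_Ico, Finset.sum_Ico_eq_sub _ hqpos]
          simp
        rw [hIco, geom_sum_eq hξ q, hξq, sub_self, zero_div, zero_sub]
    have hfinal : ∑ r ∈ Finset.range q, (if r = r₀ then (q : K) - 1 else -1) * T r = 0 := by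
      rw [← hswap]
      refine Finset.sum_congr rfl fun r hr => ?_
      rw [← hinner r (Finset.mem_range.mp hr), Finset.sum_mul]
    have hsplit : ∀ r ∈ Finset.range q, (if r = r₀ then (q : K) - 1 else -1) * T r
        = (if r = r₀ then (q : K) * T r else 0) - T r := by
      intro r _
      by_cases hcase : r = r₀ <;> simp [hcase] <;> ring
    rw [Finset.sum_congr rfl hsplit, Finset.sum_sub_distrib,
      Finset.sum_ite_eq' (Finset.range q) r₀ (fun r => (q : K) * T r),
      if_pos (Finset.mem_range.mpr hr₀)] at hfinal
    linear_combination hfinal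
  refine ⟨p, μ, hplt, hμe, fun r₀ r₁ h₀ h₁ => ?_⟩
  have h2 := (hqT r₀ h₀).trans (hqT r₁ h₁).symm
  have hq0 : (q : K) ≠ 0 := Nat.cast_ne_zero.mpr (by omega)
  exact mul_left_cancel₀ hq0 h2

private theorem core_even {K : Type*} [Field K] [CharZero K] :
    ∀ n : ℕ, 0 < n → ∀ S : Multiset K, (∀ ζ ∈ S, ζ ^ n = 1) → S.sum = 0 →
      (∀ q : ℕ, q.Prime → Odd q → q ∣ n → Multiset.card S < q) →
      Even (Multiset.card S) := by
  intro n
  induction n using Nat.strong_induction_on with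
  | _ n IH =>
  intro hn S hS hsum hlt
  classical
  haveI : NeZero n := ⟨hn.ne'⟩
  -- find a generator of the group of n-th roots of unity in K
  obtain ⟨g, hg⟩ := IsCyclic.exists_generator (α := rootsOfUnity n K)
  set d := orderOf g with hddef
  have hdpos : 0 < d := orderOf_pos g
  set w : K := ((g : Kˣ) : K) with hwdef
  have hwd : orderOf w = d := by
    rw [hwdef, orderOf_units, Subgroup.orderOf_coe]
  have hw : IsPrimitiveRoot w d := hwd ▸ IsPrimitiveRoot.orderOf w
  have hdn : d ∣ n := by
    have h1 : ((g : Kˣ) : Kˣ) ^ n = 1 := (mem_rootsOfUnity n _).mp g.2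
    have h2 : orderOf (g : Kˣ) ∣ n := orderOf_dvd_of_pow_eq_one h1
    rwa [Subgroup.orderOf_coe] at h2
  have hdln : d ≤ n := Nat.le_of_dvd hn hdn
  -- write every element of S as a power of w
  have hexp : ∀ ζ ∈ S, ∃ k : ℕ, w ^ k = ζ := by
    intro ζ hζ
    have hζn : ζ ^ n = 1 := hS ζ hζ
    have hunit : IsUnit ζ := IsUnit.of_pow_eq_one hζn hn.ne'
    obtain ⟨ζu, rfl⟩ := hunit
    have hmem : ζu ∈ rootsOfUnity n K := by
      rw [mem_rootsOfUnity']
      exact_mod_cast hζn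
    have hzp : (⟨ζu, hmem⟩ : rootsOfUnity n K) ∈ Subgroup.zpowers g := hg _
    have hfin : IsOfFinOrder g := orderOf_pos_iff.mp hdpos
    obtain ⟨k, hk⟩ := (hfin.mem_powers_iff_mem_zpowers).mpr hzp
    refine ⟨k, ?_⟩
    have hk2 : g ^ k = ⟨ζu, hmem⟩ := hk
    have hk' : ((g ^ k : rootsOfUnity n K) : Kˣ) = ζu := by rw [hk2]
    rw [hwdef, ← Units.val_pow_eq_pow_val, ← Subgroup.coe_pow, hk']
  -- the exponent multiset
  set F : K → ℕ := fun ζ => if h : ∃ k : ℕ, w ^ k = ζ then h.choose else 0 with hF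
  set E : Multiset ℕ := S.map F with hE
  have hSE : S = E.map (fun k => w ^ k) := by
    have hFv : ∀ ζ ∈ S, w ^ F ζ = ζ := by
      intro ζ hζ
      have h := hexp ζ hζ
      rw [hF]
      simp only [dif_pos h]
      exact h.choose_spec
    calc S = S.map id := (Multiset.map_id S).symm
      _ = S.map (fun ζ => w ^ F ζ) := Multiset.map_congr rfl fun ζ h => (hFv ζ h).symm
      _ = E.map (fun k => w ^ k) := by rw [hE, Multiset.map_map]; rfl
  have hsum' : (E.map (fun k => w ^ k)).sum = 0 := by rw [← hSE]; exact hsum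
  have hcardE : Multiset.card S = Multiset.card E := by rw [hE, Multiset.card_map]
  rw [hcardE]
  rw [hcardE] at hlt
  -- base case d = 1
  rcases eq_or_ne d 1 with hd1 | hd1
  · have hw1 : w = 1 := by
      have h1 := hw.pow_eq_one
      rwa [hd1, pow_one] at h1
    have hc : (Multiset.card E : K) = 0 := by
      rw [← hsum', hw1]
      simp
    have hc0 : Multiset.card E = 0 := Nat.cast_eq_zero.mp hc
    simp [hc0]
  -- base case d = 2
  rcases eq_or_ne d 2 with hd2 | hd2
  · have hw2 : w ^ 2 = 1 := by rw [← hd2]; exact hw.pow_eq_one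
    have hwne : w ≠ 1 := by
      intro h
      rw [h, orderOf_one] at hwd
      omega
    have hwneg : w = -1 := by
      have h3 : (w - 1) * (w + 1) = 0 := by linear_combination hw2
      rcases mul_eq_zero.mp h3 with h | h
      · exact absurd (sub_eq_zero.mp h) hwne
      · exact eq_neg_of_add_eq_zero_left h
    have hvals : ∀ r ∈ Finset.range 2, ∀ k ∈ E.filter (fun k => k % 2 = r), w ^ k = w ^ r := by
      intro r _ k hk
      have hkr : k % 2 = r := (Multiset.mem_filter.mp hk).2
      calc w ^ k = w ^ (k % orderOf w) := (pow_mod_orderOf w k).symm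
        _ = w ^ r := by rw [hwd, hd2, hkr]
    set a := Multiset.card (E.filter (fun k => k % 2 = 0)) with ha
    set b := Multiset.card (E.filter (fun k => k % 2 = 1)) with hb
    have hcard2 : Multiset.card E = a + b := by
      rw [multiset_card_partition 2 (fun k => k % 2) (fun k => Nat.mod_lt k (by omega)) E]
      rw [Finset.sum_range_succ, Finset.sum_range_one]
    have hsum2 : (a : K) - b = 0 := by
      rw [← hsum', multiset_sum_partition 2 (fun k => k % 2)
        (fun k => Nat.mod_lt k (by omega)) E (fun k => w ^ k),
        Finset.sum_range_succ, Finset.sum_range_one]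
      rw [Multiset.map_congr rfl (hvals 0 (by simp)), Multiset.map_congr rfl (hvals 1 (by simp))]
      simp only [pow_zero, pow_one, Multiset.map_const', Multiset.sum_replicate, smul_eq_mul,
        mul_one, hwneg, ← ha, ← hb]
      push_cast
      ring
    have hab : a = b := by
      have hcast : (a : K) = b := by linear_combination hsum2
      exact_mod_cast hcast
    rw [hcard2, hab]
    exact Even.add_self b
  -- now d ≥ 3
  by_cases hsq : ∃ q : ℕ, q.Prime ∧ q * q ∣ d
  · -- case A : some prime whose square divides d
    obtain ⟨q, hq, hq2⟩ := hsq
    have hqd : q ∣ d := dvd_of_mul_left_dvd hq2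
    set e := d / q with he
    have hde : d = q * e := (Nat.mul_div_cancel' hqd).symm
    have hepos : 0 < e := Nat.pos_of_ne_zero fun h => by rw [h, mul_zero] at hde; omega
    have helt : e < n := lt_of_lt_of_le (Nat.div_lt_self hdpos hq.one_lt) hdln
    have hed : e ∣ d := ⟨q, by rw [hde, mul_comm]⟩
    have hsub := caseA hdpos hq hq2 hw E hsum'
    rw [multiset_card_partition q (fun k => k % q) (fun k => Nat.mod_lt k hq.pos) E]
    rw [even_iff_two_dvd]
    refine Finset.dvd_sum fun r hr => ?_
    rw [← even_iff_two_dvd]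
    set S' : Multiset K := (E.filter (fun k => k % q = r)).map (fun k => (w ^ q) ^ (k / q))
      with hS'
    have hcS' : Multiset.card S' = Multiset.card (E.filter (fun k => k % q = r)) := by
      rw [hS', Multiset.card_map]
    rw [← hcS']
    refine IH e helt hepos S' ?_ (hsub r) ?_
    · intro ζ hζ
      rw [hS'] at hζ
      obtain ⟨k, _, rfl⟩ := Multiset.mem_map.mp hζ
      calc ((w ^ q) ^ (k / q)) ^ e = ((w ^ q) ^ e) ^ (k / q) := pow_right_comm _ _ _
        _ = 1 := by
            rw [← pow_mul, ← pow_mul,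
              show q * (e * (k / q)) = d * (k / q) from by rw [hde]; ring,
              pow_mul, hw.pow_eq_one, one_pow]
    · intro q' hq' hq'odd hq'e
      have hq'n : q' ∣ n := (hq'e.trans hed).trans hdn
      calc Multiset.card S' ≤ Multiset.card E := by
            rw [hcS']
            exact Multiset.card_le_card (Multiset.filter_le _ _)
        _ < q' := hlt q' hq' hq'odd hq'n
  · -- d is squarefree; find an odd prime exactly dividing d
    have hd3 : 3 ≤ d := by omega
    have hodd : ∃ q : ℕ, q.Prime ∧ Odd q ∧ q ∣ d := by
      by_contra hcon
      push_neg at hcon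
      have hall2 : ∀ {pp : ℕ}, pp.Prime → pp ∣ d → pp = 2 := by
        intro pp hp hpd
        by_contra hne
        exact absurd hpd (hcon pp hp (hp.odd_of_ne_two hne))
      have hd4 : ¬(2 * 2 ∣ d) := fun h => hsq ⟨2, Nat.prime_two, h⟩
      have hminFac2 : d.minFac = 2 := hall2 (Nat.minFac_prime (by omega)) (Nat.minFac_dvd d)
      have h2d : 2 ∣ d := hminFac2 ▸ Nat.minFac_dvd d
      obtain ⟨m, hm⟩ := h2d
      have hm1 : m ≠ 1 := by omega
      have hpm := Nat.minFac_prime hm1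
      have hpmd : m.minFac ∣ d := (Nat.minFac_dvd m).trans ⟨2, by omega⟩
      have hpm2 : m.minFac = 2 := hall2 hpm hpmd
      have h2m : 2 ∣ m := hpm2 ▸ Nat.minFac_dvd m
      exact hd4 (by obtain ⟨m', hm'⟩ := h2m; exact ⟨m', by omega⟩)
    obtain ⟨q, hq, hqodd, hqd⟩ := hodd
    have hq2 : ¬(q * q ∣ d) := fun h => hsq ⟨q, hq, h⟩
    have hq3 : 3 ≤ q := by
      rcases hqodd with ⟨j, hj⟩
      have := hq.two_le
      omega
    set e := d / q with he
    have hde : d = q * e := (Nat.mul_div_cancel' hqd).symm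
    have hepos : 0 < e := Nat.pos_of_ne_zero fun h => by rw [h, mul_zero] at hde; omega
    have h2elt : 2 * e < n := by
      have h1 : 2 * e < q * e := (Nat.mul_lt_mul_right hepos).mpr (by omega)
      omega
    have hqn : q ∣ n := hqd.trans hdn
    have hcardlt : Multiset.card E < q := hlt q hq hqodd hqn
    obtain ⟨p, μ, hplt, hμe, hTeq⟩ := caseB hdpos hq hqd hq2 hw E hsum'
    set t : ℕ → ℕ := fun r => Multiset.card (E.filter (fun k => p k = r)) with ht
    have hcardsum : Multiset.card E = ∑ r ∈ Finset.range q, t r :=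
      multiset_card_partition q p hplt E
    -- pairwise parity
    have hpair : ∀ r, r < q → Even (t r + t 0) := by
      intro r hrq
      rcases eq_or_ne r 0 with rfl | hr0
      · exact Even.add_self _
      set V : Multiset K := (E.filter (fun k => p k = r)).map μ
          + (E.filter (fun k => p k = 0)).map (fun k => -μ k) with hV
      have hcV : Multiset.card V = t r + t 0 := by
        rw [hV, Multiset.card_add, Multiset.card_map, Multiset.card_map]
      have hsV : V.sum = 0 := by
        rw [hV, Multiset.sum_add]
        have hneg : ((E.filter (fun k => p k = 0)).map (fun k => -μ k)).sum
            = -((E.filter (fun k => p k = 0)).map μ).sum := by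
          rw [show (fun k => -μ k) = (fun k => (-1 : K) * μ k) from funext fun k => by ring,
            Multiset.sum_map_mul_left]
          ring
        rw [hneg, hTeq r 0 hrq hq.pos]
        ring
      have hmemV : ∀ ζ ∈ V, ζ ^ (2 * e) = 1 := by
        intro ζ hζ
        rw [hV, Multiset.mem_add] at hζ
        have hbase : ∀ k : ℕ, μ k ^ (2 * e) = 1 := by
          intro k
          rw [mul_comm 2 e, pow_mul, hμe k, one_pow]
        rcases hζ with hζ | hζ
        · obtain ⟨k, _, rfl⟩ := Multiset.mem_map.mp hζ
          exact hbase k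
        · obtain ⟨k, _, rfl⟩ := Multiset.mem_map.mp hζ
          rw [neg_pow, hbase k, mul_one, mul_comm 2 e, pow_mul]
          rcases neg_one_pow_eq_or K e with h | h <;> rw [h] <;> norm_num
      have hltV : ∀ q' : ℕ, q'.Prime → Odd q' → q' ∣ 2 * e → Multiset.card V < q' := by
        intro q' hq' hq'odd hq'2e
        have hq'e : q' ∣ e := by
          have hne2 : q' ≠ 2 := by
            rintro rfl
            simp [Nat.odd_iff] at hq'odd
          have hcop : Nat.Coprime q' 2 := (Nat.coprime_primes hq' Nat.prime_two).mpr hne2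
          exact hcop.dvd_of_dvd_mul_left hq'2e
        have hq'n : q' ∣ n := (hq'e.trans ⟨q, by rw [hde, mul_comm]⟩).trans hdn
        have htsub : t r + t 0 ≤ Multiset.card E := by
          rw [hcardsum]
          have hsubset : ({r, 0} : Finset ℕ) ⊆ Finset.range q := by
            intro y hy
            rcases Finset.mem_insert.mp hy with rfl | hy
            · exact Finset.mem_range.mpr hrq
            · rw [Finset.mem_singleton.mp hy]
              exact Finset.mem_range.mpr hq.pos
          calc t r + t 0 = ∑ y ∈ ({r, 0} : Finset ℕ), t y := (Finset.sum_pair hr0).symm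
            _ ≤ ∑ y ∈ Finset.range q, t y :=
              Finset.sum_le_sum_of_subset hsubset
        rw [hcV]
        exact lt_of_le_of_lt htsub (hlt q' hq' hq'odd hq'n)
      have hres := IH (2 * e) h2elt (by omega) V hmemV hsV hltV
      rwa [hcV] at hres
    -- some class is empty
    have hzero : ∃ r, r < q ∧ t r = 0 := by
      by_contra hcon
      push_neg at hcon
      have hge : q ≤ ∑ r ∈ Finset.range q, t r := by
        calc q = ∑ _r ∈ Finset.range q, 1 := by simp
          _ ≤ ∑ r ∈ Finset.range q, t r :=
            Finset.sum_le_sum fun r hr =>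
              Nat.one_le_iff_ne_zero.mpr (hcon r (Finset.mem_range.mp hr))
      omega
    obtain ⟨r₀, hr₀q, hr₀⟩ := hzero
    have ht0even : Even (t 0) := by
      have h1 := hpair r₀ hr₀q
      rw [hr₀] at h1
      simpa using h1
    rw [hcardsum, even_iff_two_dvd]
    refine Finset.dvd_sum fun r hr => ?_
    rw [← even_iff_two_dvd]
    have h1 := hpair r (Finset.mem_range.mp hr)
    rcases ht0even with ⟨c, hc⟩
    rcases h1 with ⟨c', hc'⟩
    exact ⟨c' - c, by omega⟩

private lemma root_charpoly_pow {K : Type*} [Field K] {N : ℕ} (B : Matrix (Fin N) (Fin N) K)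
    (M : ℕ) (hB : B ^ M = 1) {ζ : K} (hζ : ζ ∈ B.charpoly.roots) : ζ ^ M = 1 := by
  classical
  have hroot : B.charpoly.IsRoot ζ := (Polynomial.mem_roots'.mp hζ).2
  have hdet : (ζ • (1 : Matrix (Fin N) (Fin N) K) - B).det = 0 := by
    have h1 : (Matrix.charmatrix B).det.eval ζ = 0 := hroot
    rw [show (Polynomial.eval ζ : Polynomial K → K) = ⇑(Polynomial.evalRingHom ζ) from rfl,
      RingHom.map_det] at h1
    have h2 : (Matrix.charmatrix B).map ⇑(Polynomial.evalRingHom ζ)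
        = ζ • (1 : Matrix (Fin N) (Fin N) K) - B := by
      ext i j
      by_cases hij : i = j
      · subst hij
        simp [Matrix.charmatrix_apply_eq]
      · simp [Matrix.charmatrix_apply_ne _ _ _ hij, Matrix.one_apply_ne hij, hij]
    rwa [RingHom.mapMatrix_apply, h2] at h1
  obtain ⟨v, hv0, hvmul⟩ := (Matrix.exists_mulVec_eq_zero_iff).mpr hdet
  have hvB : B.mulVec v = ζ • v := by
    have h3 := hvmul
    rw [Matrix.sub_mulVec, sub_eq_zero, Matrix.smul_mulVec, Matrix.one_mulVec] at h3
    exact h3.symm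
  have hpow : ∀ j : ℕ, (B ^ j).mulVec v = ζ ^ j • v := by
    intro j
    induction j with
    | zero => simp [Matrix.one_mulVec]
    | succ j ih =>
        rw [pow_succ', ← Matrix.mulVec_mulVec, ih, Matrix.mulVec_smul, hvB, pow_succ',
          smul_smul, mul_comm]
  have h4 := hpow M
  rw [hB, Matrix.one_mulVec] at h4
  obtain ⟨i, hi⟩ := Function.ne_iff.mp hv0
  have h5 : v i = ζ ^ M * v i := by
    conv_lhs => rw [h4]
    simp [Pi.smul_apply, smul_eq_mul]
  have h6 : ζ ^ M * v i = 1 * v i := by rw [← h5, one_mul]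
  exact mul_right_cancel₀ hi h6

/-- Theorem 7.1 (second part): let `χ` be the character of a representation
`D : G → GLₙ(F)` of a finite group `G` over a field `F` of characteristic `0`,
and let `g ∈ G` have order `m`. If `χ(g) = s·1_F` for an integer `s > 0` and
`t := χ(1) + s = n + s` is odd, then `m` has an odd prime divisor, and `t ≥ ℓ`
where `ℓ` is the smallest odd prime dividing `m`. -/
theorem character_positive_integer_value
    (F : Type*) [Field F] [CharZero F]
    (G : Type*) [Group G] [Finite G]
    (n : ℕ) (D : G →* Matrix.GeneralLinearGroup (Fin n) F)
    (g : G) (m : ℕ) (hm : orderOf g = m)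
    (s : ℤ) (hs : 0 < s)
    (htr : Matrix.trace ((D g : Matrix.GeneralLinearGroup (Fin n) F) :
        Matrix (Fin n) (Fin n) F) = (s : F))
    (hodd : Odd ((n : ℤ) + s)) :
    ∃ ℓ : ℕ, ℓ.Prime ∧ Odd ℓ ∧ ℓ ∣ m ∧
      (∀ q : ℕ, q.Prime → Odd q → q ∣ m → ℓ ≤ q) ∧
      (ℓ : ℤ) ≤ (n : ℤ) + s := by
  classical
  set K := AlgebraicClosure F with hK
  haveI : CharZero K := charZero_of_injective_algebraMap (algebraMap F K).injective
  set A : Matrix (Fin n) (Fin n) F :=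
    ((D g : Matrix.GeneralLinearGroup (Fin n) F) : Matrix (Fin n) (Fin n) F) with hA
  have hmpos : 0 < m := hm ▸ orderOf_pos g
  have hApow : A ^ m = 1 := by
    have h1 : (D g) ^ m = 1 := by
      rw [← map_pow, ← hm, pow_orderOf_eq_one g, map_one]
    calc A ^ m = (((D g) ^ m : Matrix.GeneralLinearGroup (Fin n) F) :
          Matrix (Fin n) (Fin n) F) := (Units.val_pow_eq_pow_val _ _).symm
      _ = 1 := by rw [h1, Units.val_one]
  set B : Matrix (Fin n) (Fin n) K := A.map (algebraMap F K) with hB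
  have hBpow : B ^ m = 1 := by
    rw [hB, ← RingHom.mapMatrix_apply, ← map_pow, hApow, map_one]
  have htrB : B.trace = (s : K) := by
    have h3 : B.trace = algebraMap F K A.trace := by
      rw [hB, Matrix.trace, Matrix.trace, map_sum]
      exact Finset.sum_congr rfl fun i _ => rfl
    rw [h3, hA, htr, map_intCast]
  set R : Multiset K := B.charpoly.roots with hR
  have hsumR : R.sum = (s : K) := by
    rw [hR, ← Matrix.trace_eq_sum_roots_charpoly, htrB]
  have hcardR : Multiset.card R = n := by
    have hsp : B.charpoly.Splits := IsAlgClosed.splits _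
    rw [hR, Polynomial.splits_iff_card_roots.mp hsp, Matrix.charpoly_natDegree_eq_dim,
      Fintype.card_fin]
  have hRpow : ∀ ζ ∈ R, ζ ^ m = 1 := fun ζ hζ => root_charpoly_pow B m hBpow hζ
  set t : ℕ := n + s.toNat with htdef
  set V : Multiset K := R + Multiset.replicate s.toNat (-1) with hV
  have hcV : Multiset.card V = t := by
    rw [hV, Multiset.card_add, hcardR, Multiset.card_replicate]
  have hsV : V.sum = 0 := by
    rw [hV, Multiset.sum_add, hsumR, Multiset.sum_replicate, nsmul_eq_mul]
    have h4 : ((s.toNat : ℕ) : K) = (s : K) := by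
      rw [show ((s.toNat : ℕ) : K) = ((s.toNat : ℤ) : K) by push_cast; ring,
        Int.toNat_of_nonneg hs.le]
    rw [h4]
    ring
  have hmemV : ∀ ζ ∈ V, ζ ^ (2 * m) = 1 := by
    intro ζ hζ
    rw [hV, Multiset.mem_add] at hζ
    rcases hζ with h | h
    · rw [mul_comm, pow_mul, hRpow ζ h, one_pow]
    · rw [Multiset.eq_of_mem_replicate h, pow_mul, neg_one_sq, one_pow]
  have htodd : ¬Even t := by
    have h1 : (t : ℤ) = (n : ℤ) + s := by
      rw [htdef]; push_cast [Int.toNat_of_nonneg hs.le]; ring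
    intro hcon
    rcases hodd with ⟨j, hj⟩
    rcases hcon with ⟨c, hc⟩
    omega
  have hcontra : ¬∀ q : ℕ, q.Prime → Odd q → q ∣ 2 * m → Multiset.card V < q := by
    intro hall
    exact htodd (hcV ▸ core_even (2 * m) (by omega) V hmemV hsV hall)
  push_neg at hcontra
  obtain ⟨q, hq, hqodd, hq2m, hqle⟩ := hcontra
  have hqm : q ∣ m := by
    have hne2 : q ≠ 2 := by
      rintro rfl
      simp [Nat.odd_iff] at hqodd
    exact ((Nat.coprime_primes hq Nat.prime_two).mpr hne2).dvd_of_dvd_mul_left hq2m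
  have hex : ∃ ℓ : ℕ, ℓ.Prime ∧ Odd ℓ ∧ ℓ ∣ m := ⟨q, hq, hqodd, hqm⟩
  refine ⟨Nat.find hex, (Nat.find_spec hex).1, (Nat.find_spec hex).2.1,
    (Nat.find_spec hex).2.2, ?_, ?_⟩
  · intro q' h1 h2 h3
    exact Nat.find_min' hex ⟨h1, h2, h3⟩
  · have h4 : Nat.find hex ≤ q := Nat.find_min' hex ⟨hq, hqodd, hqm⟩
    have h5 : q ≤ t := by rw [← hcV]; exact hqle
    have h6 : (t : ℤ) = (n : ℤ) + s := by
      rw [htdef]; push_cast [Int.toNat_of_nonneg hs.le]; ring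
    calc (Nat.find hex : ℤ) ≤ (t : ℤ) := by exact_mod_cast le_trans h4 h5
      _ = (n : ℤ) + s := h6
end
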